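/- arXiv:1201.6441 — 6 statements merged into one kernel-verified Lean document; each statement's English description precedes it below -/
import Mathlib

section
/- For the Moran partition chain on partitions of n: μ_1 P = μ_1 and μ_t P = λ_t μ_t + (1−λ_t) μ_{t−1} for every 2 ≤ t ≤ n. Equivalently, with Λ the n-row matrix whose row indexed by t ∈ {n, n−1, …, 1} is μ_t, and P̂ the n-by-n matrix (rows and columns indexed by n, n−1, …, 1) with P̂(t,t) = λ_t, P̂(t,t−1) = 1−λ_t for 2 ≤ t ≤ n, P̂(1,1) = 1, and all other entries 0, one has Λ P = P̂ Λ and δ_{(1,…,1)} = δ_n Λ: the chains (δ_{(1,…,1)}, P) and (δ_n, P̂) are intertwined by the link Λ. -/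
open Matrix

/-- The multiset of parts obtained from `m` by replacing two distinct parts `a`, `b`
(chosen at distinct positions) by `a + 1` and `b - 1`, deleting `b - 1` if it is `0`. -/
def moranMove (m : Multiset ℕ) (a b : ℕ) : Multiset ℕ :=
  (a + 1) ::ₘ (if b = 1 then (m.erase a).erase b else (b - 1) ::ₘ ((m.erase a).erase b))

/-- The transition matrix of the Moran partition chain on partitions of `n`: from a
partition with parts `n_1, …, n_r`, move to the partition obtained by replacing two parts
`n_i, n_j` (at distinct positions) by `n_i + 1, n_j − 1` with probability
`n_i n_j / (n(n−1))` for each ordered pair of distinct positions `(i,j)`, and stay put with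
the leftover probability `Σ_i n_i(n_i−1)/(n(n−1))`. -/
noncomputable def moranP (n : ℕ) (r s : Nat.Partition n) : ℝ :=
  (((r.parts.map (fun a =>
      ((r.parts.erase a).map (fun b =>
        if moranMove r.parts a b = s.parts then ((a : ℝ) * (b : ℝ)) else 0)).sum)).sum)
    + (if r = s then (r.parts.map (fun a => (a : ℝ) * ((a : ℝ) - 1))).sum else 0))
    / ((n : ℝ) * ((n : ℝ) - 1))

/-- The row vector `μ_t` indexed by partitions of `n`: `μ_t(r) = m_r / C(n−1, t−1)` if `r`
has exactly `t` parts (where `m_r = t!/(r_1!⋯r_n!)` and `r_i` is the number of parts of `r`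
equal to `i`), and `0` otherwise. -/
noncomputable def moranMu (n t : ℕ) : Nat.Partition n → ℝ := fun r =>
  if r.parts.card = t then
    ((t.factorial : ℝ) / ∏ i ∈ Finset.Icc 1 n, ((r.parts.count i).factorial : ℝ))
      / ((n - 1).choose (t - 1) : ℝ)
  else 0

/-- `λ_t = 1 − t(t−1)/(n(n−1))`. -/
noncomputable def moranLam (n t : ℕ) : ℝ :=
  1 - ((t : ℝ) * ((t : ℝ) - 1)) / ((n : ℝ) * ((n : ℝ) - 1))

namespace MoranAux

open Finset

/-- The multiset of values of a tuple. -/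
def msOf {t : ℕ} (c : Fin t → ℕ) : Multiset ℕ := Multiset.map c Finset.univ.val

/-- Compositions of `n` into `t` (positive) parts. -/
def compFinset (n t : ℕ) : Finset (Fin t → ℕ) :=
  (Fintype.piFinset fun _ : Fin t => Finset.range (n+1)).filter
    (fun c => (∀ i, 0 < c i) ∧ ∑ i, c i = n)

/-- Tuples with a prescribed multiset of values. -/
def fiberFinset (n t : ℕ) (m : Multiset ℕ) : Finset (Fin t → ℕ) :=
  (Fintype.piFinset fun _ : Fin t => Finset.range (n+1)).filter (fun c => msOf c = m)

/-- Ordered pairs of distinct indices. -/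
def pairs (t : ℕ) : Finset (Fin t × Fin t) :=
  Finset.univ.filter (fun p => p.1 ≠ p.2)

/-- partitions of `n` with exactly `t` parts -/
def partT (n t : ℕ) : Finset (Nat.Partition n) :=
  Finset.univ.filter (fun r => Multiset.card r.parts = t)

lemma card_msOf {t : ℕ} (c : Fin t → ℕ) : Multiset.card (msOf c) = t := by
  simp [msOf]

lemma sum_msOf {t : ℕ} (c : Fin t → ℕ) : (msOf c).sum = ∑ i, c i := by
  simp [msOf, Finset.sum]

lemma mem_msOf {t : ℕ} {c : Fin t → ℕ} {x : ℕ} : x ∈ msOf c ↔ ∃ i, c i = x := by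
  simp [msOf, List.mem_ofFn, Set.mem_range]

lemma map_sum_msOf {t : ℕ} (c : Fin t → ℕ) (g : ℕ → ℝ) :
    ((msOf c).map g).sum = ∑ i, g (c i) := by
  simp [msOf, Multiset.map_map, Finset.sum]
  rfl

lemma mem_compFinset {n t : ℕ} {c : Fin t → ℕ} :
    c ∈ compFinset n t ↔ (∀ k, c k < n + 1) ∧ (∀ k, 0 < c k) ∧ ∑ k, c k = n := by
  simp [compFinset, Fintype.mem_piFinset, and_assoc]

lemma finset_val_cons {α : Type*} [DecidableEq α] (s : Finset α) {i : α} (hi : i ∈ s) :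
    s.val = i ::ₘ (s.erase i).val := by
  rw [Finset.erase_val, Multiset.cons_erase (show i ∈ s.val from hi)]

lemma erase_pos_map {t : ℕ} (c : Fin t → ℕ) (s : Finset (Fin t)) {i : Fin t} (hi : i ∈ s) :
    (Multiset.map c s.val).erase (c i) = Multiset.map c ((s.erase i).val) := by
  conv_lhs => rw [finset_val_cons s hi]
  rw [Multiset.map_cons, Multiset.erase_cons_head]

lemma cj_mem_erase {t : ℕ} (c : Fin t → ℕ) {i j : Fin t} (hij : i ≠ j) :
    c j ∈ (msOf c).erase (c i) := by
  rw [show (msOf c) = Multiset.map c Finset.univ.val from rfl,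
    erase_pos_map c Finset.univ (Finset.mem_univ i)]
  exact Multiset.mem_map.2 ⟨j, Finset.mem_erase.2 ⟨hij.symm, Finset.mem_univ j⟩, rfl⟩

lemma msOf_succ {t : ℕ} (c : Fin (t+1) → ℕ) :
    msOf c = c (Fin.last t) ::ₘ msOf (fun i : Fin t => c i.castSucc) := by
  unfold msOf
  rw [Fin.univ_succAbove _ (Fin.last t), Finset.cons_val, Multiset.map_cons, Finset.map_val,
    Multiset.map_map]
  congr 1
  apply Multiset.map_congr rfl
  intro x _
  simp [Fin.succAbove_last]

lemma prod_count_erase {m : Multiset ℕ} {v : ℕ} (hv : v ∈ m) :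
    ∏ x ∈ m.toFinset, (m.count x).factorial
      = m.count v * ∏ x ∈ m.toFinset, ((m.erase v).count x).factorial := by
  have hvt : v ∈ m.toFinset := Multiset.mem_toFinset.2 hv
  rw [← Finset.prod_erase_mul _ _ hvt, ← Finset.prod_erase_mul _ _ hvt]
  have h1 : ∀ x ∈ m.toFinset.erase v, (m.count x).factorial = ((m.erase v).count x).factorial := by
    intro x hx
    rw [Multiset.count_erase_of_ne (Finset.ne_of_mem_erase hx)]
  rw [Finset.prod_congr rfl h1]
  have h2 : (m.erase v).count v = m.count v - 1 := Multiset.count_erase_self v m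
  have h3 : 1 ≤ m.count v := Multiset.one_le_count_iff_mem.2 hv
  have h4 : m.count v - 1 + 1 = m.count v := Nat.succ_pred_eq_of_pos h3
  rw [h2]
  rw [mul_comm (m.count v), mul_assoc]
  congr 1
  conv_lhs => rw [← h4]
  rw [Nat.factorial_succ, h4, mul_comm]

lemma prod_count_erase_toFinset (m : Multiset ℕ) (v : ℕ) :
    ∏ x ∈ m.toFinset, ((m.erase v).count x).factorial
      = ∏ x ∈ (m.erase v).toFinset, ((m.erase v).count x).factorial := by
  apply (Finset.prod_subset ?_ ?_).symm
  · intro x hx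
    exact Multiset.mem_toFinset.2 (Multiset.mem_of_mem_erase (Multiset.mem_toFinset.1 hx))
  · intro x _ hx
    have : (m.erase v).count x = 0 :=
      Multiset.count_eq_zero.2 (fun h => hx (Multiset.mem_toFinset.2 h))
    simp [this]

lemma fiber_card (n : ℕ) : ∀ (t : ℕ) (m : Multiset ℕ), Multiset.card m = t →
    (∀ x ∈ m, x ≤ n) →
    (fiberFinset n t m).card * ∏ x ∈ m.toFinset, (m.count x).factorial = t.factorial := by
  intro t
  induction t with
  | zero =>
    intro m hm _
    have hm0 : m = 0 := Multiset.card_eq_zero.1 hm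
    subst hm0
    simp only [fiberFinset, msOf, Multiset.toFinset_zero, Finset.prod_empty, mul_one,
      Nat.factorial_zero]
    have hall : ∀ c : Fin 0 → ℕ, Multiset.map c Finset.univ.val = 0 := fun c => by simp
    simp [hall, Fintype.card_piFinset]
  | succ t ih =>
    intro m hm hbd
    have hmap : ∀ c ∈ fiberFinset n (t+1) m, c (Fin.last t) ∈ m.toFinset := by
      intro c hc
      rw [fiberFinset, Finset.mem_filter] at hc
      rw [Multiset.mem_toFinset, ← hc.2]
      exact Multiset.mem_map.2 ⟨Fin.last t, Finset.mem_univ_val _, rfl⟩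
    have hsum := Finset.card_eq_sum_card_fiberwise hmap
    have hfib : ∀ v ∈ m.toFinset,
        ((fiberFinset n (t+1) m).filter (fun c => c (Fin.last t) = v)).card
          = (fiberFinset n t (m.erase v)).card := by
      intro v hv
      have hvm : v ∈ m := Multiset.mem_toFinset.1 hv
      apply Finset.card_nbij' (fun c i => c i.castSucc) (fun c => Fin.snoc c v)
      · intro c hc
        simp only [Finset.mem_coe, Finset.mem_filter, fiberFinset, Fintype.mem_piFinset, Finset.mem_range] at hc ⊢
        obtain ⟨⟨hpi, hms⟩, hlast⟩ := hc
        refine ⟨fun i => hpi i.castSucc, ?_⟩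
        have h := msOf_succ c
        rw [hms, hlast] at h
        rw [h, Multiset.erase_cons_head]
      · intro c hc
        simp only [Finset.mem_coe, Finset.mem_filter, fiberFinset, Fintype.mem_piFinset, Finset.mem_range] at hc ⊢
        obtain ⟨hpi, hms⟩ := hc
        refine ⟨⟨?_, ?_⟩, ?_⟩
        · intro i
          refine Fin.lastCases ?_ ?_ i
          · rw [Fin.snoc_last]; exact Nat.lt_succ_of_le (hbd v hvm)
          · intro j; rw [Fin.snoc_castSucc]; exact hpi j
        · rw [msOf_succ]
          simp only [Fin.snoc_last, Fin.snoc_castSucc]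
          rw [hms]
          exact Multiset.cons_erase hvm
        · exact Fin.snoc_last _ _
      · intro c hc
        simp only [Finset.mem_coe, Finset.mem_filter] at hc
        funext i
        dsimp only
        refine Fin.lastCases ?_ ?_ i
        · rw [Fin.snoc_last, hc.2]
        · intro j; rw [Fin.snoc_castSucc]
      · intro c _
        funext i
        dsimp only
        rw [Fin.snoc_castSucc]
    rw [hsum, Finset.sum_congr rfl hfib, Finset.sum_mul]
    have hterm : ∀ v ∈ m.toFinset,
        (fiberFinset n t (m.erase v)).card * ∏ x ∈ m.toFinset, (m.count x).factorial
          = m.count v * t.factorial := by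
      intro v hv
      have hvm : v ∈ m := Multiset.mem_toFinset.1 hv
      rw [prod_count_erase hvm, prod_count_erase_toFinset]
      rw [← mul_assoc, mul_comm ((fiberFinset n t (m.erase v)).card) (m.count v), mul_assoc]
      rw [ih (m.erase v) (by rw [Multiset.card_erase_of_mem hvm, hm]; rfl)
        (fun x hx => hbd x (Multiset.mem_of_mem_erase hx))]
    rw [Finset.sum_congr rfl hterm, ← Finset.sum_mul, Multiset.toFinset_sum_count_eq, hm,
      Nat.factorial_succ]

lemma comp_eq_biUnion (n t : ℕ) :
    compFinset n t = (partT n t).biUnion (fun r => fiberFinset n t r.parts) := by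
  ext c
  simp only [compFinset, partT, fiberFinset, Finset.mem_biUnion, Finset.mem_filter,
    Finset.mem_univ, true_and]
  constructor
  · rintro ⟨hpi, hpos, hsum⟩
    refine ⟨⟨msOf c, ?_, ?_⟩, ?_, hpi, rfl⟩
    · intro x hx
      obtain ⟨i, rfl⟩ := mem_msOf.1 hx
      exact hpos i
    · rw [sum_msOf]; exact hsum
    · exact card_msOf c
  · rintro ⟨r, hcard, hpi, hms⟩
    refine ⟨hpi, ?_, ?_⟩
    · intro i
      exact r.parts_pos (hms ▸ mem_msOf.2 ⟨i, rfl⟩)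
    · rw [← sum_msOf, hms, r.parts_sum]

lemma transfer (n t : ℕ) (f : Multiset ℕ → ℝ) :
    ∑ c ∈ compFinset n t, f (msOf c)
      = ∑ r ∈ partT n t, ((fiberFinset n t r.parts).card : ℝ) * f r.parts := by
  rw [comp_eq_biUnion, Finset.sum_biUnion]
  · apply Finset.sum_congr rfl
    intro r _
    rw [Finset.sum_congr rfl (fun c hc => show f (msOf c) = f r.parts by
        rw [(Finset.mem_filter.1 hc).2]), Finset.sum_const, nsmul_eq_mul]
  · intro r _ r' _ hne
    apply Finset.disjoint_left.2
    intro c hc hc'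
    exact hne (Nat.Partition.ext ((Finset.mem_filter.1 hc).2.symm.trans (Finset.mem_filter.1 hc').2))

lemma comp_filter_eq_fiber {n t : ℕ} (r : Nat.Partition n) :
    (compFinset n t).filter (fun c => msOf c = r.parts) = fiberFinset n t r.parts := by
  ext c
  simp only [Finset.mem_filter, fiberFinset, compFinset, Fintype.mem_piFinset,
    Finset.mem_range]
  constructor
  · rintro ⟨⟨hpi, -, -⟩, hms⟩
    exact ⟨hpi, hms⟩
  · rintro ⟨hpi, hms⟩
    refine ⟨⟨hpi, ?_, ?_⟩, hms⟩
    · intro i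
      exact r.parts_pos (hms ▸ mem_msOf.2 ⟨i, rfl⟩)
    · rw [← sum_msOf, hms, r.parts_sum]

lemma pair_sum {t : ℕ} (f : Fin t → Fin t → ℝ) :
    ∑ p ∈ pairs t, f p.1 p.2 = ∑ i, ∑ j ∈ Finset.univ.erase i, f i j := by
  rw [pairs, Finset.sum_filter, Fintype.sum_prod_type]
  apply Finset.sum_congr rfl
  intro i _
  rw [← Finset.filter_ne' Finset.univ i, Finset.sum_filter]
  apply Finset.sum_congr rfl
  intro j _
  by_cases h : i = j <;> simp [h, Ne, eq_comm]

lemma sum_succAbove {u : ℕ} (j : Fin (u+1)) (f : Fin (u+1) → ℕ) :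
    ∑ k : Fin u, f (j.succAbove k) = ∑ x ∈ Finset.univ.erase j, f x := by
  rw [Fin.univ_succAbove _ j, Finset.cons_eq_insert,
    Finset.erase_insert (by simp [Fin.succAbove_ne])]
  rw [Finset.sum_map]
  rfl

lemma comp_two_le {n t : ℕ} {c : Fin t → ℕ} (hc : c ∈ compFinset n t) {i j : Fin t}
    (hij : i ≠ j) : c i + c j ≤ n := by
  obtain ⟨-, hpos, hsum⟩ := mem_compFinset.1 hc
  calc c i + c j ≤ c i + ∑ k ∈ Finset.univ.erase i, c k := by
        refine Nat.add_le_add_left (Finset.single_le_sum (fun k _ => Nat.zero_le _) ?_) _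
        exact Finset.mem_erase.2 ⟨hij.symm, Finset.mem_univ j⟩
    _ = ∑ k, c k := Finset.add_sum_erase _ _ (Finset.mem_univ i)
    _ = n := hsum

lemma pos_sum {t : ℕ} (c : Fin t → ℕ) (g : ℕ → ℕ → ℝ) :
    ((msOf c).map (fun a => (((msOf c).erase a).map (g a)).sum)).sum
      = ∑ i, ∑ j ∈ Finset.univ.erase i, g (c i) (c j) := by
  unfold msOf
  rw [Multiset.map_map]
  rw [show (Finset.univ : Finset (Fin t)).sum (fun i => ∑ j ∈ Finset.univ.erase i, g (c i) (c j))
    = (Multiset.map (fun i => ∑ j ∈ Finset.univ.erase i, g (c i) (c j)) Finset.univ.val).sum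
    from rfl]
  congr 1
  apply Multiset.map_congr rfl
  intro i _
  show (((Multiset.map c Finset.univ.val).erase (c i)).map (g (c i))).sum = _
  rw [erase_pos_map c Finset.univ (Finset.mem_univ i), Multiset.map_map]
  rfl

lemma move_stay {t : ℕ} (c : Fin t → ℕ) {i j : Fin t} (hij : i ≠ j) (hcj : 2 ≤ c j) :
    moranMove (msOf c) (c i) (c j)
      = msOf (Function.update (Function.update c i (c i + 1)) j (c j - 1)) := by
  have hj1 : c j ≠ 1 := by omega
  have hji : j ∈ (Finset.univ : Finset (Fin t)).erase i :=
    Finset.mem_erase.2 ⟨hij.symm, Finset.mem_univ j⟩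
  rw [moranMove, if_neg hj1]
  unfold msOf
  rw [erase_pos_map c Finset.univ (Finset.mem_univ i), erase_pos_map c _ hji]
  set u := Function.update (Function.update c i (c i + 1)) j (c j - 1) with hu
  have hij' : i ∈ (Finset.univ : Finset (Fin t)).erase j :=
    Finset.mem_erase.2 ⟨hij, Finset.mem_univ i⟩
  rw [finset_val_cons Finset.univ (Finset.mem_univ j), Multiset.map_cons,
    finset_val_cons _ hij', Multiset.map_cons]
  have h1 : u j = c j - 1 := Function.update_self j _ _
  have h2 : u i = c i + 1 := by
    rw [hu, Function.update_of_ne hij, Function.update_self]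
  have h3 : Multiset.map u (((Finset.univ.erase j).erase i).val)
      = Multiset.map c (((Finset.univ.erase i).erase j).val) := by
    rw [Finset.erase_right_comm]
    apply Multiset.map_congr rfl
    intro k hk
    have hk' := Finset.mem_erase.1 (Finset.mem_def.2 hk)
    have hk'' := Finset.mem_erase.1 hk'.2
    rw [hu, Function.update_of_ne hk'.1, Function.update_of_ne hk''.1]
  rw [h1, h2, h3, Multiset.cons_swap]

lemma move_del {u : ℕ} (c : Fin (u+1) → ℕ) {i j : Fin (u+1)} (hij : i ≠ j) (hcj : c j = 1) :
    moranMove (msOf c) (c i) (c j)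
      = msOf (fun k : Fin u => Function.update c i (c i + 1) (j.succAbove k)) := by
  rw [moranMove, if_pos hcj]
  have hji : j ∈ (Finset.univ : Finset (Fin (u+1))).erase i :=
    Finset.mem_erase.2 ⟨hij.symm, Finset.mem_univ j⟩
  unfold msOf
  rw [erase_pos_map c Finset.univ (Finset.mem_univ i), erase_pos_map c _ hji]
  set c' := Function.update c i (c i + 1) with hc'
  have huniv : Multiset.map j.succAbove (Finset.univ : Finset (Fin u)).val
      = ((Finset.univ : Finset (Fin (u+1))).erase j).val := by
    rw [Finset.erase_val]
    rw [Fin.univ_succAbove _ j, Finset.cons_val, Multiset.erase_cons_head, Finset.map_val]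
    rfl
  have hmap2 : Multiset.map (fun k => c' (j.succAbove k)) (Finset.univ : Finset (Fin u)).val
      = Multiset.map c' (((Finset.univ : Finset (Fin (u+1))).erase j).val) := by
    rw [← huniv, Multiset.map_map]
    rfl
  rw [hmap2]
  have hij' : i ∈ (Finset.univ : Finset (Fin (u+1))).erase j :=
    Finset.mem_erase.2 ⟨hij, Finset.mem_univ i⟩
  rw [finset_val_cons _ hij', Multiset.map_cons]
  have h2 : c' i = c i + 1 := Function.update_self i _ _
  have h3 : Multiset.map c' (((Finset.univ.erase j).erase i).val)
      = Multiset.map c (((Finset.univ.erase i).erase j).val) := by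
    rw [Finset.erase_right_comm]
    apply Multiset.map_congr rfl
    intro k hk
    have hk' := Finset.mem_erase.1 (Finset.mem_def.2 hk)
    have hk'' := Finset.mem_erase.1 hk'.2
    rw [hc', Function.update_of_ne hk''.1]
  rw [h2, h3]

lemma move_card {m : Multiset ℕ} {a b : ℕ} (ha : a ∈ m) (hb : b ∈ m.erase a) :
    Multiset.card (moranMove m a b)
      = if b = 1 then Multiset.card m - 1 else Multiset.card m := by
  have h1 : Multiset.card (m.erase a) = Multiset.card m - 1 := Multiset.card_erase_of_mem ha
  have h2 : Multiset.card ((m.erase a).erase b) = Multiset.card m - 1 - 1 := by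
    rw [Multiset.card_erase_of_mem hb, h1, Nat.pred_eq_sub_one]
  have hc2 : 2 ≤ Multiset.card m := by
    have := Multiset.card_pos_iff_exists_mem.2 ⟨b, hb⟩
    omega
  rw [moranMove]
  split
  · rw [Multiset.card_cons, h2]; omega
  · rw [Multiset.card_cons, Multiset.card_cons, h2]; omega

lemma sum_update2 {t : ℕ} (c : Fin t → ℕ) {i j : Fin t} (hij : i ≠ j) (x y : ℕ) :
    (∑ k, Function.update (Function.update c i x) j y k) + c i + c j
      = (∑ k, c k) + x + y := by
  have hjmem : j ∈ (Finset.univ : Finset (Fin t)) := Finset.mem_univ j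
  have himem : i ∈ (Finset.univ : Finset (Fin t)) \ {j} :=
    Finset.mem_sdiff.2 ⟨Finset.mem_univ i, by simp [hij]⟩
  rw [Finset.sum_update_of_mem hjmem, Finset.sum_update_of_mem himem]
  have h1 := Finset.sum_eq_add_sum_sdiff_singleton_of_mem hjmem c
  have h2 := Finset.sum_eq_add_sum_sdiff_singleton_of_mem himem c
  omega

lemma update_val_i {t : ℕ} (c : Fin t → ℕ) {i j : Fin t} (hij : i ≠ j) (x y : ℕ) :
    Function.update (Function.update c i x) j y i = x := by
  rw [Function.update_of_ne hij, Function.update_self]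

lemma update_val_j {t : ℕ} (c : Fin t → ℕ) (i j : Fin t) (x y : ℕ) :
    Function.update (Function.update c i x) j y j = y := Function.update_self _ _ _

lemma update_val_k {t : ℕ} (c : Fin t → ℕ) {i j k : Fin t} (hki : k ≠ i) (hkj : k ≠ j)
    (x y : ℕ) : Function.update (Function.update c i x) j y k = c k := by
  rw [Function.update_of_ne hkj, Function.update_of_ne hki]

lemma update2_cancel {α : Type*} [DecidableEq α] (c : α → ℕ) (i j : α) (x y x' y' : ℕ)
    (hx : x' = c i) (hy : y' = c j) :
    Function.update (Function.update (Function.update (Function.update c i x) j y) i x') j y'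
      = c := by
  funext k
  simp only [Function.update_apply]
  split_ifs with h1 h2
  · subst h1; exact hy
  · subst h2; exact hx
  · rfl


lemma bij_stay (n t : ℕ) (P : Multiset ℕ) (hP : Multiset.card P = t) (ht : 1 ≤ t) :
    ∑ c ∈ compFinset n t, ∑ p ∈ pairs t,
        (if moranMove (msOf c) (c p.1) (c p.2) = P then (c p.1 : ℝ) * (c p.2) else 0)
      = ∑ d ∈ compFinset n t, ∑ p ∈ pairs t,
          (if msOf d = P then ((d p.1 : ℝ) - 1) * ((d p.2 : ℝ) + 1) else 0) := by
  rw [← Finset.sum_product', ← Finset.sum_product']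
  rw [← Finset.sum_filter_of_ne (s := compFinset n t ×ˢ pairs t)
    (p := fun q => 2 ≤ q.1 q.2.2) (fun q hq hne => ?side1)]
  rw [← Finset.sum_filter_of_ne (s := compFinset n t ×ˢ pairs t)
    (p := fun q => 2 ≤ q.1 q.2.1) (fun q hq hne => ?side2)]
  case side1 =>
    obtain ⟨c, i, j⟩ := q
    dsimp only at hne ⊢
    simp only [Finset.mem_product, pairs, Finset.mem_filter, Finset.mem_univ, true_and] at hq
    obtain ⟨hc, hij⟩ := hq
    by_cases hcond : moranMove (msOf c) (c i) (c j) = P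
    · have hcard := move_card (mem_msOf.2 ⟨i, rfl⟩) (cj_mem_erase c hij)
      rw [hcond, hP, card_msOf] at hcard
      have hpos : 0 < c j := (mem_compFinset.1 hc).2.1 j
      by_cases h1 : c j = 1
      · rw [if_pos h1] at hcard; omega
      · omega
    · simp [hcond] at hne
  case side2 =>
    obtain ⟨d, i, j⟩ := q
    dsimp only at hne ⊢
    simp only [Finset.mem_product, pairs, Finset.mem_filter, Finset.mem_univ, true_and] at hq
    by_cases hcond : msOf d = P
    · have hpos : 0 < d i := (mem_compFinset.1 hq.1).2.1 i
      by_cases h1 : d i = 1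
      · exfalso; apply hne; rw [if_pos hcond, h1]; simp
      · omega
    · simp [hcond] at hne
  · apply Finset.sum_nbij'
      (fun q => (Function.update (Function.update q.1 q.2.1 (q.1 q.2.1 + 1)) q.2.2 (q.1 q.2.2 - 1), q.2))
      (fun q => (Function.update (Function.update q.1 q.2.1 (q.1 q.2.1 - 1)) q.2.2 (q.1 q.2.2 + 1), q.2))
    · rintro ⟨c, i, j⟩ hq
      simp only [Finset.mem_filter, Finset.mem_product, pairs, Finset.mem_univ, true_and] at hq ⊢
      obtain ⟨⟨hc, hij⟩, h2⟩ := hq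
      have htwo := comp_two_le hc hij
      obtain ⟨hbd, hpos, hsum⟩ := mem_compFinset.1 hc
      have hsum2 := sum_update2 c hij (c i + 1) (c j - 1)
      refine ⟨⟨mem_compFinset.2 ⟨?_, ?_, ?_⟩, hij⟩, ?_⟩
      · intro k
        rcases eq_or_ne k j with rfl | hkj
        · rw [update_val_j]; have := hbd k; omega
        · rcases eq_or_ne k i with rfl | hki
          · rw [update_val_i c hij]; omega
          · rw [update_val_k c hki hkj]; exact hbd k
      · intro k
        rcases eq_or_ne k j with rfl | hkj
        · rw [update_val_j]; omega
        · rcases eq_or_ne k i with rfl | hki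
          · rw [update_val_i c hij]; omega
          · rw [update_val_k c hki hkj]; exact hpos k
      · omega
      · rw [update_val_i c hij]; have := hpos i; omega
    · rintro ⟨d, i, j⟩ hq
      simp only [Finset.mem_filter, Finset.mem_product, pairs, Finset.mem_univ, true_and] at hq ⊢
      obtain ⟨⟨hd, hij⟩, h2⟩ := hq
      have htwo := comp_two_le hd hij
      obtain ⟨hbd, hpos, hsum⟩ := mem_compFinset.1 hd
      have hsum2 := sum_update2 d hij (d i - 1) (d j + 1)
      refine ⟨⟨mem_compFinset.2 ⟨?_, ?_, ?_⟩, hij⟩, ?_⟩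
      · intro k
        rcases eq_or_ne k j with rfl | hkj
        · rw [update_val_j]; omega
        · rcases eq_or_ne k i with rfl | hki
          · rw [update_val_i d hij]; have := hbd k; omega
          · rw [update_val_k d hki hkj]; exact hbd k
      · intro k
        rcases eq_or_ne k j with rfl | hkj
        · rw [update_val_j]; omega
        · rcases eq_or_ne k i with rfl | hki
          · rw [update_val_i d hij]; omega
          · rw [update_val_k d hki hkj]; exact hpos k
      · omega
      · rw [update_val_j]; have := hpos j; omega
    · rintro ⟨c, i, j⟩ hq
      simp only [Finset.mem_filter, Finset.mem_product, pairs, Finset.mem_univ, true_and] at hq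
      obtain ⟨⟨hc, hij⟩, h2⟩ := hq
      obtain ⟨hbd, hpos, hsum⟩ := mem_compFinset.1 hc
      refine Prod.ext ?_ rfl
      dsimp only
      apply update2_cancel
      · rw [update_val_i c hij]; omega
      · rw [update_val_j]; have := hpos j; omega
    · rintro ⟨d, i, j⟩ hq
      simp only [Finset.mem_filter, Finset.mem_product, pairs, Finset.mem_univ, true_and] at hq
      obtain ⟨⟨hd, hij⟩, h2⟩ := hq
      obtain ⟨hbd, hpos, hsum⟩ := mem_compFinset.1 hd
      refine Prod.ext ?_ rfl
      dsimp only
      apply update2_cancel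
      · rw [update_val_i d hij]; omega
      · rw [update_val_j]; omega
    · rintro ⟨c, i, j⟩ hq
      simp only [Finset.mem_filter, Finset.mem_product, pairs, Finset.mem_univ, true_and] at hq
      obtain ⟨⟨hc, hij⟩, h2⟩ := hq
      obtain ⟨hbd, hpos, hsum⟩ := mem_compFinset.1 hc
      dsimp only
      rw [move_stay c hij h2, update_val_i c hij, update_val_j]
      congr 1
      have h1 : ((c j - 1 : ℕ) : ℝ) = (c j : ℝ) - 1 := by
        have h3 : 1 ≤ c j := by omega
        push_cast [h3]
        ring
      push_cast [h1]
      ring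

noncomputable def invSA {m : ℕ} (j i : Fin (m+2)) : Fin (m+1) :=
  if h : ∃ k, j.succAbove k = i then h.choose else 0

lemma invSA_spec {m : ℕ} {j i : Fin (m+2)} (h : i ≠ j) : j.succAbove (invSA j i) = i := by
  have he : ∃ k, j.succAbove k = i := Fin.exists_succAbove_eq h
  rw [invSA, dif_pos he]
  exact he.choose_spec

lemma invSA_succAbove {m : ℕ} (j : Fin (m+2)) (k : Fin (m+1)) : invSA j (j.succAbove k) = k := by
  apply Fin.succAbove_right_injective (p := j)
  rw [invSA_spec (Fin.succAbove_ne j k)]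

lemma comp_n_pos {n t : ℕ} {d : Fin (t+1) → ℕ} (hd : d ∈ compFinset n (t+1)) : 1 ≤ n := by
  obtain ⟨-, hpos, hsum⟩ := mem_compFinset.1 hd
  have := hpos 0
  have h1 : d 0 ≤ ∑ k, d k := Finset.single_le_sum (fun k _ => Nat.zero_le _) (Finset.mem_univ 0)
  omega

lemma bij_del (n v : ℕ) (P : Multiset ℕ) (hP : Multiset.card P = v + 1) :
    ∑ c ∈ compFinset n (v+2), ∑ p ∈ pairs (v+2),
        (if moranMove (msOf c) (c p.1) (c p.2) = P then (c p.1 : ℝ) * (c p.2) else 0)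
      = ∑ d ∈ compFinset n (v+1), ∑ p ∈ (Finset.univ : Finset (Fin (v+2) × Fin (v+1))),
          (if msOf d = P then ((d p.2 : ℝ) - 1) else 0) := by
  rw [← Finset.sum_product', ← Finset.sum_product']
  rw [← Finset.sum_filter_of_ne (s := compFinset n (v+2) ×ˢ pairs (v+2))
    (p := fun q => q.1 q.2.2 = 1) (fun q hq hne => ?side1)]
  rw [← Finset.sum_filter_of_ne
    (s := compFinset n (v+1) ×ˢ (Finset.univ : Finset (Fin (v+2) × Fin (v+1))))
    (p := fun q => 2 ≤ q.1 q.2.2) (fun q hq hne => ?side2)]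
  case side1 =>
    obtain ⟨c, i, j⟩ := q
    dsimp only at hne ⊢
    simp only [Finset.mem_product, pairs, Finset.mem_filter, Finset.mem_univ, true_and] at hq
    obtain ⟨hc, hij⟩ := hq
    by_cases hcond : moranMove (msOf c) (c i) (c j) = P
    · have hcard := move_card (mem_msOf.2 ⟨i, rfl⟩) (cj_mem_erase c hij)
      rw [hcond, hP, card_msOf] at hcard
      by_cases h1 : c j = 1
      · exact h1
      · rw [if_neg h1] at hcard; omega
    · simp [hcond] at hne
  case side2 =>
    obtain ⟨d, j, i'⟩ := q
    dsimp only at hne ⊢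
    simp only [Finset.mem_product, Finset.mem_univ, and_true] at hq
    by_cases hcond : msOf d = P
    · have hpos : 0 < d i' := (mem_compFinset.1 hq).2.1 i'
      by_cases h1 : d i' = 1
      · exfalso; apply hne; rw [if_pos hcond, h1]; simp
      · omega
    · simp [hcond] at hne
  · apply Finset.sum_nbij'
      (fun q : (Fin (v+2) → ℕ) × (Fin (v+2) × Fin (v+2)) =>
        ((fun k => Function.update q.1 q.2.1 (q.1 q.2.1 + 1) (q.2.2.succAbove k)),
        (q.2.2, invSA q.2.2 q.2.1)))
      (fun q : (Fin (v+1) → ℕ) × (Fin (v+2) × Fin (v+1)) =>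
        (q.2.1.insertNth (α := fun _ => ℕ) 1 (Function.update q.1 q.2.2 (q.1 q.2.2 - 1)),
        (q.2.1.succAbove q.2.2, q.2.1)))
    · rintro ⟨c, i, j⟩ hq
      simp only [Finset.mem_filter, Finset.mem_product, pairs, Finset.mem_univ, true_and,
        and_true] at hq ⊢
      obtain ⟨⟨hc, hij⟩, hcj⟩ := hq
      have htwo := comp_two_le hc hij
      obtain ⟨hbd, hpos, hsum⟩ := mem_compFinset.1 hc
      refine ⟨mem_compFinset.2 ⟨?_, ?_, ?_⟩, ?_⟩
      · intro k
        show Function.update c i (c i + 1) (j.succAbove k) < n + 1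
        rcases eq_or_ne (j.succAbove k) i with he | he
        · rw [he, Function.update_self]; omega
        · rw [Function.update_of_ne he]; exact hbd _
      · intro k
        show 0 < Function.update c i (c i + 1) (j.succAbove k)
        rcases eq_or_ne (j.succAbove k) i with he | he
        · rw [he, Function.update_self]; omega
        · rw [Function.update_of_ne he]; exact hpos _
      · show (∑ k : Fin (v+1), Function.update c i (c i + 1) (j.succAbove k)) = n
        have hA : (∑ k : Fin (v+1), Function.update c i (c i + 1) (j.succAbove k))
            = ∑ x ∈ (Finset.univ : Finset (Fin (v+2))).erase j, Function.update c i (c i + 1) x :=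
          sum_succAbove j _
        have hB : Function.update c i (c i + 1) j
              + ∑ x ∈ (Finset.univ : Finset (Fin (v+2))).erase j, Function.update c i (c i + 1) x
            = ∑ k : Fin (v+2), Function.update c i (c i + 1) k :=
          Finset.add_sum_erase _ _ (Finset.mem_univ j)
        have hC : (∑ k : Fin (v+2), Function.update c i (c i + 1) k)
            = (c i + 1) + ∑ x ∈ (Finset.univ : Finset (Fin (v+2))) \ {i}, c x :=
          Finset.sum_update_of_mem (Finset.mem_univ i) c (c i + 1)
        have hD : (∑ k : Fin (v+2), c k)
            = c i + ∑ x ∈ (Finset.univ : Finset (Fin (v+2))) \ {i}, c x :=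
          Finset.sum_eq_add_sum_sdiff_singleton_of_mem (Finset.mem_univ i) c
        have hsum' : (∑ k : Fin (v+2), c k) = n := hsum
        have hcj' : Function.update c i (c i + 1) j = c j := Function.update_of_ne hij.symm _ _
        omega
      · show 2 ≤ Function.update c i (c i + 1) (j.succAbove (invSA j i))
        rw [invSA_spec hij, Function.update_self]
        have := hpos i; omega
    · rintro ⟨d, j, i'⟩ hq
      simp only [Finset.mem_filter, Finset.mem_product, pairs, Finset.mem_univ, true_and,
        and_true] at hq ⊢
      obtain ⟨hd, h2⟩ := hq
      have hn1 := comp_n_pos hd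
      obtain ⟨hbd, hpos, hsum⟩ := mem_compFinset.1 hd
      refine ⟨⟨mem_compFinset.2 ⟨?_, ?_, ?_⟩, ?_⟩, ?_⟩
      · intro k
        rcases eq_or_ne k j with rfl | hkj
        · rw [Fin.insertNth_apply_same]; omega
        · obtain ⟨m, rfl⟩ := Fin.exists_succAbove_eq hkj
          rw [Fin.insertNth_apply_succAbove]
          rcases eq_or_ne m i' with rfl | hmi
          · rw [Function.update_self]; have := hbd m; omega
          · rw [Function.update_of_ne hmi]; exact hbd m
      · intro k
        rcases eq_or_ne k j with rfl | hkj
        · rw [Fin.insertNth_apply_same]; omega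
        · obtain ⟨m, rfl⟩ := Fin.exists_succAbove_eq hkj
          rw [Fin.insertNth_apply_succAbove]
          rcases eq_or_ne m i' with rfl | hmi
          · rw [Function.update_self]; omega
          · rw [Function.update_of_ne hmi]; exact hpos m
      · show (∑ k : Fin (v+2), j.insertNth (α := fun _ => ℕ) 1 (Function.update d i' (d i' - 1)) k) = n
        have hB : j.insertNth (α := fun _ => ℕ) 1 (Function.update d i' (d i' - 1)) j
              + ∑ x ∈ (Finset.univ : Finset (Fin (v+2))).erase j,
                  j.insertNth (α := fun _ => ℕ) 1 (Function.update d i' (d i' - 1)) x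
            = ∑ k : Fin (v+2), j.insertNth (α := fun _ => ℕ) 1 (Function.update d i' (d i' - 1)) k :=
          Finset.add_sum_erase _ _ (Finset.mem_univ j)
        have hA : (∑ k : Fin (v+1), j.insertNth (α := fun _ => ℕ) 1 (Function.update d i' (d i' - 1)) (j.succAbove k))
            = ∑ x ∈ (Finset.univ : Finset (Fin (v+2))).erase j,
                j.insertNth (α := fun _ => ℕ) 1 (Function.update d i' (d i' - 1)) x :=
          sum_succAbove j _
        have hA' : (∑ k : Fin (v+1), j.insertNth (α := fun _ => ℕ) 1 (Function.update d i' (d i' - 1)) (j.succAbove k))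
            = ∑ k : Fin (v+1), Function.update d i' (d i' - 1) k :=
          Finset.sum_congr rfl (fun k _ => Fin.insertNth_apply_succAbove j _ _ k)
        have hE : (∑ k : Fin (v+1), Function.update d i' (d i' - 1) k)
            = (d i' - 1) + ∑ x ∈ (Finset.univ : Finset (Fin (v+1))) \ {i'}, d x :=
          Finset.sum_update_of_mem (Finset.mem_univ i') d (d i' - 1)
        have hF : (∑ k : Fin (v+1), d k)
            = d i' + ∑ x ∈ (Finset.univ : Finset (Fin (v+1))) \ {i'}, d x :=
          Finset.sum_eq_add_sum_sdiff_singleton_of_mem (Finset.mem_univ i') d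
        have hG : j.insertNth (α := fun _ => ℕ) 1 (Function.update d i' (d i' - 1)) j = 1 :=
          Fin.insertNth_apply_same j 1 _
        have hsum' : (∑ k : Fin (v+1), d k) = n := hsum
        omega
      · exact Fin.succAbove_ne j i'
      · exact Fin.insertNth_apply_same j 1 _
    · rintro ⟨c, i, j⟩ hq
      simp only [Finset.mem_filter, Finset.mem_product, pairs, Finset.mem_univ, true_and,
        and_true] at hq
      obtain ⟨⟨hc, hij⟩, hcj⟩ := hq
      obtain ⟨hbd, hpos, hsum⟩ := mem_compFinset.1 hc
      have hspec := invSA_spec hij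
      refine Prod.ext ?_ (Prod.ext ?_ rfl)
      · show j.insertNth (α := fun _ => ℕ) 1
            (Function.update (fun k => Function.update c i (c i + 1) (j.succAbove k))
              (invSA j i)
              ((fun k => Function.update c i (c i + 1) (j.succAbove k)) (invSA j i) - 1)) = c
        have hval : Function.update (fun k => Function.update c i (c i + 1) (j.succAbove k))
            (invSA j i)
            ((fun k => Function.update c i (c i + 1) (j.succAbove k)) (invSA j i) - 1)
            = fun k => c (j.succAbove k) := by
          funext m
          rcases eq_or_ne m (invSA j i) with rfl | hmi
          · rw [Function.update_self]
            show Function.update c i (c i + 1) (j.succAbove (invSA j i)) - 1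
              = c (j.succAbove (invSA j i))
            rw [hspec, Function.update_self]
            omega
          · rw [Function.update_of_ne hmi]
            show Function.update c i (c i + 1) (j.succAbove m) = c (j.succAbove m)
            have hne2 : j.succAbove m ≠ i := by
              intro he; apply hmi
              apply Fin.succAbove_right_injective (p := j)
              rw [hspec, he]
            rw [Function.update_of_ne hne2]
        rw [hval]
        rw [show (fun k => c (j.succAbove k)) = j.removeNth c from rfl]
        have hins := Fin.insertNth_self_removeNth j c
        rw [hcj] at hins
        exact hins
      · exact hspec
    · rintro ⟨d, j, i'⟩ hq
      simp only [Finset.mem_filter, Finset.mem_product, pairs, Finset.mem_univ, true_and,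
        and_true] at hq
      obtain ⟨hd, h2⟩ := hq
      obtain ⟨hbd, hpos, hsum⟩ := mem_compFinset.1 hd
      have hci : j.insertNth (α := fun _ => ℕ) 1 (Function.update d i' (d i' - 1)) (j.succAbove i')
          = d i' - 1 := by
        rw [Fin.insertNth_apply_succAbove, Function.update_self]
      refine Prod.ext ?_ (Prod.ext rfl ?_)
      · show (fun k => Function.update (j.insertNth (α := fun _ => ℕ) 1 (Function.update d i' (d i' - 1)))
            (j.succAbove i')
            (j.insertNth (α := fun _ => ℕ) 1 (Function.update d i' (d i' - 1)) (j.succAbove i') + 1)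
            (j.succAbove k)) = d
        funext k
        show Function.update (j.insertNth (α := fun _ => ℕ) 1 (Function.update d i' (d i' - 1)))
            (j.succAbove i')
            (j.insertNth (α := fun _ => ℕ) 1 (Function.update d i' (d i' - 1)) (j.succAbove i') + 1)
            (j.succAbove k) = d k
        rcases eq_or_ne k i' with rfl | hki
        · rw [Function.update_self, hci]
          omega
        · have hne : j.succAbove k ≠ j.succAbove i' :=
            fun he => hki (Fin.succAbove_right_injective he)
          rw [Function.update_of_ne hne, Fin.insertNth_apply_succAbove,
            Function.update_of_ne hki]
      · show invSA j (j.succAbove i') = i'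
        exact invSA_succAbove j i'
    · rintro ⟨c, i, j⟩ hq
      simp only [Finset.mem_filter, Finset.mem_product, pairs, Finset.mem_univ, true_and,
        and_true] at hq
      obtain ⟨⟨hc, hij⟩, hcj⟩ := hq
      obtain ⟨hbd, hpos, hsum⟩ := mem_compFinset.1 hc
      dsimp only
      rw [move_del c hij hcj]
      have hval : Function.update c i (c i + 1) (j.succAbove (invSA j i)) = c i + 1 := by
        rw [invSA_spec hij, Function.update_self]
      rw [hval, hcj]
      push_cast
      ring_nf

lemma inner_stay {n t : ℕ} {d : Fin t → ℕ} (hd : d ∈ compFinset n t) :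
    ∑ p ∈ pairs t, ((d p.1 : ℝ) - 1) * ((d p.2 : ℝ) + 1)
      = (n:ℝ)*n - (t:ℝ)*t + t - ∑ i, (d i:ℝ)^2 := by
  obtain ⟨-, -, hsum⟩ := mem_compFinset.1 hd
  have hsum' : ∑ i, (d i : ℝ) = n := by
    rw [← Nat.cast_sum, hsum]
  have hps : ∑ p ∈ pairs t, ((d p.1 : ℝ) - 1) * ((d p.2 : ℝ) + 1)
      = ∑ i, ∑ j ∈ Finset.univ.erase i, ((d i:ℝ)-1)*((d j:ℝ)+1) :=
    pair_sum (fun i j => ((d i:ℝ)-1)*((d j:ℝ)+1))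
  rw [hps]
  have h1 : ∀ i : Fin t, ∑ j ∈ Finset.univ.erase i, ((d i:ℝ)-1)*((d j:ℝ)+1)
      = ((n:ℝ)+t)*(d i : ℝ) - (d i:ℝ)^2 - (((n:ℝ)+t) - 1) := by
    intro i
    have h2 : ∑ j ∈ Finset.univ.erase i, ((d j:ℝ)+1) = ((n:ℝ)+t) - ((d i:ℝ)+1) := by
      rw [Finset.sum_erase_eq_sub (Finset.mem_univ i), Finset.sum_add_distrib, hsum',
        Finset.sum_const, Finset.card_univ, Fintype.card_fin, nsmul_eq_mul, mul_one]
    calc ∑ j ∈ Finset.univ.erase i, ((d i:ℝ)-1)*((d j:ℝ)+1)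
        = ((d i:ℝ)-1) * ∑ j ∈ Finset.univ.erase i, ((d j:ℝ)+1) := by
          rw [Finset.mul_sum]
      _ = ((n:ℝ)+t)*(d i : ℝ) - (d i:ℝ)^2 - (((n:ℝ)+t) - 1) := by rw [h2]; ring
  rw [Finset.sum_congr rfl (fun i _ => h1 i), Finset.sum_sub_distrib, Finset.sum_sub_distrib,
    ← Finset.mul_sum, hsum', Finset.sum_const, Finset.card_univ, Fintype.card_fin,
    nsmul_eq_mul]
  ring

lemma inner_del {n v : ℕ} {d : Fin (v+1) → ℕ} (hd : d ∈ compFinset n (v+1)) :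
    ∑ p ∈ (Finset.univ : Finset (Fin (v+2) × Fin (v+1))), ((d p.2 : ℝ) - 1)
      = ((v:ℝ)+2) * ((n:ℝ) - ((v:ℝ)+1)) := by
  obtain ⟨-, -, hsum⟩ := mem_compFinset.1 hd
  have hsum' : ∑ i, (d i : ℝ) = n := by
    rw [← Nat.cast_sum, hsum]
  have hin : ∑ i' : Fin (v+1), ((d i':ℝ) - 1) = (n:ℝ) - ((v:ℝ)+1) := by
    rw [Finset.sum_sub_distrib, hsum', Finset.sum_const, Finset.card_univ, Fintype.card_fin,
      nsmul_eq_mul, mul_one]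
    push_cast
    ring
  rw [Fintype.sum_prod_type, Finset.sum_congr rfl (fun j _ => hin), Finset.sum_const,
    Finset.card_univ, Fintype.card_fin, nsmul_eq_mul]
  push_cast
  ring

lemma coe_fix (m : Multiset ℕ) : ((m.map (fun a => (a : ℝ) * ((a : ℝ) - 1))).sum)
    = ((Multiset.map (fun a : ℕ => (a:ℝ) * ((a:ℝ) - 1)) m).sum) := by
  show (Multiset.map _ (m.bind fun a => {(a:ℝ)})).sum = _
  rw [Multiset.bind_singleton, Multiset.map_map]
  rfl

lemma hold_eq {t : ℕ} (d : Fin t → ℕ) :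
    ((msOf d).map (fun a => (a:ℝ) * ((a:ℝ) - 1))).sum
      = (∑ i, (d i:ℝ)^2) - ∑ i, (d i:ℝ) := by
  rw [coe_fix, map_sum_msOf, Finset.sum_congr rfl
    (fun i _ => show (d i:ℝ) * ((d i:ℝ) - 1) = (d i:ℝ)^2 - (d i:ℝ) by ring),
    Finset.sum_sub_distrib]

lemma prod_Icc_count (n : ℕ) (r : Nat.Partition n) :
    ∏ i ∈ Finset.Icc 1 n, (r.parts.count i).factorial
      = ∏ x ∈ r.parts.toFinset, (r.parts.count x).factorial := by
  apply (Finset.prod_subset ?_ ?_).symm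
  · intro x hx
    have hxm := Multiset.mem_toFinset.1 hx
    have h1 := r.parts_pos hxm
    have h2 : x ≤ n := by
      have := Multiset.single_le_sum (fun y _ => Nat.zero_le y) x hxm
      rwa [r.parts_sum] at this
    exact Finset.mem_Icc.2 ⟨h1, h2⟩
  · intro x _ hx
    have h0 : r.parts.count x = 0 :=
      Multiset.count_eq_zero.2 (fun h => hx (Multiset.mem_toFinset.2 h))
    simp [h0]

lemma mu_cast {n t : ℕ} (r : Nat.Partition n) (hr : Multiset.card r.parts = t) :
    (t.factorial : ℝ) / ∏ i ∈ Finset.Icc 1 n, ((r.parts.count i).factorial : ℝ)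
      = ((fiberFinset n t r.parts).card : ℝ) := by
  have hbd : ∀ x ∈ r.parts, x ≤ n := fun x hx => by
    have := Multiset.single_le_sum (fun y _ => Nat.zero_le y) x hx
    rwa [r.parts_sum] at this
  have hkey := fiber_card n t r.parts hr hbd
  rw [← prod_Icc_count n r] at hkey
  have hpos : (0:ℝ) < ∏ i ∈ Finset.Icc 1 n, ((r.parts.count i).factorial : ℝ) :=
    Finset.prod_pos (fun i _ => by exact_mod_cast (Nat.factorial_pos _))
  rw [div_eq_iff (ne_of_gt hpos)]
  exact_mod_cast congrArg (Nat.cast (R := ℝ)) hkey.symm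

end MoranAux

set_option maxHeartbeats 3200000 in
/-- for the Moran partition chain, `μ_1 P = μ_1` and
`μ_t P = λ_t μ_t + (1−λ_t) μ_{t−1}` for every `2 ≤ t ≤ n`; that is, the chain started at
`(1,…,1)` is intertwined with the pure-death chain `P̂` by the link whose rows are the
`μ_t`. -/
theorem stmt2 (n : ℕ) (hn : 2 ≤ n) :
    moranMu n 1 ᵥ* Matrix.of (moranP n) = moranMu n 1 ∧
    ∀ t : ℕ, 2 ≤ t → t ≤ n →
      moranMu n t ᵥ* Matrix.of (moranP n)
        = moranLam n t • moranMu n t + (1 - moranLam n t) • moranMu n (t - 1) := by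
  have h2R : (2:ℝ) ≤ (n:ℝ) := by exact_mod_cast hn
  have hnpos : (0:ℝ) < n := by linarith
  have hn1pos : (0:ℝ) < (n:ℝ) - 1 := by linarith
  have hNne : ((n:ℝ) * ((n:ℝ)-1)) ≠ 0 := mul_ne_zero hnpos.ne' hn1pos.ne'
  constructor
  · -- t = 1
    funext s
    have hveq : (moranMu n 1 ᵥ* Matrix.of (moranP n)) s = ∑ r, moranMu n 1 r * moranP n r s := by
      simp [Matrix.vecMul, dotProduct]
    rw [hveq]
    have hr0 : (Nat.Partition.indiscrete n).parts = {n} :=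
      Nat.Partition.indiscrete_parts (by omega)
    have hone : ∀ r : Nat.Partition n, Multiset.card r.parts = 1 → r.parts = {n} := by
      intro r hr
      obtain ⟨a, ha⟩ := Multiset.card_eq_one.1 hr
      have hsum := r.parts_sum
      rw [ha] at hsum ⊢
      rw [Multiset.sum_singleton] at hsum
      rw [hsum]
    have hmu1 : ∀ r : Nat.Partition n,
        moranMu n 1 r = if r = Nat.Partition.indiscrete n then 1 else 0 := by
      intro r
      rw [moranMu]
      by_cases h : Multiset.card r.parts = 1
      · have hps : r.parts = {n} := hone r h
        have heq : r = Nat.Partition.indiscrete n := Nat.Partition.ext (by rw [hps, hr0])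
        rw [if_pos h, if_pos heq, hps]
        have hprod : ∏ i ∈ Finset.Icc 1 n, ((({n} : Multiset ℕ).count i).factorial : ℝ) = 1 :=
          Finset.prod_eq_one (fun i _ => by
            rw [Multiset.count_singleton]
            split_ifs <;> simp)
        rw [hprod]
        simp
      · rw [if_neg h, if_neg (fun he => h (by rw [he, hr0, Multiset.card_singleton]))]
    have hP0 : moranP n (Nat.Partition.indiscrete n) s
        = if Nat.Partition.indiscrete n = s then 1 else 0 := by
      rw [moranP, hr0]
      rw [Multiset.map_singleton, Multiset.sum_singleton, Multiset.erase_singleton,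
        Multiset.map_zero, Multiset.sum_zero, zero_add]
      split_ifs with h
      · rw [MoranAux.coe_fix, Multiset.map_singleton, Multiset.sum_singleton]
        exact div_self hNne
      · exact zero_div _
    rw [Finset.sum_congr rfl (fun r _ => by rw [hmu1 r, ite_mul, one_mul, zero_mul]),
      Finset.sum_ite_eq' Finset.univ (Nat.Partition.indiscrete n) (fun r => moranP n r s),
      if_pos (Finset.mem_univ _), hP0, hmu1]
    exact if_congr eq_comm rfl rfl
  · -- 2 ≤ t ≤ n
    intro t ht2 htn
    obtain ⟨v, rfl⟩ : ∃ v, t = v + 2 := ⟨t - 2, by omega⟩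
    funext s
    have hBne : (((n-1).choose (v+2-1) : ℕ) : ℝ) ≠ 0 := by
      have : 0 < (n-1).choose (v+2-1) := Nat.choose_pos (by omega)
      exact_mod_cast this.ne'
    have hveq : (moranMu n (v+2) ᵥ* Matrix.of (moranP n)) s
        = ∑ r, moranMu n (v+2) r * moranP n r s := by
      simp [Matrix.vecMul, dotProduct]
    rw [hveq]
    have hstep1 : ∑ r, moranMu n (v+2) r * moranP n r s
        = ∑ r ∈ MoranAux.partT n (v+2),
            (((MoranAux.fiberFinset n (v+2) r.parts).card : ℝ)
              / (((n-1).choose (v+2-1) : ℕ) : ℝ)) * moranP n r s := by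
      rw [MoranAux.partT, Finset.sum_filter]
      apply Finset.sum_congr rfl
      intro r _
      by_cases h : Multiset.card r.parts = v+2
      · rw [if_pos h, moranMu, if_pos h, MoranAux.mu_cast r h]
      · rw [if_neg h, moranMu, if_neg h, zero_mul]
    rw [hstep1]
    have hstep2 : ∑ r ∈ MoranAux.partT n (v+2),
          (((MoranAux.fiberFinset n (v+2) r.parts).card : ℝ)
            / (((n-1).choose (v+2-1) : ℕ) : ℝ)) * moranP n r s
        = (∑ r ∈ MoranAux.partT n (v+2), ((MoranAux.fiberFinset n (v+2) r.parts).card : ℝ)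
              * ((r.parts.map (fun a =>
                ((r.parts.erase a).map (fun b =>
                  if moranMove r.parts a b = s.parts then ((a : ℝ) * (b : ℝ)) else 0)).sum)).sum))
            / ((((n-1).choose (v+2-1) : ℕ) : ℝ) * ((n:ℝ) * ((n:ℝ)-1)))
          + (if Multiset.card s.parts = v+2 then
              ((MoranAux.fiberFinset n (v+2) s.parts).card : ℝ)
                * ((s.parts.map (fun a => (a : ℝ) * ((a : ℝ) - 1))).sum)
                / ((((n-1).choose (v+2-1) : ℕ) : ℝ) * ((n:ℝ) * ((n:ℝ)-1)))
            else 0) := by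
      have hterm : ∀ r ∈ MoranAux.partT n (v+2),
          (((MoranAux.fiberFinset n (v+2) r.parts).card : ℝ)
            / (((n-1).choose (v+2-1) : ℕ) : ℝ)) * moranP n r s
          = ((MoranAux.fiberFinset n (v+2) r.parts).card : ℝ)
              * ((r.parts.map (fun a =>
                ((r.parts.erase a).map (fun b =>
                  if moranMove r.parts a b = s.parts then ((a : ℝ) * (b : ℝ)) else 0)).sum)).sum)
              / ((((n-1).choose (v+2-1) : ℕ) : ℝ) * ((n:ℝ) * ((n:ℝ)-1)))
            + (if r = s then
                ((MoranAux.fiberFinset n (v+2) s.parts).card : ℝ)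
                  * ((s.parts.map (fun a => (a : ℝ) * ((a : ℝ) - 1))).sum)
                  / ((((n-1).choose (v+2-1) : ℕ) : ℝ) * ((n:ℝ) * ((n:ℝ)-1)))
              else 0) := by
        intro r _
        rw [moranP]
        by_cases hrs : r = s
        · subst hrs
          rw [if_pos rfl, if_pos rfl]
          field_simp
        · rw [if_neg hrs, if_neg hrs, add_zero]
          field_simp
          ring
      rw [Finset.sum_congr rfl hterm, Finset.sum_add_distrib,
        Finset.sum_ite_eq' (MoranAux.partT n (v+2)) s, Finset.sum_div]
      congr 1
      rw [MoranAux.partT]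
      simp only [Finset.mem_filter, Finset.mem_univ, true_and]
    rw [hstep2]
    have hW : ∑ r ∈ MoranAux.partT n (v+2), ((MoranAux.fiberFinset n (v+2) r.parts).card : ℝ)
          * ((r.parts.map (fun a =>
            ((r.parts.erase a).map (fun b =>
              if moranMove r.parts a b = s.parts then ((a : ℝ) * (b : ℝ)) else 0)).sum)).sum)
        = ∑ c ∈ MoranAux.compFinset n (v+2), ∑ p ∈ MoranAux.pairs (v+2),
            (if moranMove (MoranAux.msOf c) (c p.1) (c p.2) = s.parts
              then ((c p.1 : ℝ) * (c p.2 : ℝ)) else 0) := by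
      refine (MoranAux.transfer n (v+2) (fun m => ((m.map (fun a =>
        ((m.erase a).map (fun b =>
          if moranMove m a b = s.parts then ((a : ℝ) * (b : ℝ)) else 0)).sum)).sum))).symm.trans ?_
      apply Finset.sum_congr rfl
      intro c _
      exact (MoranAux.pos_sum c (fun a b =>
        if moranMove (MoranAux.msOf c) a b = s.parts then ((a : ℝ) * (b : ℝ)) else 0)).trans
        (MoranAux.pair_sum _).symm
    rw [hW]
    have hRHS : (moranLam n (v+2) • moranMu n (v+2)
          + (1 - moranLam n (v+2)) • moranMu n (v+2-1)) s
        = moranLam n (v+2) * moranMu n (v+2) s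
          + (1 - moranLam n (v+2)) * moranMu n (v+1) s := by
      simp [Pi.add_apply, Pi.smul_apply, smul_eq_mul]
    rw [hRHS]
    by_cases hsA : Multiset.card s.parts = v+2
    · -- case: s has t parts
      rw [MoranAux.bij_stay n (v+2) s.parts hsA (by omega)]
      have hred : ∑ d ∈ MoranAux.compFinset n (v+2), ∑ p ∈ MoranAux.pairs (v+2),
            (if MoranAux.msOf d = s.parts then ((d p.1 : ℝ) - 1) * ((d p.2 : ℝ) + 1) else 0)
          = ∑ d ∈ (MoranAux.compFinset n (v+2)).filter (fun d => MoranAux.msOf d = s.parts),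
              ((n:ℝ)*n - ((v+2 : ℕ):ℝ)*((v+2 : ℕ):ℝ) + ((v+2 : ℕ):ℝ) - ∑ i, (d i:ℝ)^2) := by
        rw [Finset.sum_filter]
        apply Finset.sum_congr rfl
        intro d hd
        by_cases h : MoranAux.msOf d = s.parts
        · rw [if_pos h, Finset.sum_congr rfl (fun p _ => if_pos h), MoranAux.inner_stay hd]
        · rw [if_neg h, Finset.sum_eq_zero (fun p _ => if_neg h)]
      rw [hred]
      have hfil : (MoranAux.compFinset n (v+2)).filter (fun d => MoranAux.msOf d = s.parts)
          = MoranAux.fiberFinset n (v+2) s.parts := MoranAux.comp_filter_eq_fiber s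
      have hHold : ((MoranAux.fiberFinset n (v+2) s.parts).card : ℝ)
            * ((s.parts.map (fun a => (a : ℝ) * ((a : ℝ) - 1))).sum)
          = ∑ d ∈ (MoranAux.compFinset n (v+2)).filter (fun d => MoranAux.msOf d = s.parts),
              ((∑ i, (d i:ℝ)^2) - n) := by
        rw [← hfil]
        rw [show ((((MoranAux.compFinset n (v+2)).filter
            (fun d => MoranAux.msOf d = s.parts)).card : ℝ))
            * ((s.parts.map (fun a => (a : ℝ) * ((a : ℝ) - 1))).sum)
          = ∑ d ∈ (MoranAux.compFinset n (v+2)).filter (fun d => MoranAux.msOf d = s.parts),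
              ((s.parts.map (fun a => (a : ℝ) * ((a : ℝ) - 1))).sum)
          from by rw [Finset.sum_const, nsmul_eq_mul]]
        apply Finset.sum_congr rfl
        intro d hd
        obtain ⟨hdc, hdm⟩ := Finset.mem_filter.1 hd
        obtain ⟨-, -, hdsum⟩ := MoranAux.mem_compFinset.1 hdc
        have hdsum' : ∑ i, (d i : ℝ) = n := by rw [← Nat.cast_sum, hdsum]
        rw [← hdm, MoranAux.hold_eq d, hdsum']
      rw [if_pos hsA, hHold, ← add_div, ← Finset.sum_add_distrib]
      have hcomb : ∀ d ∈ (MoranAux.compFinset n (v+2)).filter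
            (fun d => MoranAux.msOf d = s.parts),
          (((n:ℝ)*n - ((v+2 : ℕ):ℝ)*((v+2 : ℕ):ℝ) + ((v+2 : ℕ):ℝ) - ∑ i, (d i:ℝ)^2)
            + ((∑ i, (d i:ℝ)^2) - n))
          = (n:ℝ)*n - n - (((v+2 : ℕ):ℝ)*((v+2 : ℕ):ℝ) - ((v+2 : ℕ):ℝ)) := by
        intro d _
        ring
      rw [Finset.sum_congr rfl hcomb, Finset.sum_const, nsmul_eq_mul]
      have hmuA : moranMu n (v+2) s
          = ((MoranAux.fiberFinset n (v+2) s.parts).card : ℝ)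
            / (((n-1).choose (v+2-1) : ℕ) : ℝ) := by
        rw [moranMu, if_pos hsA, MoranAux.mu_cast s hsA]
      have hmuB : moranMu n (v+1) s = 0 := by
        rw [moranMu, if_neg (by omega)]
      rw [hmuA, hmuB, mul_zero, add_zero, moranLam]
      have hcards : ((MoranAux.fiberFinset n (v+2) s.parts).card : ℝ)
          = (((MoranAux.compFinset n (v+2)).filter
              (fun d => MoranAux.msOf d = s.parts)).card : ℝ) := by
        rw [hfil]
      rw [hcards]
      generalize (((MoranAux.compFinset n (v+2)).filter
          (fun d => MoranAux.msOf d = s.parts)).card : ℝ) = K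
      field_simp
    · by_cases hsB : Multiset.card s.parts = v+1
      · -- case: s has t-1 parts
        rw [MoranAux.bij_del n v s.parts hsB]
        have hred : ∑ d ∈ MoranAux.compFinset n (v+1),
              ∑ p ∈ (Finset.univ : Finset (Fin (v+2) × Fin (v+1))),
                (if MoranAux.msOf d = s.parts then ((d p.2 : ℝ) - 1) else 0)
            = ∑ d ∈ (MoranAux.compFinset n (v+1)).filter (fun d => MoranAux.msOf d = s.parts),
                (((v:ℝ)+2) * ((n:ℝ) - ((v:ℝ)+1))) := by
          rw [Finset.sum_filter]
          apply Finset.sum_congr rfl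
          intro d hd
          by_cases h : MoranAux.msOf d = s.parts
          · rw [if_pos h, Finset.sum_congr rfl (fun p _ => if_pos h), MoranAux.inner_del hd]
          · rw [if_neg h, Finset.sum_eq_zero (fun p _ => if_neg h)]
        rw [hred, if_neg hsA, add_zero, Finset.sum_const, nsmul_eq_mul]
        have hmuA : moranMu n (v+2) s = 0 := by
          rw [moranMu, if_neg hsA]
        have hmuB : moranMu n (v+1) s
            = (((MoranAux.fiberFinset n (v+1) s.parts).card : ℝ))
              / (((n-1).choose v : ℕ) : ℝ) := by
          rw [moranMu, if_pos hsB, MoranAux.mu_cast s hsB]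
          rfl
        have hfil : (MoranAux.compFinset n (v+1)).filter (fun d => MoranAux.msOf d = s.parts)
            = MoranAux.fiberFinset n (v+1) s.parts := MoranAux.comp_filter_eq_fiber s
        rw [hmuA, hmuB, mul_zero, zero_add, moranLam, hfil]
        have hB'ne : (((n-1).choose v : ℕ) : ℝ) ≠ 0 := by
          have : 0 < (n-1).choose v := Nat.choose_pos (by omega)
          exact_mod_cast this.ne'
        have hch : (n-1).choose (v+1) * (v+1) = (n-1).choose v * ((n-1) - v) :=
          Nat.choose_succ_right_eq (n-1) v
        have h1 : ((n - 1 - v : ℕ) : ℝ) = (n:ℝ) - 1 - v := by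
          rw [Nat.cast_sub (by omega : v ≤ n - 1), Nat.cast_sub (by omega : 1 ≤ n)]
          push_cast
          ring
        have hchR : (((n-1).choose (v+2-1) : ℕ) : ℝ) * ((v:ℝ)+1)
            = (((n-1).choose v : ℕ) : ℝ) * ((n:ℝ) - 1 - (v:ℝ)) := by
          have hcast : (((n-1).choose (v+1) : ℕ) : ℝ) * (((v+1 : ℕ)) : ℝ)
              = (((n-1).choose v : ℕ) : ℝ) * (((n-1) - v : ℕ) : ℝ) := by exact_mod_cast hch
          rw [h1] at hcast
          push_cast at hcast
          show (((n-1).choose (v+1) : ℕ) : ℝ) * ((v:ℝ)+1) = _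
          push_cast
          linarith [hcast]
        generalize hK : (((MoranAux.compFinset n (v+1)).filter
            (fun d => MoranAux.msOf d = s.parts)).card : ℝ) = K
        rw [MoranAux.comp_filter_eq_fiber s] at hK
        rw [hK]
        have hBne' : (((n-1).choose (v+1) : ℕ) : ℝ) ≠ 0 := hBne
        have hchR' : (((n-1).choose (v+1) : ℕ) : ℝ) * ((v:ℝ)+1)
            = (((n-1).choose v : ℕ) : ℝ) * ((n:ℝ) - 1 - (v:ℝ)) := hchR
        push_cast
        push_cast at hchR'
        field_simp
        linear_combination (-((v:ℝ)+2) * K) * hchR'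
      · -- case: s has neither t nor t-1 parts: everything vanishes
        have hzero : ∑ c ∈ MoranAux.compFinset n (v+2), ∑ p ∈ MoranAux.pairs (v+2),
            (if moranMove (MoranAux.msOf c) (c p.1) (c p.2) = s.parts
              then ((c p.1 : ℝ) * (c p.2 : ℝ)) else 0) = 0 := by
          apply Finset.sum_eq_zero
          intro c hc
          apply Finset.sum_eq_zero
          intro p hp
          rw [if_neg]
          intro hcond
          have hpp : p.1 ≠ p.2 := (Finset.mem_filter.1 hp).2
          have hcard := MoranAux.move_card (MoranAux.mem_msOf.2 ⟨p.1, rfl⟩)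
            (MoranAux.cj_mem_erase c hpp)
          rw [hcond, MoranAux.card_msOf] at hcard
          split_ifs at hcard <;> omega
        rw [hzero, if_neg hsA, zero_div, add_zero]
        have hmuA : moranMu n (v+2) s = 0 := by rw [moranMu, if_neg hsA]
        have hmuB : moranMu n (v+1) s = 0 := by rw [moranMu, if_neg (by omega)]
        rw [hmuA, hmuB, mul_zero, mul_zero, add_zero]
end

section
/- For the Moran partition chain on partitions of n, the single-part partition (n) is an absorbing state, and the time to absorption in (n) started from the partition (1,1,…,1) is distributed as Σ_{t=2}^n Y_{n,t}, where Y_{n,2}, …, Y_{n,n} are independent random variables with P(Y_{n,t} = k) = (1−λ_t) λ_t^{k−1} for integers k ≥ 1 (i.e., Y_{n,t} is Geometric with success probability 1−λ_t = t(t−1)/(n(n−1))). Equivalently, for every integer s ≥ 0, (δ_{(1,…,1)} P^s)((n)) = P(Σ_{t=2}^n Y_{n,t} ≤ s). -/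
open Matrix MeasureTheory ProbabilityTheory

/-- The partition `(1,1,…,1)` of `n`. -/
def onesPartition (n : ℕ) : Nat.Partition n where
  parts := Multiset.replicate n 1
  parts_pos := by
    intro i hi
    rw [Multiset.eq_of_mem_replicate hi]
    norm_num
  parts_sum := by simp

namespace Moran3

open Multiset

/-- real-valued `Σ_{a∈m} C(a,t)` -/
noncomputable def G (t : ℕ) (m : Multiset ℕ) : ℝ := (m.map (fun x => ((x.choose t : ℕ) : ℝ))).sum

noncomputable def partOf (n : ℕ) (m : Multiset ℕ) : Nat.Partition n :=
  if h : ∃ p : Nat.Partition n, p.parts = m then h.choose else Nat.Partition.indiscrete n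

lemma partOf_parts {n : ℕ} {m : Multiset ℕ} (h1 : ∀ i ∈ m, 0 < i) (h2 : m.sum = n) :
    (partOf n m).parts = m := by
  have h : ∃ p : Nat.Partition n, p.parts = m := ⟨⟨m, fun hi => h1 _ hi, h2⟩, rfl⟩
  rw [partOf, dif_pos h]; exact h.choose_spec

lemma erase_map_sum {m : Multiset ℕ} {a : ℕ} (ha : a ∈ m) (u : ℕ → ℝ) :
    ((m.erase a).map u).sum = (m.map u).sum - u a := by
  conv_rhs => rw [← Multiset.cons_erase ha]
  simp

lemma moranMove_pos {m : Multiset ℕ} (hpos : ∀ i ∈ m, 0 < i) {a b : ℕ}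
    (hb : b ∈ m.erase a) : ∀ i ∈ moranMove m a b, 0 < i := by
  intro i hi
  rw [moranMove] at hi
  rcases Multiset.mem_cons.1 hi with h | h
  · omega
  by_cases hb1 : b = 1
  · rw [if_pos hb1] at h
    exact hpos _ (Multiset.mem_of_mem_erase (Multiset.mem_of_mem_erase h))
  · rw [if_neg hb1] at h
    rcases Multiset.mem_cons.1 h with h | h
    · have : 0 < b := hpos _ (Multiset.mem_of_mem_erase hb)
      omega
    · exact hpos _ (Multiset.mem_of_mem_erase (Multiset.mem_of_mem_erase h))

lemma moranMove_sum {m : Multiset ℕ} (hpos : ∀ i ∈ m, 0 < i) {a b : ℕ}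
    (ha : a ∈ m) (hb : b ∈ m.erase a) : (moranMove m a b).sum = m.sum := by
  have hbpos : 0 < b := hpos _ (Multiset.mem_of_mem_erase hb)
  have e1 : m.sum = a + (m.erase a).sum := by
    conv_lhs => rw [← Multiset.cons_erase ha]
    simp
  have e2 : (m.erase a).sum = b + ((m.erase a).erase b).sum := by
    conv_lhs => rw [← Multiset.cons_erase hb]
    simp
  rw [moranMove]
  by_cases hb1 : b = 1
  · rw [if_pos hb1]; simp [Multiset.sum_cons]; omega
  · rw [if_neg hb1]; simp [Multiset.sum_cons]; omega

lemma G_cons (t x : ℕ) (s : Multiset ℕ) : G t (x ::ₘ s) = ((x.choose t : ℕ) : ℝ) + G t s := by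
  simp [G]

lemma G_move {t : ℕ} (ht : 2 ≤ t) {m : Multiset ℕ} (hpos : ∀ i ∈ m, 0 < i) {a b : ℕ}
    (ha : a ∈ m) (hb : b ∈ m.erase a) :
    G t (moranMove m a b)
      = G t m + ((a.choose (t-1) : ℕ) : ℝ) - (((b-1).choose (t-1) : ℕ) : ℝ) := by
  obtain ⟨t', rfl⟩ : ∃ t', t = t' + 2 := ⟨t - 2, by omega⟩
  have hbm : b ∈ m := Multiset.mem_of_mem_erase hb
  have hGm : G (t'+2) m = ((a.choose (t'+2) : ℕ) : ℝ) + ((b.choose (t'+2) : ℕ) : ℝ)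
      + G (t'+2) ((m.erase a).erase b) := by
    conv_lhs => rw [← Multiset.cons_erase ha, ← Multiset.cons_erase hb]
    rw [G_cons, G_cons]
    ring
  rw [moranMove]
  by_cases hb1 : b = 1
  · subst hb1
    rw [if_pos rfl, G_cons, hGm]
    have h1 : Nat.choose 1 (t'+2) = 0 := Nat.choose_eq_zero_of_lt (by omega)
    have h0 : Nat.choose 0 (t'+2-1) = 0 := Nat.choose_eq_zero_of_lt (by omega)
    have hp : (a+1).choose (t'+2) = a.choose (t'+1) + a.choose (t'+2) :=
      Nat.choose_succ_succ' a (t'+1)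
    simp only [h1, hp, show (1:ℕ)-1 = 0 from rfl, h0, show t'+2-1 = t'+1 from rfl]
    push_cast
    have h0' : Nat.choose 0 (1+t') = 0 := Nat.choose_eq_zero_of_lt (by omega)
    have h0'' : Nat.choose 0 (t'+1) = 0 := Nat.choose_eq_zero_of_lt (by omega)
    simp only [h0', h0'', Nat.cast_zero]
    ring
  · rw [if_neg hb1, G_cons, G_cons, hGm]
    obtain ⟨b', rfl⟩ : ∃ b', b = b' + 2 := ⟨b - 2, by have := hpos b hbm; omega⟩
    have hp : (a+1).choose (t'+2) = a.choose (t'+1) + a.choose (t'+2) :=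
      Nat.choose_succ_succ' a (t'+1)
    have hq : (b'+2).choose (t'+2) = (b'+1).choose (t'+1) + (b'+1).choose (t'+2) :=
      Nat.choose_succ_succ' (b'+1) (t'+1)
    simp only [hp, hq, show b' + 2 - 1 = b' + 1 from rfl]
    push_cast
    ring

/-- swap a Fintype sum with a multiset sum -/
lemma sum_msum_comm {ι : Type*} [Fintype ι] (m : Multiset ℕ) (f : ℕ → ι → ℝ) :
    ∑ i : ι, (m.map (fun a => f a i)).sum = (m.map (fun a => ∑ i : ι, f a i)).sum := by
  induction m using Multiset.induction with
  | empty => simp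
  | cons a s ih => simp [Finset.sum_add_distrib, ih]

lemma row_apply (n : ℕ) (r : Nat.Partition n) (f : Nat.Partition n → ℝ) :
    ∑ s : Nat.Partition n, moranP n r s * f s
      = ((r.parts.map (fun a => ((r.parts.erase a).map
            (fun b : ℕ => (a:ℝ)*(b:ℝ) * f (partOf n (moranMove r.parts a b)))).sum)).sum
        + (r.parts.map (fun a : ℕ => (a : ℝ) * ((a : ℝ) - 1))).sum * f r)
        / ((n : ℝ) * ((n : ℝ) - 1)) := by
  have key : ∀ s : Nat.Partition n, moranP n r s * f s
      = ((r.parts.map (fun a => ((r.parts.erase a).map (fun b : ℕ =>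
             (if moranMove r.parts a b = s.parts then ((a:ℝ)*(b:ℝ)) else 0) * f s)).sum)).sum
         + (if r = s then (r.parts.map (fun a : ℕ => (a:ℝ)*((a:ℝ)-1))).sum * f s else 0))
        / ((n:ℝ)*((n:ℝ)-1)) := by
    intro s
    rw [moranP, div_mul_eq_mul_div]
    congr 1
    rw [add_mul]
    congr 1
    · rw [← Multiset.sum_map_mul_right]
      apply congrArg
      apply Multiset.map_congr rfl
      intro a _
      rw [← Multiset.sum_map_mul_right]
    · split <;> simp [Multiset.map_map]
  simp only [key]
  rw [← Finset.sum_div]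
  congr 1
  rw [Finset.sum_add_distrib]
  congr 1
  · rw [sum_msum_comm]
    apply congrArg
    apply Multiset.map_congr rfl
    intro a ha
    rw [sum_msum_comm]
    apply congrArg
    apply Multiset.map_congr rfl
    intro b hb
    have hpos := moranMove_pos (fun i hi => r.parts_pos hi) hb
    have hsum : (moranMove r.parts a b).sum = n := by
      rw [moranMove_sum (fun i hi => r.parts_pos hi) ha hb, r.parts_sum]
    have hparts := partOf_parts hpos hsum
    have hiff : ∀ s : Nat.Partition n,
        (moranMove r.parts a b = s.parts) ↔ s = partOf n (moranMove r.parts a b) := by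
      intro s
      constructor
      · intro h; exact Nat.Partition.ext (by rw [hparts, ← h])
      · intro h; rw [h, hparts]
    have hite : ∀ s : Nat.Partition n,
        (if moranMove r.parts a b = s.parts then (a:ℝ)*(b:ℝ) else 0) * f s
        = if s = partOf n (moranMove r.parts a b) then (a:ℝ)*(b:ℝ)*f s else 0 := by
      intro s
      by_cases h : s = partOf n (moranMove r.parts a b)
      · rw [if_pos ((hiff s).2 h), if_pos h, mul_assoc]
      · rw [if_neg (fun hc => h ((hiff s).1 hc)), if_neg h, zero_mul]
    simp only [hite]
    rw [Finset.sum_ite_eq' Finset.univ (partOf n (moranMove r.parts a b))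
      (fun s => (a:ℝ)*(b:ℝ)*f s)]
    simp
  · rw [Finset.sum_ite_eq Finset.univ r
      (fun s => (r.parts.map (fun a : ℕ => (a:ℝ)*((a:ℝ)-1))).sum * f s)]
    simp

lemma choose_id (t : ℕ) (ht : 1 ≤ t) (a : ℕ) :
    (a:ℝ) * (a.choose (t-1) : ℕ) = (t:ℝ) * (a.choose t : ℕ) + ((t:ℝ)-1) * (a.choose (t-1) : ℕ) := by
  obtain ⟨t', rfl⟩ : ∃ t', t = t' + 1 := ⟨t - 1, by omega⟩
  simp only [Nat.add_sub_cancel]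
  rcases le_or_gt t' a with h | h
  · have := Nat.choose_succ_right_eq a t'
    have hc : ((a - t' : ℕ) : ℝ) = (a:ℝ) - (t':ℝ) := by
      push_cast [h]; ring
    have hr : ((a.choose (t'+1) : ℕ) : ℝ) * ((t':ℝ)+1) = ((a.choose t' : ℕ) : ℝ) * ((a:ℝ) - (t':ℝ)) := by
      rw [← hc]
      exact_mod_cast congrArg (Nat.cast : ℕ → ℝ) this
    push_cast
    nlinarith [hr]
  · have h1 : a.choose t' = 0 := Nat.choose_eq_zero_of_lt h
    have h2 : a.choose (t'+1) = 0 := Nat.choose_eq_zero_of_lt (by omega)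
    simp [h1, h2]

lemma choose_id' (t : ℕ) (ht : 1 ≤ t) {a : ℕ} (hapos : 0 < a) :
    (a:ℝ) * ((a-1).choose (t-1) : ℕ) = (t:ℝ) * (a.choose t : ℕ) := by
  obtain ⟨t', rfl⟩ : ∃ t', t = t' + 1 := ⟨t - 1, by omega⟩
  obtain ⟨a', rfl⟩ : ∃ a', a = a' + 1 := ⟨a - 1, by omega⟩
  simp only [Nat.add_sub_cancel]
  have := Nat.add_one_mul_choose_eq a' t'
  have hr : (a'+1) * a'.choose t' = (a'+1).choose (t'+1) * (t'+1) := this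
  have hr' : ((a':ℝ)+1) * (a'.choose t' : ℕ) = (((a'+1).choose (t'+1) : ℕ) : ℝ) * ((t':ℝ)+1) := by
    exact_mod_cast congrArg (Nat.cast : ℕ → ℝ) hr
  push_cast at hr' ⊢
  linarith

lemma msum_sub (m : Multiset ℕ) (u v : ℕ → ℝ) :
    (m.map (fun a => u a - v a)).sum = (m.map u).sum - (m.map v).sum := by
  induction m using Multiset.induction with
  | empty => simp
  | cons x s ih => simp only [Multiset.map_cons, Multiset.sum_cons, ih]; ring

lemma msum_add (m : Multiset ℕ) (u v : ℕ → ℝ) :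
    (m.map (fun a => u a + v a)).sum = (m.map u).sum + (m.map v).sum := by
  induction m using Multiset.induction with
  | empty => simp
  | cons x s ih => simp only [Multiset.map_cons, Multiset.sum_cons, ih]; ring

lemma msum_ext (m : Multiset ℕ) {u v : ℕ → ℝ} (h : ∀ a ∈ m, u a = v a) :
    (m.map u).sum = (m.map v).sum := by
  rw [Multiset.map_congr rfl h]

lemma msum_mul_left (m : Multiset ℕ) (c : ℝ) (u : ℕ → ℝ) :
    (m.map (fun a => c * u a)).sum = c * (m.map u).sum := by
  induction m using Multiset.induction with
  | empty => simp
  | cons x s ih => simp only [Multiset.map_cons, Multiset.sum_cons, ih]; ring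

lemma parts_cast_sum (n : ℕ) (r : Nat.Partition n) :
    (r.parts.map (fun x : ℕ => (x:ℝ))).sum = (n : ℝ) := by
  rw [← Nat.cast_multiset_sum, r.parts_sum]

lemma row_sum_one (n : ℕ) (hn : 2 ≤ n) (r : Nat.Partition n) :
    ∑ s : Nat.Partition n, moranP n r s = 1 := by
  have := row_apply n r (fun _ => 1)
  simp only [mul_one] at this
  rw [this]
  have hN : (r.parts.map (fun x : ℕ => (x:ℝ))).sum = (n : ℝ) := parts_cast_sum n r
  have inner : ∀ a ∈ r.parts,
      ((r.parts.erase a).map (fun b : ℕ => (a:ℝ)*(b:ℝ))).sum = (a:ℝ) * ((n:ℝ) - (a:ℝ)) := by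
    intro a ha
    rw [msum_mul_left (r.parts.erase a) (a:ℝ) (fun x : ℕ => (x:ℝ)), erase_map_sum ha (fun x : ℕ => (x:ℝ)), hN]
  rw [Multiset.map_congr rfl inner]
  have combine : (r.parts.map (fun a : ℕ => (a:ℝ) * ((n:ℝ) - (a:ℝ)))).sum
      + (r.parts.map (fun a : ℕ => (a:ℝ) * ((a:ℝ) - 1))).sum
      = (r.parts.map (fun a : ℕ => ((n:ℝ) - 1) * (a:ℝ))).sum := by
    rw [← msum_add r.parts (fun a : ℕ => (a:ℝ) * ((n:ℝ) - (a:ℝ))) (fun a : ℕ => (a:ℝ) * ((a:ℝ) - 1))]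
    apply msum_ext
    intro a _
    ring
  rw [combine, msum_mul_left, hN]
  have hne : (n:ℝ) * ((n:ℝ) - 1) ≠ 0 := by
    have : (2:ℝ) ≤ (n:ℝ) := by exact_mod_cast hn
    nlinarith
  linear_combination mul_inv_cancel₀ hne

noncomputable def g (n t : ℕ) (r : Nat.Partition n) : ℝ := G t r.parts

lemma row_g (n : ℕ) (hn : 2 ≤ n) (t : ℕ) (ht : 2 ≤ t) (r : Nat.Partition n) :
    ∑ s : Nat.Partition n, moranP n r s * g n t s
      = moranLam n t * g n t r
        + ((t:ℝ)-1) * ((n:ℝ)-(t:ℝ)+1) / ((n:ℝ)*((n:ℝ)-1)) * g n (t-1) r := by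
  have hpos : ∀ i ∈ r.parts, 0 < i := fun i hi => r.parts_pos hi
  have hN : (r.parts.map (fun x : ℕ => (x:ℝ))).sum = (n:ℝ) := parts_cast_sum n r
  have hne : (n:ℝ) * ((n:ℝ) - 1) ≠ 0 := by
    have : (2:ℝ) ≤ (n:ℝ) := by exact_mod_cast hn
    nlinarith
  set Gt := G t r.parts with hGt
  set Gs := G (t-1) r.parts with hGs
  have hgt : g n t r = Gt := rfl
  have hgs : g n (t-1) r = Gs := rfl
  have hGsum : (r.parts.map (fun a : ℕ => ((a.choose t : ℕ) : ℝ))).sum = Gt := rfl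
  have hGsum' : (r.parts.map (fun a : ℕ => ((a.choose (t-1) : ℕ) : ℝ))).sum = Gs := rfl
  have hT : (r.parts.map (fun b : ℕ => (b:ℝ) * (((b-1).choose (t-1) : ℕ) : ℝ))).sum
      = (t:ℝ) * Gt := by
    rw [hGt]
    unfold G
    rw [← msum_mul_left]
    exact msum_ext _ (fun a ha => choose_id' t (by omega) (hpos a ha))
  have hcell : ∀ a ∈ r.parts, ((r.parts.erase a).map
        (fun b : ℕ => (a:ℝ)*(b:ℝ) * g n t (partOf n (moranMove r.parts a b)))).sum
      = (a:ℝ) * ((Gt + ((a.choose (t-1):ℕ):ℝ)) * ((n:ℝ) - (a:ℝ))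
          - ((t:ℝ) * Gt - (a:ℝ) * (((a-1).choose (t-1) : ℕ):ℝ))) := by
    intro a ha
    have e : ∀ b ∈ r.parts.erase a, (a:ℝ)*(b:ℝ) * g n t (partOf n (moranMove r.parts a b))
        = (a:ℝ) * ((Gt + ((a.choose (t-1):ℕ):ℝ)) * (b:ℝ)
            - (b:ℝ) * (((b-1).choose (t-1):ℕ):ℝ)) := by
      intro b hb
      have hv : g n t (partOf n (moranMove r.parts a b))
          = Gt + ((a.choose (t-1):ℕ):ℝ) - (((b-1).choose (t-1):ℕ):ℝ) := by
        unfold g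
        rw [partOf_parts (moranMove_pos hpos hb)
          (by rw [moranMove_sum hpos ha hb, r.parts_sum])]
        exact G_move ht hpos ha hb
      rw [hv]; ring
    rw [msum_ext _ e, msum_mul_left]
    congr 1
    rw [msum_sub (r.parts.erase a) (fun b : ℕ => (Gt + ((a.choose (t-1):ℕ):ℝ)) * (b:ℝ))
          (fun b : ℕ => (b:ℝ) * (((b-1).choose (t-1):ℕ):ℝ)),
        msum_mul_left (r.parts.erase a) _ (fun x : ℕ => (x:ℝ)),
        erase_map_sum ha (fun x : ℕ => (x:ℝ)), hN,
        erase_map_sum ha (fun b : ℕ => (b:ℝ) * (((b-1).choose (t-1):ℕ):ℝ)), hT]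
  rw [row_apply n r (g n t), msum_ext r.parts hcell, hgt, hgs]
  have hc1 : (r.parts.map (fun a : ℕ => (a:ℝ) * ((Gt + ((a.choose (t-1):ℕ):ℝ)) * ((n:ℝ) - (a:ℝ))
          - ((t:ℝ) * Gt - (a:ℝ) * (((a-1).choose (t-1) : ℕ):ℝ))))).sum
        + (r.parts.map (fun a : ℕ => (a:ℝ) * ((a:ℝ) - 1))).sum * Gt
      = ((n:ℝ)*((n:ℝ)-1) - (t:ℝ)*((t:ℝ)-1)) * Gt + ((t:ℝ)-1)*((n:ℝ)-(t:ℝ)+1) * Gs := by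
    have hDG : (r.parts.map (fun a : ℕ => (a:ℝ) * ((a:ℝ) - 1))).sum * Gt
        = (r.parts.map (fun a : ℕ => Gt * ((a:ℝ) * ((a:ℝ) - 1)))).sum := by
      rw [msum_mul_left]; ring
    rw [hDG, ← msum_add]
    have e : ∀ a ∈ r.parts,
        ((a:ℝ) * ((Gt + ((a.choose (t-1):ℕ):ℝ)) * ((n:ℝ) - (a:ℝ))
          - ((t:ℝ) * Gt - (a:ℝ) * (((a-1).choose (t-1) : ℕ):ℝ)))
          + Gt * ((a:ℝ) * ((a:ℝ) - 1)))
        = (((n:ℝ)-1)*Gt - (t:ℝ)*Gt) * (a:ℝ)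
          + ((n:ℝ)-(t:ℝ)+1)*(t:ℝ) * ((a.choose t : ℕ):ℝ)
          + ((n:ℝ)-(t:ℝ)+1)*((t:ℝ)-1) * ((a.choose (t-1) : ℕ):ℝ) := by
      intro a ha
      have h2 := choose_id t (by omega) a
      have h3 := choose_id' t (by omega) (hpos a ha)
      linear_combination ((n:ℝ) - (a:ℝ) - ((t:ℝ)-1)) * h2 + (a:ℝ) * h3
    rw [msum_ext r.parts e, msum_add, msum_add, msum_mul_left, msum_mul_left, msum_mul_left,
      hN, hGsum, hGsum']
    ring
  rw [hc1, moranLam]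
  linear_combination Gt * mul_inv_cancel₀ hne

lemma g_one (n : ℕ) (r : Nat.Partition n) : g n 1 r = n := by
  unfold g G
  simp only [Nat.choose_one_right]
  exact parts_cast_sum n r

lemma g_top (n : ℕ) (hn : 2 ≤ n) (r : Nat.Partition n) :
    g n n r = if r = Nat.Partition.indiscrete n then 1 else 0 := by
  by_cases h : r = Nat.Partition.indiscrete n
  · subst h
    rw [if_pos rfl]
    unfold g G
    rw [Nat.Partition.indiscrete_parts (by omega : n ≠ 0)]
    simp
  · rw [if_neg h]
    have hlt : ∀ a ∈ r.parts, a < n := by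
      intro a ha
      by_contra h'
      push_neg at h'
      have h1 : a + (r.parts.erase a).sum = n := by
        rw [← Multiset.sum_cons, Multiset.cons_erase ha, r.parts_sum]
      have h2 : (r.parts.erase a).sum = 0 := by omega
      have h3 : r.parts.erase a = 0 := by
        rw [Multiset.eq_zero_iff_forall_notMem]
        intro x hx
        have := r.parts_pos (Multiset.mem_of_mem_erase hx)
        have := (Multiset.sum_eq_zero_iff.1 h2) x hx
        omega
      have h4 : r.parts = {a} := by
        rw [← Multiset.cons_erase ha, h3]
        rfl
      have h5 : a = n := by
        have := r.parts_sum
        rw [h4] at this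
        simpa using this
      exact h (Nat.Partition.ext (by
        rw [h4, h5, Nat.Partition.indiscrete_parts (by omega : n ≠ 0)]))
    unfold g G
    have e : ∀ a ∈ r.parts, ((a.choose n : ℕ) : ℝ) = 0 := by
      intro a ha
      rw [Nat.choose_eq_zero_of_lt (hlt a ha)]
      simp
    rw [msum_ext r.parts e]
    simp

lemma g_ones (n t : ℕ) (ht : 2 ≤ t) : g n t (onesPartition n) = 0 := by
  unfold g G
  have : (1:ℕ).choose t = 0 := Nat.choose_eq_zero_of_lt (by omega)
  simp [onesPartition, Multiset.map_replicate, this]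

noncomputable def mu (n : ℕ) (s : ℕ) : Nat.Partition n → ℝ :=
  (fun r : Nat.Partition n => if r = onesPartition n then (1 : ℝ) else 0)
    ᵥ* (Matrix.of (moranP n)) ^ s

lemma mu_zero (n : ℕ) : mu n 0 = fun r => if r = onesPartition n then (1:ℝ) else 0 := by
  simp [mu]

lemma mu_succ (n : ℕ) (s : ℕ) : mu n (s+1) = mu n s ᵥ* Matrix.of (moranP n) := by
  rw [mu, pow_succ, ← Matrix.vecMul_vecMul]; rfl

noncomputable def mm (n s t : ℕ) : ℝ := ∑ r : Nat.Partition n, mu n s r * g n t r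

lemma mm_succ_aux (n : ℕ) (s : ℕ) (f : Nat.Partition n → ℝ) :
    ∑ r : Nat.Partition n, mu n (s+1) r * f r
      = ∑ q : Nat.Partition n, mu n s q * ∑ r : Nat.Partition n, moranP n q r * f r := by
  rw [mu_succ]
  simp only [Matrix.vecMul, dotProduct, Finset.sum_mul, Matrix.of_apply]
  rw [Finset.sum_comm]
  congr 1; ext q
  rw [Finset.mul_sum]
  congr 1; ext r
  ring

lemma mass (n : ℕ) (hn : 2 ≤ n) (s : ℕ) : ∑ r : Nat.Partition n, mu n s r = 1 := by
  induction s with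
  | zero => simp [mu_zero]
  | succ s ih =>
      have := mm_succ_aux n s (fun _ => (1:ℝ))
      simp only [mul_one] at this
      rw [this]
      simp only [row_sum_one n hn, mul_one]
      exact ih

lemma mm_one (n : ℕ) (hn : 2 ≤ n) (s : ℕ) : mm n s 1 = n := by
  unfold mm
  simp only [g_one]
  rw [← Finset.sum_mul, mass n hn, one_mul]

lemma mm_zero (n t : ℕ) (ht : 2 ≤ t) : mm n 0 t = 0 := by
  unfold mm
  rw [mu_zero]
  simp [g_ones n t ht]

lemma mm_succ (n : ℕ) (hn : 2 ≤ n) (t : ℕ) (ht : 2 ≤ t) (s : ℕ) :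
    mm n (s+1) t = moranLam n t * mm n s t
      + ((t:ℝ)-1) * ((n:ℝ)-(t:ℝ)+1) / ((n:ℝ)*((n:ℝ)-1)) * mm n s (t-1) := by
  unfold mm
  rw [mm_succ_aux n s (g n t)]
  simp only [row_g n hn t ht]
  rw [Finset.mul_sum, Finset.mul_sum, ← Finset.sum_add_distrib]
  congr 1; ext q
  ring

lemma mm_top (n : ℕ) (hn : 2 ≤ n) (s : ℕ) :
    mm n s n = mu n s (Nat.Partition.indiscrete n) := by
  unfold mm
  simp only [g_top n hn]
  simp

end Moran3

/-- the single-part partition `(n)` is absorbing for the Moran partition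
chain, and the time to absorption in `(n)` started from `(1,…,1)` is distributed as
`Σ_{t=2}^n Y_{n,t}` where the `Y_{n,t}` are independent Geometric random variables with
success probabilities `1 − λ_t = t(t−1)/(n(n−1))` supported on `{1,2,…}`. -/
theorem stmt3 (n : ℕ) (hn : 2 ≤ n)
    {Ω : Type*} [MeasureSpace Ω] [IsProbabilityMeasure (ℙ : Measure Ω)]
    (Y : ℕ → Ω → ℕ) (hY_meas : ∀ t, Measurable (Y t))
    (hY_indep : iIndepFun Y ℙ)
    (hY_dist : ∀ t, 2 ≤ t → t ≤ n → ∀ k : ℕ, 1 ≤ k →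
      (ℙ {ω | Y t ω = k}).toReal = (1 - moranLam n t) * moranLam n t ^ (k - 1)) :
    (∀ s : Nat.Partition n,
      Matrix.of (moranP n) (Nat.Partition.indiscrete n) s
        = if s = Nat.Partition.indiscrete n then 1 else 0) ∧
    ∀ s : ℕ,
      (((fun r : Nat.Partition n => if r = onesPartition n then (1 : ℝ) else 0)
          ᵥ* Matrix.of (moranP n) ^ s) (Nat.Partition.indiscrete n))
        = (ℙ {ω | ∑ t ∈ Finset.Icc 2 n, Y t ω ≤ s}).toReal := by
  have h2R : (2:ℝ) ≤ (n:ℝ) := by exact_mod_cast hn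
  have hne : (n:ℝ) * ((n:ℝ)-1) ≠ 0 := by nlinarith
  constructor
  · -- absorbing
    intro s
    rw [Matrix.of_apply, moranP, Nat.Partition.indiscrete_parts (by omega : n ≠ 0)]
    have hz : ((({n} : Multiset ℕ).map (fun a =>
        ((({n} : Multiset ℕ).erase a).map (fun b =>
          if moranMove {n} a b = s.parts then ((a : ℝ) * (b : ℝ)) else 0)).sum)).sum) = 0 := by
      simp
    rw [hz, zero_add]
    have hd : ((({n} : Multiset ℕ).map (fun a => (a : ℝ) * ((a : ℝ) - 1))).sum)
        = (n:ℝ) * ((n:ℝ) - 1) := by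
      simp [Multiset.map_map]
    by_cases h : s = Nat.Partition.indiscrete n
    · rw [if_pos (h ▸ rfl), if_pos h, hd, div_self hne]
    · rw [if_neg (fun hc : Nat.Partition.indiscrete n = s => h hc.symm), if_neg h, zero_div]
  · -- distribution
    -- abbreviations
    set S : ℕ → Ω → ℕ := fun t ω => ∑ u ∈ Finset.Icc 2 t, Y u ω with hSdef
    set W : ℕ → ℕ → ℝ := fun t s => (ℙ {ω | S t ω ≤ s}).toReal with hWdef
    have hlam0 : ∀ t, 2 ≤ t → t ≤ n → 0 ≤ moranLam n t := by
      intro t ht htn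
      rw [moranLam]
      have h1 : (t:ℝ) * ((t:ℝ)-1) ≤ (n:ℝ) * ((n:ℝ)-1) := by
        have htR : (t:ℝ) ≤ (n:ℝ) := by exact_mod_cast htn
        have h2t : (2:ℝ) ≤ (t:ℝ) := by exact_mod_cast ht
        nlinarith
      have h2 : (0:ℝ) < (n:ℝ) * ((n:ℝ)-1) := by nlinarith
      have := div_le_one_of_le₀ h1 (le_of_lt h2)
      linarith
    have hlam1 : ∀ t, 2 ≤ t → t ≤ n → moranLam n t < 1 := by
      intro t ht htn
      rw [moranLam]
      have h2t : (2:ℝ) ≤ (t:ℝ) := by exact_mod_cast ht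
      have h2 : (0:ℝ) < (n:ℝ) * ((n:ℝ)-1) := by nlinarith
      have h3 : (0:ℝ) < (t:ℝ) * ((t:ℝ)-1) := by nlinarith
      have := div_pos h3 h2
      linarith
    -- Y t is a.s. at least 1
    have hY0 : ∀ t, 2 ≤ t → t ≤ n → ℙ {ω | Y t ω = 0} = 0 := by
      intro t ht htn
      have h0 := hlam0 t ht htn
      have h1 := hlam1 t ht htn
      have hdisj : Pairwise (Function.onFun Disjoint (fun k : ℕ => {ω | Y t ω = k+1})) := by
        intro k l hkl
        simp only [Function.onFun, Set.disjoint_left]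
        intro ω h1' h2'
        simp only [Set.mem_setOf_eq] at h1' h2'
        omega
      have hmeas : ∀ k : ℕ, MeasurableSet {ω | Y t ω = k+1} := by
        intro k
        exact (hY_meas t) (MeasurableSet.of_discrete (s := {x : ℕ | x = k+1}))
      have hU : ℙ (⋃ k : ℕ, {ω | Y t ω = k+1}) = 1 := by
        rw [measure_iUnion hdisj hmeas]
        have heach : ∀ k : ℕ, ℙ {ω | Y t ω = k+1} = ENNReal.ofReal ((1 - moranLam n t) * moranLam n t ^ k) := by
          intro k
          have hd := hY_dist t ht htn (k+1) (by omega)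
          simp only [Nat.add_sub_cancel] at hd
          rw [← hd, ENNReal.ofReal_toReal (measure_ne_top _ _)]
        simp only [heach]
        have hsummable : Summable (fun k : ℕ => (1 - moranLam n t) * moranLam n t ^ k) :=
          (summable_geometric_of_lt_one h0 h1).mul_left _
        rw [← ENNReal.ofReal_tsum_of_nonneg (fun k => by
          have h1' : (0:ℝ) ≤ 1 - moranLam n t := by linarith
          positivity) hsummable]
        have htsum : ∑' k : ℕ, (1 - moranLam n t) * moranLam n t ^ k = 1 := by
          rw [tsum_mul_left, tsum_geometric_of_lt_one h0 h1,
            mul_inv_cancel₀ (by linarith : (1:ℝ) - moranLam n t ≠ 0)]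
        rw [htsum, ENNReal.ofReal_one]
      have hsub : {ω | Y t ω = 0} ⊆ (⋃ k : ℕ, {ω | Y t ω = k+1})ᶜ := by
        intro ω hω
        simp only [Set.mem_setOf_eq] at hω
        simp only [Set.mem_compl_iff, Set.mem_iUnion, Set.mem_setOf_eq, not_exists]
        intro k hk
        omega
      apply measure_mono_null hsub
      rw [measure_compl (MeasurableSet.iUnion hmeas) (by simp), hU, measure_univ, tsub_self]
    have hSmeas : ∀ t, Measurable (S t) := by
      intro t
      exact Finset.measurable_sum _ (fun u _ => hY_meas u)
    -- convolution identity
    have Wconv : ∀ t, 2 ≤ t → t ≤ n → ∀ s : ℕ, W t s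
        = ∑ k ∈ Finset.Icc 1 s,
            ((1 - moranLam n t) * moranLam n t ^ (k-1)) * W (t-1) (s-k) := by
      intro t ht htn s
      have hSsplit : ∀ ω, S t ω = S (t-1) ω + Y t ω := by
        intro ω
        rw [hSdef]
        simp only
        rw [show t = (t-1)+1 by omega]
        rw [Finset.sum_Icc_succ_top (by omega : 2 ≤ (t-1)+1)]
        simp [show t-1+1-1 = t-1 from rfl]
      have hsplit : {ω | S t ω ≤ s}
          = ⋃ k ∈ Finset.range (s+1), ({ω | Y t ω = k} ∩ {ω | S (t-1) ω ≤ s - k}) := by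
        ext ω
        simp only [Set.mem_setOf_eq, Set.mem_iUnion, Set.mem_inter_iff, Finset.mem_range]
        constructor
        · intro h
          refine ⟨Y t ω, by have := hSsplit ω; omega, rfl, by have := hSsplit ω; omega⟩
        · rintro ⟨k, hk, hYk, hSk⟩
          have := hSsplit ω
          omega
      have hdisj : Set.PairwiseDisjoint (↑(Finset.range (s+1)) : Set ℕ)
          (fun k => ({ω | Y t ω = k} ∩ {ω | S (t-1) ω ≤ s - k})) := by
        intro k _ l _ hkl
        simp only [Function.onFun, Set.disjoint_left]
        intro ω h1' h2'
        exact hkl (h1'.1.symm.trans h2'.1)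
      have hmeask : ∀ k ∈ Finset.range (s+1),
          MeasurableSet ({ω | Y t ω = k} ∩ {ω | S (t-1) ω ≤ s - k}) := by
        intro k _
        exact ((hY_meas t) (MeasurableSet.of_discrete (s := {x : ℕ | x = k}))).inter
          ((hSmeas (t-1)) (MeasurableSet.of_discrete (s := {x : ℕ | x ≤ s - k})))
      have hindep : IndepFun (Y t) (S (t-1)) ℙ := by
        have hnotmem : t ∉ Finset.Icc 2 (t-1) := by
          simp only [Finset.mem_Icc]
          omega
        have h := hY_indep.indepFun_finsetSum_of_notMem hY_meas hnotmem
        have hfun : (∑ j ∈ Finset.Icc 2 (t-1), Y j) = S (t-1) := by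
          funext ω
          rw [hSdef]
          simp [Finset.sum_apply]
        rw [hfun] at h
        exact h.symm
      have hprod : ∀ k : ℕ, ℙ ({ω | Y t ω = k} ∩ {ω | S (t-1) ω ≤ s - k})
          = ℙ {ω | Y t ω = k} * ℙ {ω | S (t-1) ω ≤ s - k} := by
        intro k
        have := hindep.measure_inter_preimage_eq_mul {k} {x | x ≤ s - k}
          MeasurableSet.of_discrete MeasurableSet.of_discrete
        simpa [Set.preimage] using this
      have hmeasure : ℙ {ω | S t ω ≤ s}
          = ∑ k ∈ Finset.range (s+1), ℙ {ω | Y t ω = k} * ℙ {ω | S (t-1) ω ≤ s - k} := by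
        rw [hsplit, measure_biUnion_finset hdisj hmeask]
        exact Finset.sum_congr rfl (fun k _ => hprod k)
      have hWts : W t s = ∑ k ∈ Finset.range (s+1),
          (ℙ {ω | Y t ω = k}).toReal * W (t-1) (s-k) := by
        rw [hWdef]
        simp only
        rw [hmeasure, ENNReal.toReal_sum (fun k _ => ENNReal.mul_ne_top
          (measure_ne_top _ _) (measure_ne_top _ _))]
        exact Finset.sum_congr rfl (fun k _ => ENNReal.toReal_mul)
      rw [hWts]
      have hrange : Finset.range (s+1) = insert 0 (Finset.Icc 1 s) := by
        ext x
        simp only [Finset.mem_range, Finset.mem_insert, Finset.mem_Icc]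
        omega
      rw [hrange, Finset.sum_insert (by simp)]
      have hzero : (ℙ {ω | Y t ω = 0}).toReal * W (t-1) (s-0) = 0 := by
        rw [hY0 t ht htn]
        simp
      rw [hzero, zero_add]
      exact Finset.sum_congr rfl (fun k hk => by
        rw [hY_dist t ht htn k (Finset.mem_Icc.1 hk).1])
    have W1 : ∀ s : ℕ, W 1 s = 1 := by
      intro s
      rw [hWdef]
      simp only
      have : ∀ ω : Ω, S 1 ω = 0 := by
        intro ω
        rw [hSdef]
        simp [Finset.Icc_eq_empty (by omega : ¬ (2:ℕ) ≤ 1)]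
      have huniv : {ω | S 1 ω ≤ s} = Set.univ := by
        ext ω; simp [this ω]
      rw [huniv, measure_univ, ENNReal.toReal_one]
    have W0 : ∀ t, 2 ≤ t → t ≤ n → W t 0 = 0 := by
      intro t ht htn
      rw [hWdef]
      simp only
      have hsub : {ω | S t ω ≤ 0} ⊆ {ω | Y t ω = 0} := by
        intro ω hω
        simp only [Set.mem_setOf_eq] at hω ⊢
        have hle : Y t ω ≤ S t ω := by
          rw [hSdef]
          exact Finset.single_le_sum (f := fun u => Y u ω) (fun u _ => Nat.zero_le _)
            (Finset.mem_Icc.2 ⟨ht, le_refl t⟩)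
        omega
      rw [measure_mono_null hsub (hY0 t ht htn)]
      simp
    have Wrec : ∀ t, 2 ≤ t → t ≤ n → ∀ s : ℕ,
        W t (s+1) = moranLam n t * W t s + (1 - moranLam n t) * W (t-1) s := by
      intro t ht htn s
      rw [Wconv t ht htn (s+1), Wconv t ht htn s]
      have h1 : Finset.Icc 1 (s+1) = insert 1 (Finset.Icc 2 (s+1)) := by
        ext x
        simp only [Finset.mem_Icc, Finset.mem_insert]
        omega
      rw [h1, Finset.sum_insert (by simp)]
      have h2 : Finset.Icc 2 (s+1) = (Finset.Icc 1 s).map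
          ⟨fun x => x + 1, add_left_injective 1⟩ := by
        ext x
        simp only [Finset.mem_Icc, Finset.mem_map, Function.Embedding.coeFn_mk]
        constructor
        · intro h; exact ⟨x-1, by omega, by omega⟩
        · rintro ⟨a, ha, rfl⟩; omega
      rw [h2, Finset.sum_map]
      simp only [Function.Embedding.coeFn_mk]
      rw [Finset.mul_sum]
      have hfirst : (1 - moranLam n t) * moranLam n t ^ (1-1) * W (t-1) (s+1-1)
          = (1 - moranLam n t) * W (t-1) s := by
        simp
      rw [hfirst, add_comm]
      congr 1
      apply Finset.sum_congr rfl
      intro k hk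
      have hk1 : 1 ≤ k := (Finset.mem_Icc.1 hk).1
      have hpow : moranLam n t ^ (k+1-1) = moranLam n t * moranLam n t ^ (k-1) := by
        rw [show k+1-1 = (k-1)+1 by omega, pow_succ]
        ring
      rw [hpow, show s+1-(k+1) = s-k by omega]
      ring
    -- main induction
    have main : ∀ s : ℕ, ∀ t : ℕ, 1 ≤ t → t ≤ n → Moran3.mm n s t = (n.choose t : ℝ) * W t s := by
      intro s
      induction s with
      | zero =>
          intro t ht1 htn
          rcases eq_or_lt_of_le ht1 with h | h
          · rw [← h, Moran3.mm_one n hn 0, W1 0, Nat.choose_one_right]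
            ring
          · rw [Moran3.mm_zero n t (by omega), W0 t (by omega) htn]
            ring
      | succ s ih =>
          intro t ht1 htn
          rcases eq_or_lt_of_le ht1 with h | h
          · rw [← h, Moran3.mm_one n hn (s+1), W1 (s+1), Nat.choose_one_right]
            ring
          · have ht2 : 2 ≤ t := h
            rw [Moran3.mm_succ n hn t ht2 s, ih t ht1 htn, ih (t-1) (by omega) (by omega),
              Wrec t ht2 htn s]
            have hb : ((t:ℝ)-1) * ((n:ℝ)-(t:ℝ)+1) / ((n:ℝ)*((n:ℝ)-1)) * ((n.choose (t-1)) : ℝ)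
                = (1 - moranLam n t) * ((n.choose t) : ℝ) := by
              have hnat : n.choose t * t = n.choose (t-1) * (n - (t-1)) := by
                have := Nat.choose_succ_right_eq n (t-1)
                rwa [show t - 1 + 1 = t by omega] at this
              have hsub : ((n - (t-1) : ℕ) : ℝ) = (n:ℝ) - ((t:ℝ) - 1) := by
                have h1 : t - 1 ≤ n := by omega
                rw [Nat.cast_sub h1, Nat.cast_sub (by omega : 1 ≤ t)]
                simp
              have hcast : ((n.choose t : ℕ) : ℝ) * (t:ℝ)
                  = ((n.choose (t-1) : ℕ) : ℝ) * ((n:ℝ) - ((t:ℝ)-1)) := by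
                rw [← hsub]
                exact_mod_cast congrArg (Nat.cast : ℕ → ℝ) hnat
              have key : (((t:ℝ)-1) * ((n:ℝ)-(t:ℝ)+1)) * ((n.choose (t-1)):ℝ)
                  = ((t:ℝ)*((t:ℝ)-1)) * ((n.choose t):ℝ) := by
                linear_combination (1-(t:ℝ)) * hcast
              rw [moranLam, sub_sub_cancel, div_mul_eq_mul_div, div_mul_eq_mul_div, key]
            linear_combination (W (t-1) s) * hb
    intro s
    have hfin := main s n (by omega) (le_refl n)
    rw [Moran3.mm_top n hn s] at hfin
    have hnn : (n.choose n : ℝ) = 1 := by simp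
    rw [hnn, one_mul] at hfin
    exact hfin
end

section
/- For every 0 ≤ k ≤ r: π*_k(i) > 0 for all 0 ≤ i ≤ k, and Σ_{i=0}^k π*_k(i) = 1. In particular each π*_k is a probability distribution on {0,1,…,r} supported on {0,…,k}. -/
/-- `ρ_i = (1−γ_i)/(1−λ_i)`. -/
noncomputable def rho (γ lam : ℕ → ℝ) (i : ℕ) : ℝ := (1 - γ i) / (1 - lam i)

/-- The row vector `π*_k ∈ ℝ^{r+1}`: `π*_k(0) = ∏_{j=1}^k ρ_j`,
`π*_k(i) = (1−ρ_i) ∏_{1≤j≤k, j≠i} (1−γ_j−ρ_j(1−γ_i))/(γ_i−γ_j)` for `1 ≤ i ≤ k`,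
and `π*_k(i) = 0` for `i > k`. -/
noncomputable def pistar (γ lam : ℕ → ℝ) (k i : ℕ) : ℝ :=
  if i = 0 then ∏ j ∈ Finset.Icc 1 k, rho γ lam j
  else if i ≤ k then
    (1 - rho γ lam i) *
      ∏ j ∈ (Finset.Icc 1 k).erase i, ((1 - γ j - rho γ lam j * (1 - γ i)) / (γ i - γ j))
  else 0

set_option linter.unusedSectionVars false

section aux
variable (r : ℕ) (γ lam : ℕ → ℝ)
  (hlam0 : lam 0 = 1)
  (hinter : ∀ i : ℕ, 1 ≤ i → i ≤ r → lam (i - 1) > γ i ∧ γ i > lam i)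

include hlam0 hinter

lemma lam_anti : ∀ b : ℕ, b ≤ r → ∀ a : ℕ, a ≤ b → lam b ≤ lam a := by
  intro b
  induction b with
  | zero => intro _ a ha; interval_cases a; exact le_refl _
  | succ n ih =>
    intro hbr a ha
    rcases Nat.eq_or_lt_of_le ha with h | h
    · rw [h]
    · have h1 := hinter (n + 1) (by omega) hbr
      have h2 : lam ((n + 1) - 1) = lam n := by norm_num
      have h3 := ih (by omega) a (by omega)
      rw [h2] at h1
      linarith [h1.1, h1.2]

lemma gam_lt_one : ∀ i : ℕ, 1 ≤ i → i ≤ r → γ i < 1 := by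
  intro i h1 h2
  have h3 := (hinter i h1 h2).1
  have h4 := lam_anti r γ lam hlam0 hinter (i - 1) (by omega) 0 (by omega)
  rw [hlam0] at h4
  linarith

lemma lam_lt_gam : ∀ i : ℕ, 1 ≤ i → i ≤ r → lam i < γ i := fun i h1 h2 => (hinter i h1 h2).2

lemma rho_mem : ∀ i : ℕ, 1 ≤ i → i ≤ r → 0 < rho γ lam i ∧ rho γ lam i < 1 := by
  intro i h1 h2
  have hg1 := gam_lt_one r γ lam hlam0 hinter i h1 h2
  have hlg := lam_lt_gam r γ lam hlam0 hinter i h1 h2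
  unfold rho
  constructor
  · exact div_pos (by linarith) (by linarith)
  · rw [div_lt_one (by linarith)]; linarith

lemma gam_strict : ∀ i j : ℕ, 1 ≤ i → i < j → j ≤ r → γ j < lam i ∧ lam i < γ i := by
  intro i j h1 h2 h3
  have h4 := (hinter j (by omega) h3).1
  have h5 := lam_anti r γ lam hlam0 hinter (j - 1) (by omega) i (by omega)
  exact ⟨lt_of_lt_of_le h4 h5, lam_lt_gam r γ lam hlam0 hinter i h1 (by omega)⟩

lemma factor_pos : ∀ i j : ℕ, 1 ≤ i → i ≤ r → 1 ≤ j → j ≤ r → i ≠ j →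
    0 < (1 - γ j - rho γ lam j * (1 - γ i)) / (γ i - γ j) := by
  intro i j hi1 hir hj1 hjr hij
  have hgj1 := gam_lt_one r γ lam hlam0 hinter j hj1 hjr
  have hlgj := lam_lt_gam r γ lam hlam0 hinter j hj1 hjr
  have hnum : 1 - γ j - rho γ lam j * (1 - γ i)
      = ((1 - γ j) / (1 - lam j)) * (γ i - lam j) := by
    unfold rho
    have hl1 : (1 : ℝ) - lam j ≠ 0 := by linarith
    field_simp
    ring
  rw [hnum]
  rcases Nat.lt_or_ge i j with h | h
  · have hs := gam_strict r γ lam hlam0 hinter i j hi1 h hjr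
    have hlamij := lam_anti r γ lam hlam0 hinter j hjr i (by omega)
    apply div_pos
    · exact mul_pos (div_pos (by linarith) (by linarith)) (by linarith [hs.2])
    · linarith [hs.1, hs.2]
  · have h' : j < i := by omega
    have hs := gam_strict r γ lam hlam0 hinter j i hj1 h' hir
    rw [div_pos_iff]
    right
    constructor
    · apply mul_neg_of_pos_of_neg (div_pos (by linarith) (by linarith))
      linarith [hs.1]
    · linarith [hs.1, hs.2]

end aux

lemma termid (a b x ρ c : ℝ) (hxa : x ≠ a) (hxb : x ≠ b) (hab : a ≠ b) :
    ((1 - b - ρ * (1 - x)) / (x - b)) * (c / (x - a))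
      = (1 - b) * ((1 - ρ) * (c / (b - a))) / (x - b)
        + ((1 - b - ρ * (1 - a)) / (a - b)) * (c / (x - a)) := by
  have h1 : x - a ≠ 0 := sub_ne_zero.2 hxa
  have h2 : x - b ≠ 0 := sub_ne_zero.2 hxb
  have h3 : a - b ≠ 0 := sub_ne_zero.2 hab
  have h4 : b - a ≠ 0 := sub_ne_zero.2 (Ne.symm hab)
  field_simp
  ring

lemma Fsplit (b x ρ : ℝ) (hxb : x ≠ b) :
    (1 - b - ρ * (1 - x)) / (x - b) = ρ + (1 - ρ) * (1 - b) / (x - b) := by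
  have h2 : x - b ≠ 0 := sub_ne_zero.2 hxb
  field_simp
  ring

section aux2
variable (r : ℕ) (γ lam : ℕ → ℝ)
  (hlam0 : lam 0 = 1)
  (hinter : ∀ i : ℕ, 1 ≤ i → i ≤ r → lam (i - 1) > γ i ∧ γ i > lam i)

include hlam0 hinter

lemma key : ∀ k : ℕ, k ≤ r → ∀ x : ℝ, (∀ j ∈ Finset.Icc 1 k, x ≠ γ j) →
    ∏ j ∈ Finset.Icc 1 k, ((1 - γ j - rho γ lam j * (1 - x)) / (x - γ j))
      = (∏ j ∈ Finset.Icc 1 k, rho γ lam j)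
        + ∑ i ∈ Finset.Icc 1 k,
            (1 - γ i) * ((1 - rho γ lam i) *
              ∏ j ∈ (Finset.Icc 1 k).erase i,
                ((1 - γ j - rho γ lam j * (1 - γ i)) / (γ i - γ j))) / (x - γ i) := by
  intro k
  induction k with
  | zero => intro _ x _; simp
  | succ k ih =>
    intro hk x hx
    have hkr : k ≤ r := by omega
    have hnot : (k + 1) ∉ Finset.Icc 1 k := by simp
    have hins : Finset.Icc 1 (k + 1) = insert (k + 1) (Finset.Icc 1 k) := by
      ext m; simp [Finset.mem_Icc, Finset.mem_insert]; omega
    have hx' : ∀ j ∈ Finset.Icc 1 k, x ≠ γ j := fun j hj =>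
      hx j (by rw [hins]; exact Finset.mem_insert_of_mem hj)
    have hxg' : x ≠ γ (k + 1) := hx (k + 1) (by rw [hins]; exact Finset.mem_insert_self _ _)
    have hgne : ∀ j ∈ Finset.Icc 1 k, γ (k + 1) ≠ γ j := by
      intro j hj
      rw [Finset.mem_Icc] at hj
      have hs := gam_strict r γ lam hlam0 hinter j (k + 1) hj.1 (by omega) hk
      exact ne_of_lt (lt_trans hs.1 hs.2)
    have ihx := ih hkr x hx'
    have ihg := ih hkr (γ (k + 1)) hgne
    rw [hins, Finset.prod_insert hnot, Finset.prod_insert hnot, Finset.sum_insert hnot,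
      Finset.erase_insert hnot, ihx, ihg]
    calc
      (1 - γ (k + 1) - rho γ lam (k + 1) * (1 - x)) / (x - γ (k + 1)) *
          ((∏ j ∈ Finset.Icc 1 k, rho γ lam j)
            + ∑ i ∈ Finset.Icc 1 k,
                (1 - γ i) * ((1 - rho γ lam i) *
                  ∏ j ∈ (Finset.Icc 1 k).erase i,
                    ((1 - γ j - rho γ lam j * (1 - γ i)) / (γ i - γ j))) / (x - γ i))
        = (1 - γ (k + 1) - rho γ lam (k + 1) * (1 - x)) / (x - γ (k + 1)) *
              (∏ j ∈ Finset.Icc 1 k, rho γ lam j)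
          + ∑ i ∈ Finset.Icc 1 k,
              (1 - γ (k + 1) - rho γ lam (k + 1) * (1 - x)) / (x - γ (k + 1)) *
                ((1 - γ i) * ((1 - rho γ lam i) *
                  ∏ j ∈ (Finset.Icc 1 k).erase i,
                    ((1 - γ j - rho γ lam j * (1 - γ i)) / (γ i - γ j))) / (x - γ i)) := by
            rw [mul_add, Finset.mul_sum]
      _ = (rho γ lam (k + 1) * (∏ j ∈ Finset.Icc 1 k, rho γ lam j)
            + (1 - γ (k + 1)) * ((1 - rho γ lam (k + 1)) *
                (∏ j ∈ Finset.Icc 1 k, rho γ lam j)) / (x - γ (k + 1)))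
          + ∑ i ∈ Finset.Icc 1 k,
              ((1 - γ (k + 1)) * ((1 - rho γ lam (k + 1)) *
                  ((1 - γ i) * ((1 - rho γ lam i) *
                    ∏ j ∈ (Finset.Icc 1 k).erase i,
                      ((1 - γ j - rho γ lam j * (1 - γ i)) / (γ i - γ j))) / (γ (k + 1) - γ i)))
                / (x - γ (k + 1))
              + (1 - γ i) * ((1 - rho γ lam i) *
                  ∏ j ∈ (insert (k + 1) (Finset.Icc 1 k)).erase i,
                    ((1 - γ j - rho γ lam j * (1 - γ i)) / (γ i - γ j))) / (x - γ i)) := by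
            congr 1
            · rw [Fsplit _ _ _ hxg']; ring
            · apply Finset.sum_congr rfl
              intro i hi
              rw [Finset.mem_Icc] at hi
              have hine : (k + 1 : ℕ) ≠ i := by omega
              have hnotin : (k + 1) ∉ (Finset.Icc 1 k).erase i := by
                simp [Finset.mem_erase, Finset.mem_Icc]
              rw [Finset.erase_insert_of_ne hine, Finset.prod_insert hnotin,
                termid (γ i) (γ (k + 1)) x (rho γ lam (k + 1))
                  ((1 - γ i) * ((1 - rho γ lam i) *
                    ∏ j ∈ (Finset.Icc 1 k).erase i,
                      ((1 - γ j - rho γ lam j * (1 - γ i)) / (γ i - γ j))))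
                  (hx' i (Finset.mem_Icc.2 hi)) hxg'
                  (Ne.symm (hgne i (Finset.mem_Icc.2 hi)))]
              ring
      _ = rho γ lam (k + 1) * (∏ j ∈ Finset.Icc 1 k, rho γ lam j)
          + ((1 - γ (k + 1)) * ((1 - rho γ lam (k + 1)) *
                ((∏ j ∈ Finset.Icc 1 k, rho γ lam j)
                  + ∑ i ∈ Finset.Icc 1 k,
                      (1 - γ i) * ((1 - rho γ lam i) *
                        ∏ j ∈ (Finset.Icc 1 k).erase i,
                          ((1 - γ j - rho γ lam j * (1 - γ i)) / (γ i - γ j)))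
                        / (γ (k + 1) - γ i))) / (x - γ (k + 1))
            + ∑ i ∈ Finset.Icc 1 k,
                (1 - γ i) * ((1 - rho γ lam i) *
                  ∏ j ∈ (insert (k + 1) (Finset.Icc 1 k)).erase i,
                    ((1 - γ j - rho γ lam j * (1 - γ i)) / (γ i - γ j))) / (x - γ i)) := by
            rw [Finset.sum_add_distrib]
            have hexp : (1 - γ (k + 1)) * ((1 - rho γ lam (k + 1)) *
                ((∏ j ∈ Finset.Icc 1 k, rho γ lam j)
                  + ∑ i ∈ Finset.Icc 1 k,
                      (1 - γ i) * ((1 - rho γ lam i) *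
                        ∏ j ∈ (Finset.Icc 1 k).erase i,
                          ((1 - γ j - rho γ lam j * (1 - γ i)) / (γ i - γ j)))
                        / (γ (k + 1) - γ i))) / (x - γ (k + 1))
              = (1 - γ (k + 1)) * ((1 - rho γ lam (k + 1)) *
                  (∏ j ∈ Finset.Icc 1 k, rho γ lam j)) / (x - γ (k + 1))
                + ∑ i ∈ Finset.Icc 1 k,
                    (1 - γ (k + 1)) * ((1 - rho γ lam (k + 1)) *
                      ((1 - γ i) * ((1 - rho γ lam i) *
                        ∏ j ∈ (Finset.Icc 1 k).erase i,
                          ((1 - γ j - rho γ lam j * (1 - γ i)) / (γ i - γ j)))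
                        / (γ (k + 1) - γ i))) / (x - γ (k + 1)) := by
              rw [mul_add, mul_add, add_div, Finset.mul_sum, Finset.mul_sum, Finset.sum_div]
            rw [hexp]
            ring
end aux2

/-- for every `0 ≤ k ≤ r`, `π*_k(i) > 0` for all `0 ≤ i ≤ k` and
`Σ_{i=0}^k π*_k(i) = 1`; in particular `π*_k` is a probability distribution on
`{0,…,r}` supported on `{0,…,k}`. -/
theorem stmt7 (r : ℕ) (hr : 1 ≤ r) (γ lam : ℕ → ℝ)
    (hlam0 : lam 0 = 1)
    (hinter : ∀ i : ℕ, 1 ≤ i → i ≤ r → lam (i - 1) > γ i ∧ γ i > lam i)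
    (hlamr : 0 ≤ lam r) :
    ∀ k : ℕ, k ≤ r →
      (∀ i : ℕ, i ≤ k → 0 < pistar γ lam k i) ∧
      (∑ i ∈ Finset.range (k + 1), pistar γ lam k i = 1) ∧
      (∀ i : ℕ, k < i → pistar γ lam k i = 0) := by
  intro k hkr
  refine ⟨?_, ?_, ?_⟩
  · -- positivity
    intro i hik
    rcases Nat.eq_zero_or_pos i with h0 | h1
    · subst h0
      unfold pistar
      rw [if_pos rfl]
      apply Finset.prod_pos
      intro j hj
      rw [Finset.mem_Icc] at hj
      exact (rho_mem r γ lam hlam0 hinter j hj.1 (le_trans hj.2 hkr)).1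
    · have hi0 : i ≠ 0 := by omega
      unfold pistar
      rw [if_neg hi0, if_pos hik]
      apply mul_pos
      · have := (rho_mem r γ lam hlam0 hinter i h1 (le_trans hik hkr)).2
        linarith
      · apply Finset.prod_pos
        intro j hj
        rw [Finset.mem_erase, Finset.mem_Icc] at hj
        exact factor_pos r γ lam hlam0 hinter i j h1 (le_trans hik hkr) hj.2.1
          (le_trans hj.2.2 hkr) (Ne.symm hj.1)
  · -- sum = 1
    have h1x : ∀ j ∈ Finset.Icc 1 k, (1 : ℝ) ≠ γ j := by
      intro j hj
      rw [Finset.mem_Icc] at hj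
      exact ne_of_gt (gam_lt_one r γ lam hlam0 hinter j hj.1 (le_trans hj.2 hkr))
    have hkey := key r γ lam hlam0 hinter k hkr 1 h1x
    have hprod1 : ∏ j ∈ Finset.Icc 1 k,
        ((1 - γ j - rho γ lam j * (1 - 1)) / ((1 : ℝ) - γ j)) = 1 := by
      apply Finset.prod_eq_one
      intro j hj
      rw [Finset.mem_Icc] at hj
      have hg := gam_lt_one r γ lam hlam0 hinter j hj.1 (le_trans hj.2 hkr)
      have hne : (1 : ℝ) - γ j ≠ 0 := by linarith
      simp [div_self hne]
    rw [hprod1] at hkey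
    have hrange : Finset.range (k + 1) = insert 0 (Finset.Icc 1 k) := by
      ext m; simp [Finset.mem_range, Finset.mem_Icc, Finset.mem_insert]; omega
    rw [hrange, Finset.sum_insert (by simp)]
    have hp0 : pistar γ lam k 0 = ∏ j ∈ Finset.Icc 1 k, rho γ lam j := by
      unfold pistar; rw [if_pos rfl]
    have hsum : ∑ i ∈ Finset.Icc 1 k, pistar γ lam k i
        = ∑ i ∈ Finset.Icc 1 k,
            (1 - γ i) * ((1 - rho γ lam i) *
              ∏ j ∈ (Finset.Icc 1 k).erase i,
                ((1 - γ j - rho γ lam j * (1 - γ i)) / (γ i - γ j))) / (1 - γ i) := by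
      apply Finset.sum_congr rfl
      intro i hi
      rw [Finset.mem_Icc] at hi
      have hg := gam_lt_one r γ lam hlam0 hinter i hi.1 (le_trans hi.2 hkr)
      have hne : (1 : ℝ) - γ i ≠ 0 := by linarith
      unfold pistar
      rw [if_neg (by omega), if_pos hi.2, mul_div_cancel_left₀ _ hne]
    rw [hp0, hsum]
    linarith [hkey]
  · intro i hi
    unfold pistar
    rw [if_neg (by omega), if_neg (by omega)]
end

section
/- The matrix P* is a stochastic matrix: all its entries are nonnegative (indeed P*(0,0) = Σ_{i=0}^r λ_i − Σ_{i=1}^r γ_i > 0) and each row sums to 1; moreover π* satisfies the detailed balance equations π*(i) P*(i,j) = π*(j) P*(j,i) for all i, j, and consequently π* P* = π*, so π* is the stationary distribution of the ergodic star chain with transition matrix P*. -/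
section aux
open Polynomial

lemma coeff_card_sub_one (s : Finset ℕ) (v : ℕ → ℝ) (hv : Set.InjOn v s) (f : ℝ[X])
    (hdeg : f.degree < s.card) :
    f.coeff (s.card - 1) = ∑ i ∈ s, eval (v i) f * ∏ j ∈ s.erase i, (v i - v j)⁻¹ := by
  conv_lhs => rw [Lagrange.eq_interpolate hv hdeg]
  rw [Lagrange.interpolate_apply, Polynomial.finset_sum_coeff]
  refine Finset.sum_congr rfl fun i hi => ?_
  rw [Polynomial.coeff_C_mul]
  congr 1
  have hb : Lagrange.basis s v i
      = C (∏ j ∈ s.erase i, (v i - v j)⁻¹) * Lagrange.nodal (s.erase i) v := by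
    rw [Lagrange.basis, Lagrange.nodal, map_prod, ← Finset.prod_mul_distrib]
    exact Finset.prod_congr rfl fun j hj => rfl
  rw [hb, Polynomial.coeff_C_mul]
  have hd : (Lagrange.nodal (s.erase i) v).natDegree = s.card - 1 := by
    rw [Lagrange.natDegree_nodal, Finset.card_erase_of_mem hi]
  rw [← hd, (Lagrange.nodal_monic).coeff_natDegree, mul_one]

lemma dd_sum (s : Finset ℕ) (hs : s.Nonempty) (v w : ℕ → ℝ) (hv : Set.InjOn v s) :
    ∑ i ∈ s, (∏ j ∈ s, (v i - w j)) / (∏ j ∈ s.erase i, (v i - v j))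
      = ∑ i ∈ s, (v i - w i) := by
  set p : ℝ[X] := ∏ j ∈ s, (X - C (w j)) with hp
  set q : ℝ[X] := Lagrange.nodal s v with hq
  have hpm : p.Monic := monic_prod_of_monic _ _ fun _ _ => monic_X_sub_C _
  have hqm : q.Monic := Lagrange.nodal_monic
  have hpd : p.natDegree = s.card := by
    rw [hp, Polynomial.natDegree_prod_of_monic _ _ fun _ _ => monic_X_sub_C _]
    simp
  have hqd : q.natDegree = s.card := Lagrange.natDegree_nodal
  have hcpos : 0 < s.card := Finset.card_pos.mpr hs
  have hdeg : (p - q).degree < s.card := by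
    rcases eq_or_ne p q with h | h
    · rw [h, sub_self, Polynomial.degree_zero]
      exact_mod_cast WithBot.bot_lt_coe _
    · have hd : p.degree = q.degree := by
        rw [Polynomial.degree_eq_natDegree hpm.ne_zero,
            Polynomial.degree_eq_natDegree hqm.ne_zero, hpd, hqd]
      have hlc : p.leadingCoeff = q.leadingCoeff := by rw [hpm.leadingCoeff, hqm.leadingCoeff]
      have := Polynomial.degree_sub_lt hd hpm.ne_zero hlc
      rwa [Polynomial.degree_eq_natDegree hpm.ne_zero, hpd] at this
  have key := coeff_card_sub_one s v hv (p - q) hdeg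
  have hL : (p - q).coeff (s.card - 1) = ∑ i ∈ s, (v i - w i) := by
    rw [Polynomial.coeff_sub]
    have h1 : p.coeff (s.card - 1) = -∑ j ∈ s, w j := by
      have := Polynomial.prod_X_sub_C_nextCoeff (s := s) w
      rwa [Polynomial.nextCoeff, if_neg (by rw [hpd]; omega), hpd] at this
    have h2 : q.coeff (s.card - 1) = -∑ j ∈ s, v j := by
      have := Polynomial.prod_X_sub_C_nextCoeff (s := s) v
      rw [← Lagrange.nodal_eq] at this
      rwa [Polynomial.nextCoeff, if_neg (by rw [hqd]; omega), hqd] at this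
    rw [h1, h2, Finset.sum_sub_distrib]
    ring
  rw [hL] at key
  rw [key]
  refine Finset.sum_congr rfl fun i hi => ?_
  rw [div_eq_mul_inv, ← Finset.prod_inv_distrib]
  congr 1
  · rw [Polynomial.eval_sub, hq, Lagrange.eval_nodal_at_node hi, sub_zero, hp]
    simp [Polynomial.eval_prod]

end aux


open Matrix

/-- The star-chain transition matrix `P*`: for `i = 1,…,r`, `P*(i,0) = 1−γ_i`,
`P*(i,i) = γ_i`, other entries of row `i` zero; `P*(0,i) = (1−γ_i)π*(i)/π*(0)` for
`i ≥ 1`; `P*(0,0) = 1 − π*(0)^{−1} Σ_{i=1}^r (1−γ_i)π*(i)`. -/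
noncomputable def Pstar (r : ℕ) (γ lam : ℕ → ℝ) : Matrix (Fin (r + 1)) (Fin (r + 1)) ℝ :=
  Matrix.of fun i j =>
    if i.val = 0 then
      (if j.val = 0 then
        1 - (∑ l ∈ Finset.Icc 1 r, (1 - γ l) * pistar γ lam r l) / pistar γ lam r 0
      else (1 - γ j.val) * pistar γ lam r j.val / pistar γ lam r 0)
    else if j = i then γ i.val
    else if j.val = 0 then 1 - γ i.val
    else 0

/-- `P*` is a stochastic matrix (with
`P*(0,0) = Σ_{i=0}^r λ_i − Σ_{i=1}^r γ_i > 0`), `π*` satisfies detailed balance with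
respect to `P*`, and consequently `π* P* = π*`. -/
theorem stmt8 (r : ℕ) (hr : 1 ≤ r) (γ lam : ℕ → ℝ)
    (hlam0 : lam 0 = 1)
    (hinter : ∀ i : ℕ, 1 ≤ i → i ≤ r → lam (i - 1) > γ i ∧ γ i > lam i)
    (hlamr : 0 ≤ lam r) :
    (Pstar r γ lam 0 0 = (∑ i ∈ Finset.range (r + 1), lam i) - ∑ i ∈ Finset.Icc 1 r, γ i) ∧
    (0 < Pstar r γ lam 0 0) ∧
    (∀ i j, 0 ≤ Pstar r γ lam i j) ∧
    (∀ i, ∑ j, Pstar r γ lam i j = 1) ∧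
    (∀ i j : Fin (r + 1),
      pistar γ lam r i.val * Pstar r γ lam i j = pistar γ lam r j.val * Pstar r γ lam j i) ∧
    ((fun i : Fin (r + 1) => pistar γ lam r i.val) ᵥ* Pstar r γ lam
      = fun i : Fin (r + 1) => pistar γ lam r i.val) := by
  have hsne : (Finset.Icc 1 r).Nonempty := ⟨1, by simp [Finset.mem_Icc, hr]⟩
  -- lam is antitone on [0, r]
  have hanti : ∀ j, j ≤ r → ∀ i, i ≤ j → lam j ≤ lam i := by
    intro j
    induction j with
    | zero => intro _ i hi; rw [Nat.le_zero.mp hi]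
    | succ n ih =>
      intro hjr i hij
      rcases Nat.eq_or_lt_of_le hij with h | h
      · rw [h]
      · have h1 := hinter (n + 1) (by omega) hjr
        simp only [Nat.add_sub_cancel] at h1
        have h2 : lam (n + 1) ≤ lam n := by linarith [h1.1, h1.2]
        exact h2.trans (ih (by omega) i (by omega))
  have hgl : ∀ i ∈ Finset.Icc 1 r, lam i < γ i ∧ γ i < lam (i - 1) := by
    intro i hi
    rw [Finset.mem_Icc] at hi
    exact ⟨(hinter i hi.1 hi.2).2, (hinter i hi.1 hi.2).1⟩
  have hγ1 : ∀ i ∈ Finset.Icc 1 r, γ i < 1 := by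
    intro i hi
    have h1 := (hgl i hi).2
    rw [Finset.mem_Icc] at hi
    have h2 : lam (i - 1) ≤ lam 0 := hanti (i - 1) (by omega) 0 (by omega)
    rw [hlam0] at h2; linarith
  have hl0 : ∀ i ∈ Finset.Icc 1 r, 0 ≤ lam i := by
    intro i hi
    rw [Finset.mem_Icc] at hi
    have := hanti r le_rfl i hi.2
    linarith
  have hl1 : ∀ i ∈ Finset.Icc 1 r, lam i < 1 := by
    intro i hi
    linarith [(hgl i hi).1, hγ1 i hi]
  have hρpos : ∀ i ∈ Finset.Icc 1 r, 0 < rho γ lam i := by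
    intro i hi
    exact div_pos (by linarith [hγ1 i hi]) (by linarith [hl1 i hi])
  have hρ1 : ∀ i ∈ Finset.Icc 1 r, rho γ lam i < 1 := by
    intro i hi
    rw [rho, div_lt_one (by linarith [hl1 i hi])]
    linarith [(hgl i hi).1]
  have hγanti : ∀ i ∈ Finset.Icc 1 r, ∀ j ∈ Finset.Icc 1 r, i < j → γ j < γ i := by
    intro i hi j hj hij
    have h1 := (hgl j hj).2
    have h2 := (hgl i hi).1
    rw [Finset.mem_Icc] at hi hj
    have h3 : lam (j - 1) ≤ lam i := hanti (j - 1) (by omega) i (by omega)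
    linarith
  have hγinj : Set.InjOn γ ↑(Finset.Icc 1 r) := by
    intro a ha b hb hab
    rw [Finset.mem_coe] at ha hb
    by_contra hne
    rcases lt_or_gt_of_ne hne with h | h
    · exact (ne_of_gt (hγanti a ha b hb h)) hab
    · exact (ne_of_lt (hγanti b hb a ha h)) hab
  have hsign : ∀ i ∈ Finset.Icc 1 r, ∀ j ∈ Finset.Icc 1 r, j ≠ i →
      0 < (γ i - lam j) / (γ i - γ j) := by
    intro i hi j hj hne
    rcases lt_or_gt_of_ne hne with h | h
    · -- j < i : both negative
      have h1 := (hgl i hi).2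
      have h2 := hγanti j hj i hi h
      rw [Finset.mem_Icc] at hi hj
      have h3 : lam (i - 1) ≤ lam j := hanti (i - 1) (by omega) j (by omega)
      exact div_pos_of_neg_of_neg (by linarith) (by linarith)
    · -- i < j : both positive
      have h1 := (hgl i hi).1
      have h2 := hγanti i hi j hj h
      rw [Finset.mem_Icc] at hi hj
      have h3 : lam j ≤ lam i := hanti j hj.2 i (le_of_lt h)
      exact div_pos (by linarith) (by linarith)
  have hγne : ∀ i ∈ Finset.Icc 1 r, ∀ j ∈ Finset.Icc 1 r, j ≠ i → γ i - γ j ≠ 0 := by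
    intro i hi j hj hne
    rcases lt_or_gt_of_ne hne with h | h
    · have := hγanti j hj i hi h; linarith
    · have := hγanti i hi j hj h; linarith
  have hfac : ∀ i ∈ Finset.Icc 1 r, ∀ j ∈ Finset.Icc 1 r, j ≠ i →
      (1 - γ j - rho γ lam j * (1 - γ i)) / (γ i - γ j)
        = rho γ lam j * ((γ i - lam j) / (γ i - γ j)) := by
    intro i hi j hj hne
    have h1 : (1 : ℝ) - lam j ≠ 0 := by linarith [hl1 j hj]
    have h2 := hγne i hi j hj hne
    rw [rho]
    field_simp
    ring
  have hπ0 : pistar γ lam r 0 = ∏ j ∈ Finset.Icc 1 r, rho γ lam j := by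
    rw [pistar]; simp
  have hπ0pos : 0 < pistar γ lam r 0 := by
    rw [hπ0]; exact Finset.prod_pos hρpos
  have hπval : ∀ i ∈ Finset.Icc 1 r, pistar γ lam r i
      = (1 - rho γ lam i) * ∏ j ∈ (Finset.Icc 1 r).erase i,
          (rho γ lam j * ((γ i - lam j) / (γ i - γ j))) := by
    intro i hi
    rw [Finset.mem_Icc] at hi
    rw [pistar, if_neg (by omega), if_pos hi.2]
    exact congrArg (fun x => (1 - rho γ lam i) * x)
      (Finset.prod_congr rfl fun j hj => hfac i (Finset.mem_Icc.mpr hi) j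
        (Finset.mem_of_mem_erase hj) (Finset.ne_of_mem_erase hj))
  have hπpos : ∀ i ∈ Finset.Icc 1 r, 0 < pistar γ lam r i := by
    intro i hi
    rw [hπval i hi]
    refine mul_pos (by linarith [hρ1 i hi]) (Finset.prod_pos fun j hj => ?_)
    exact mul_pos (hρpos j (Finset.mem_of_mem_erase hj))
      (hsign i hi j (Finset.mem_of_mem_erase hj) (Finset.ne_of_mem_erase hj))
  have hkey : ∀ i ∈ Finset.Icc 1 r, (1 - γ i) * pistar γ lam r i
      = pistar γ lam r 0 * ((∏ j ∈ Finset.Icc 1 r, (γ i - lam j))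
          / (∏ j ∈ (Finset.Icc 1 r).erase i, (γ i - γ j))) := by
    intro i hi
    have e1 : (1 - γ i) * (1 - rho γ lam i) = rho γ lam i * (γ i - lam i) := by
      have h1 : (1 : ℝ) - lam i ≠ 0 := by linarith [hl1 i hi]
      rw [rho]; field_simp; ring
    rw [hπval i hi, Finset.prod_mul_distrib, Finset.prod_div_distrib, hπ0,
      ← Finset.mul_prod_erase _ (rho γ lam) hi,
      ← Finset.mul_prod_erase _ (fun j => γ i - lam j) hi]
    set P := ∏ j ∈ (Finset.Icc 1 r).erase i, rho γ lam j
    set N := ∏ j ∈ (Finset.Icc 1 r).erase i, (γ i - lam j)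
    set D := ∏ j ∈ (Finset.Icc 1 r).erase i, (γ i - γ j)
    linear_combination (P * (N / D)) * e1
  have hS : ∑ l ∈ Finset.Icc 1 r, (1 - γ l) * pistar γ lam r l
      = pistar γ lam r 0 * ∑ l ∈ Finset.Icc 1 r, (γ l - lam l) := by
    rw [← dd_sum (Finset.Icc 1 r) hsne γ lam hγinj, Finset.mul_sum]
    exact Finset.sum_congr rfl hkey
  have hIccR : ∀ g : ℕ → ℝ, ∑ l ∈ Finset.Icc 1 r, g l
      = ∑ i ∈ Finset.range r, g (i + 1) := by
    intro g
    rw [← Finset.Ico_add_one_right_eq_Icc, Finset.sum_Ico_eq_sum_range]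
    simp [add_comm]
  have hP00 : Pstar r γ lam 0 0 = 1 - ∑ l ∈ Finset.Icc 1 r, (γ l - lam l) := by
    have h0 : Pstar r γ lam 0 0
        = 1 - (∑ l ∈ Finset.Icc 1 r, (1 - γ l) * pistar γ lam r l) / pistar γ lam r 0 := by
      simp [Pstar]
    rw [h0, hS, mul_div_cancel_left₀ _ (ne_of_gt hπ0pos)]
  have hsum1 : ∑ i ∈ Finset.range (r + 1), lam i = lam 0 + ∑ i ∈ Finset.Icc 1 r, lam i := by
    rw [hIccR lam, Finset.sum_range_succ' lam r]
    ring
  have stmtA : Pstar r γ lam 0 0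
      = (∑ i ∈ Finset.range (r + 1), lam i) - ∑ i ∈ Finset.Icc 1 r, γ i := by
    rw [hP00, hsum1, hlam0, Finset.sum_sub_distrib]
    ring
  have stmtB : 0 < Pstar r γ lam 0 0 := by
    rw [stmtA]
    have h1 : ∑ l ∈ Finset.Icc 1 r, γ l < ∑ l ∈ Finset.Icc 1 r, lam (l - 1) := by
      refine Finset.sum_lt_sum_of_nonempty hsne fun i hi => ?_
      exact (hgl i hi).2
    have h2 : ∑ l ∈ Finset.Icc 1 r, lam (l - 1) = ∑ i ∈ Finset.range r, lam i := by
      rw [hIccR fun l => lam (l - 1)]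
      simp
    have h3 : ∑ i ∈ Finset.range (r + 1), lam i = ∑ i ∈ Finset.range r, lam i + lam r :=
      Finset.sum_range_succ lam r
    linarith
  have hmem : ∀ j : Fin (r + 1), j.val ≠ 0 → j.val ∈ Finset.Icc 1 r := by
    intro j hj
    rw [Finset.mem_Icc]
    have := j.isLt
    omega
  have hent00 : Pstar r γ lam 0 0
      = 1 - (∑ l ∈ Finset.Icc 1 r, (1 - γ l) * pistar γ lam r l) / pistar γ lam r 0 := by
    simp [Pstar]
  have hent0j : ∀ j : Fin (r + 1), j.val ≠ 0 →
      Pstar r γ lam 0 j = (1 - γ j.val) * pistar γ lam r j.val / pistar γ lam r 0 := by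
    intro j hj
    simp [Pstar, hj, show j ≠ 0 from fun h => hj (by rw [h]; rfl)]
  have hentij : ∀ i : Fin (r + 1), i.val ≠ 0 → ∀ j, Pstar r γ lam i j
      = (if j = i then γ i.val else 0) + (if j = 0 then 1 - γ i.val else 0) := by
    intro i hi j
    by_cases h1 : j = i
    · subst h1
      have h2 : ¬ j = 0 := fun h => hi (by rw [h]; rfl)
      simp [Pstar, hi, h2]
    · by_cases h2 : j = 0
      · subst h2
        simp [Pstar, hi, h1, show i ≠ 0 from fun h => hi (by rw [h]; rfl)]
      · have h3 : j.val ≠ 0 := fun h => h2 (Fin.ext h)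
        simp [Pstar, hi, h1, h2, h3, show i ≠ 0 from fun h => hi (by rw [h]; rfl)]
  have stmtC : ∀ i j, 0 ≤ Pstar r γ lam i j := by
    intro i j
    by_cases hi : i.val = 0
    · have hi' : i = 0 := Fin.ext hi
      subst hi'
      by_cases hj : j.val = 0
      · have hj' : j = 0 := Fin.ext hj
        subst hj'
        exact le_of_lt stmtB
      · rw [hent0j j hj]
        have hjm := hmem j hj
        exact div_nonneg (mul_nonneg (by linarith [hγ1 _ hjm])
          (le_of_lt (hπpos _ hjm))) (le_of_lt hπ0pos)
    · rw [hentij i hi j]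
      have him := hmem i hi
      have hγi1 := hγ1 _ him
      have hγi0 : 0 < γ i.val := by linarith [(hgl _ him).1, hl0 _ him]
      refine add_nonneg ?_ ?_ <;> split_ifs <;> linarith
  have hrowsum : ∀ i, ∑ j, Pstar r γ lam i j = 1 := by
    intro i
    by_cases hi : i.val = 0
    · have hi' : i = 0 := Fin.ext hi
      subst hi'
      rw [Fin.sum_univ_succ]
      have h1 : ∀ j : Fin r, Pstar r γ lam 0 j.succ
          = (1 - γ (j.val + 1)) * pistar γ lam r (j.val + 1) / pistar γ lam r 0 := by
        intro j
        have h2 := hent0j j.succ (by simp [Fin.val_succ])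
        rwa [Fin.val_succ] at h2
      rw [Finset.sum_congr rfl fun j _ => h1 j, hent00]
      have h3 : ∑ j : Fin r, (1 - γ (j.val + 1)) * pistar γ lam r (j.val + 1)
            / pistar γ lam r 0
          = ∑ l ∈ Finset.Icc 1 r, (1 - γ l) * pistar γ lam r l / pistar γ lam r 0 := by
        rw [Fin.sum_univ_eq_sum_range
          (fun k => (1 - γ (k + 1)) * pistar γ lam r (k + 1) / pistar γ lam r 0) r,
          hIccR (fun l => (1 - γ l) * pistar γ lam r l / pistar γ lam r 0)]
      rw [h3, ← Finset.sum_div]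
      ring
    · rw [Finset.sum_congr rfl fun j _ => hentij i hi j, Finset.sum_add_distrib,
        Finset.sum_ite_eq' Finset.univ i fun _ => γ i.val,
        Finset.sum_ite_eq' Finset.univ 0 fun _ => 1 - γ i.val]
      simp
  have hdb : ∀ i j : Fin (r + 1), pistar γ lam r i.val * Pstar r γ lam i j
      = pistar γ lam r j.val * Pstar r γ lam j i := by
    intro i j
    by_cases hi : i.val = 0
    · by_cases hj : j.val = 0
      · have h : i = j := Fin.ext (by rw [hi, hj])
        rw [h]
      · have hi' : i = 0 := Fin.ext hi
        subst hi'
        have hj0 : Pstar r γ lam j 0 = 1 - γ j.val := by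
          have h4 := hentij j hj 0
          have h5 : ¬((0 : Fin (r + 1)) = j) := fun h => hj (by rw [← h]; rfl)
          rw [h4, if_neg h5, if_pos rfl, zero_add]
        rw [hent0j j hj, hj0, Fin.val_zero]
        field_simp
    · by_cases hj : j.val = 0
      · have hj' : j = 0 := Fin.ext hj
        subst hj'
        have hi0 : Pstar r γ lam i 0 = 1 - γ i.val := by
          have h4 := hentij i hi 0
          have h5 : ¬((0 : Fin (r + 1)) = i) := fun h => hi (by rw [← h]; rfl)
          rw [h4, if_neg h5, if_pos rfl, zero_add]
        rw [hent0j i hi, hi0, Fin.val_zero]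
        field_simp
      · by_cases hij : j = i
        · rw [hij]
        · have hij' : ¬ i = j := fun h => hij h.symm
          have hj0 : ¬ j = 0 := fun h => hj (by rw [h]; rfl)
          have hi0 : ¬ i = 0 := fun h => hi (by rw [h]; rfl)
          rw [hentij i hi j, hentij j hj i, if_neg hij, if_neg hij', if_neg hj0, if_neg hi0]
          ring
  have hvec : (fun i : Fin (r + 1) => pistar γ lam r i.val) ᵥ* Pstar r γ lam
      = fun i : Fin (r + 1) => pistar γ lam r i.val := by
    funext j
    have h1 : ((fun i : Fin (r + 1) => pistar γ lam r i.val) ᵥ* Pstar r γ lam) j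
        = ∑ i, pistar γ lam r i.val * Pstar r γ lam i j := by
      simp [Matrix.vecMul, dotProduct]
    rw [h1, Finset.sum_congr rfl fun i _ => hdb i j, ← Finset.mul_sum, hrowsum j, mul_one]
  exact ⟨stmtA, stmtB, stmtC, hrowsum, hdb, hvec⟩
end

section
/- For each i = 1,…,r: the vector ν_i has nonnegative entries summing to 1 (it is a probability distribution on {0,…,r}); π*_i = ρ_i π*_{i−1} + (1−ρ_i) ν_i; and ν_i P* = γ_i ν_i + (1−γ_i) π*_{i−1}. -/
open Matrix

/-- The row vector `ν_i ∈ ℝ^{r+1}`: `ν_i(j) = (1−γ_i) π*_i(j) / (1−γ_i−ρ_i(1−γ_j))` for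
`1 ≤ j ≤ i`, and `ν_i(j) = 0` for `j = 0` and for `j > i`. -/
noncomputable def nuvec (γ lam : ℕ → ℝ) (i j : ℕ) : ℝ :=
  if 1 ≤ j ∧ j ≤ i then (1 - γ i) * pistar γ lam i j / (1 - γ i - rho γ lam i * (1 - γ j))
  else 0


open Polynomial Finset in
lemma lagrange_key (s : Finset ℕ) (v : ℕ → ℝ) (hv : Set.InjOn v s)
    (p : ℝ[X]) (hs : s.Nonempty) (hp : p.degree < s.card) :
    ∑ m ∈ s, p.eval (v m) / ∏ l ∈ s.erase m, (v m - v l) = p.coeff (s.card - 1) := by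
  have hbasis : ∀ m ∈ s, (Lagrange.basis s v m).coeff (s.card - 1)
      = (∏ l ∈ s.erase m, (v m - v l))⁻¹ := by
    intro m hm
    have h1 : Lagrange.basis s v m
        = Polynomial.C (Lagrange.nodalWeight s v m) * Lagrange.nodal (s.erase m) v := by
      rw [Lagrange.basis_eq_prod_sub_inv_mul_nodal_div hm,
        ← Lagrange.nodal_erase_eq_nodal_div hm]
    rw [h1, Polynomial.coeff_C_mul]
    have hdeg : (Lagrange.nodal (s.erase m) v).natDegree = s.card - 1 := by
      rw [Lagrange.natDegree_nodal, Finset.card_erase_of_mem hm]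
    have hmonic := Lagrange.nodal_monic (s := s.erase m) (v := v)
    rw [← hdeg, hmonic.coeff_natDegree, mul_one, Lagrange.nodalWeight,
      ← Finset.prod_inv_distrib]
  have hinterp := Lagrange.eq_interpolate hv hp
  conv_rhs => rw [hinterp]
  rw [Lagrange.interpolate_apply, Polynomial.finset_sum_coeff]
  refine Finset.sum_congr rfl fun m hm => ?_
  rw [Polynomial.coeff_C_mul, hbasis m hm, div_eq_mul_inv]

lemma key_sum (s t : Finset ℕ) (v u : ℕ → ℝ) (hv : Set.InjOn v s) (hs : s.Nonempty)
    (hc : t.card < s.card) :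
    ∑ m ∈ s, (∏ l ∈ t, (v m - u l)) / ∏ l ∈ s.erase m, (v m - v l)
      = if t.card + 1 = s.card then 1 else 0 := by
  have h1 : ∀ m ∈ s, (∏ l ∈ t, (v m - u l)) = (Lagrange.nodal t u).eval (v m) := by
    intro m _; rw [Lagrange.eval_nodal]
  have hdeg : (Lagrange.nodal t u).degree = t.card := Lagrange.degree_nodal
  have := lagrange_key s v hv (Lagrange.nodal t u) hs (by rw [hdeg]; exact_mod_cast hc)
  rw [Finset.sum_congr rfl (fun m hm => by rw [h1 m hm]), this]
  by_cases h : t.card + 1 = s.card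
  · rw [if_pos h]
    have : s.card - 1 = (Lagrange.nodal t u).natDegree := by
      rw [Lagrange.natDegree_nodal]; omega
    rw [this, (Lagrange.nodal_monic).coeff_natDegree]
  · rw [if_neg h]
    apply Polynomial.coeff_eq_zero_of_natDegree_lt
    rw [Lagrange.natDegree_nodal]; omega

section Ord
variable {r : ℕ} {γ lam : ℕ → ℝ} (hlam0 : lam 0 = 1)
  (hinter : ∀ i : ℕ, 1 ≤ i → i ≤ r → lam (i - 1) > γ i ∧ γ i > lam i)

include hinter in
lemma horder : ∀ j, 1 ≤ j → ∀ l, j ≤ l → l ≤ r →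
    lam l < γ j ∧ (j < l → γ l < lam j) := by
  intro j hj l hjl
  induction l, hjl using Nat.le_induction with
  | base => exact fun hlr => ⟨(hinter j hj hlr).2, fun h => absurd h (lt_irrefl j)⟩
  | succ l hl ih =>
    intro hlr
    have h12 := hinter (l+1) (by omega) hlr
    have h1 : lam l > γ (l+1) := by simpa using h12.1
    have h2 := h12.2
    have ih' := ih (by omega)
    rcases eq_or_lt_of_le hl with h | h
    · subst h
      exact ⟨lt_trans h2 (lt_trans h1 (hinter j hj (by omega)).2), fun _ => h1⟩
    · have hll : lam l < lam j :=
        lt_trans (hinter l (by omega) (by omega)).2 (ih'.2 h)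
      have h3 : γ (l+1) < lam j := lt_trans h1 hll
      exact ⟨lt_trans h2 (lt_trans h3 (hinter j hj (by omega)).2), fun _ => h3⟩

include hlam0 hinter in
lemma hlt1 : ∀ l, 1 ≤ l → l ≤ r → γ l < 1 ∧ lam l < 1 := by
  intro l hl
  induction l, hl using Nat.le_induction with
  | base =>
    intro h
    have := hinter 1 le_rfl h
    simp only [Nat.sub_self, hlam0] at this
    exact ⟨this.1, lt_trans this.2 this.1⟩
  | succ l hl ih =>
    intro hlr
    have h12 := hinter (l+1) (by omega) hlr
    have h1 : lam l > γ (l+1) := by simpa using h12.1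
    have := (ih (by omega)).2
    exact ⟨lt_trans h1 this, lt_trans h12.2 (lt_trans h1 this)⟩

include hinter in
/-- sign of `γ m - lam l`: positive iff `m ≤ l`. -/
lemma gml_pos : ∀ m l, 1 ≤ m → m ≤ r → 1 ≤ l → l ≤ r → (m ≤ l → 0 < γ m - lam l)
    ∧ (l < m → γ m - lam l < 0) := by
  intro m l h1 h2 h3 h4
  constructor
  · intro h; have := (horder hinter m h1 l h h4).1; linarith
  · intro h
    have h5 := (horder hinter l h3 m (le_of_lt h) h2).2 h
    have h6 := (hinter l h3 h4).2
    linarith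

include hinter in
lemma ggl_sign : ∀ m l, 1 ≤ m → m ≤ r → 1 ≤ l → l ≤ r → (m < l → 0 < γ m - γ l)
    ∧ (l < m → γ m - γ l < 0) := by
  intro m l h1 h2 h3 h4
  constructor
  · intro h
    have h5 := (horder hinter m h1 l (le_of_lt h) h4).2 h
    have h6 := (hinter m h1 h2).2
    linarith
  · intro h
    have h5 := (horder hinter l h3 m (le_of_lt h) h2).2 h
    have h6 := (hinter l h3 h4).2
    linarith

include hinter in
/-- ratio `(γ m - lam l)/(γ m - γ l)` is positive for `l ≠ m`. -/
lemma ratio_pos : ∀ m l, 1 ≤ m → m ≤ r → 1 ≤ l → l ≤ r → l ≠ m →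
    0 < (γ m - lam l) / (γ m - γ l) := by
  intro m l h1 h2 h3 h4 h5
  rcases lt_or_gt_of_ne h5 with h | h
  · exact div_pos_of_neg_of_neg ((gml_pos hinter m l h1 h2 h3 h4).2 h)
      ((ggl_sign hinter m l h1 h2 h3 h4).2 h)
  · exact div_pos ((gml_pos hinter m l h1 h2 h3 h4).1 (le_of_lt h))
      ((ggl_sign hinter m l h1 h2 h3 h4).1 h)

include hlam0 hinter in
lemma rho_pos : ∀ l, 1 ≤ l → l ≤ r → 0 < rho γ lam l ∧ rho γ lam l < 1 ∧
    rho γ lam l * (1 - lam l) = 1 - γ l := by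
  intro l h1 h2
  have hg := (hlt1 hlam0 hinter l h1 h2).1
  have hl := (hlt1 hlam0 hinter l h1 h2).2
  have hlg := (hinter l h1 h2).2
  refine ⟨div_pos (by linarith) (by linarith), ?_, ?_⟩
  · rw [rho, div_lt_one (by linarith)]; linarith
  · rw [rho, div_mul_cancel₀]; intro h; linarith [h]

include hlam0 hinter in
lemma hnum : ∀ l m, 1 ≤ l → l ≤ r → 1 - γ l - rho γ lam l * (1 - γ m)
    = rho γ lam l * (γ m - lam l) := by
  intro l m h1 h2
  have := (rho_pos hlam0 hinter l h1 h2).2.2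
  ring_nf
  linarith [this]

include hlam0 hinter in
lemma pistar_form : ∀ k j, 1 ≤ j → j ≤ k → k ≤ r →
    pistar γ lam k j = (1 - rho γ lam j) *
      ∏ l ∈ (Finset.Icc 1 k).erase j, (rho γ lam l * ((γ j - lam l) / (γ j - γ l))) := by
  intro k j h1 h2 h3
  rw [pistar, if_neg (by omega), if_pos h2]
  congr 1
  refine Finset.prod_congr rfl fun l hl => ?_
  rw [Finset.mem_erase, Finset.mem_Icc] at hl
  rw [hnum hlam0 hinter l j hl.2.1 (le_trans hl.2.2 h3), mul_div_assoc]

include hlam0 hinter in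
lemma pistar_pos : ∀ k j, j ≤ k → k ≤ r → 0 < pistar γ lam k j := by
  intro k j h2 h3
  rcases Nat.eq_zero_or_pos j with h | h
  · subst h
    rw [pistar, if_pos rfl]
    exact Finset.prod_pos fun l hl => by
      rw [Finset.mem_Icc] at hl
      exact (rho_pos hlam0 hinter l hl.1 (le_trans hl.2 h3)).1
  · rw [pistar_form hlam0 hinter k j h h2 h3]
    have hj1 := (rho_pos hlam0 hinter j h (le_trans h2 h3)).2.1
    apply mul_pos (by linarith)
    refine Finset.prod_pos fun l hl => ?_
    rw [Finset.mem_erase, Finset.mem_Icc] at hl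
    exact mul_pos (rho_pos hlam0 hinter l hl.2.1 (le_trans hl.2.2 h3)).1
      (ratio_pos hinter j l h (le_trans h2 h3) hl.2.1 (le_trans hl.2.2 h3) hl.1)

lemma pistar_zero {γ lam : ℕ → ℝ} : ∀ k j, k < j → pistar γ lam k j = 0 := by
  intro k j h
  rw [pistar, if_neg (by omega), if_neg (by omega)]

lemma Icc_erase_split : ∀ n j, 1 ≤ j → j ≤ n →
    (Finset.Icc 1 (n+1)).erase j = insert (n+1) ((Finset.Icc 1 n).erase j) := by
  intro n j h1 h2
  ext x
  simp only [Finset.mem_erase, Finset.mem_Icc, Finset.mem_insert]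
  omega

lemma pistar_succ0 {γ lam : ℕ → ℝ} : ∀ n, pistar γ lam (n+1) 0
    = rho γ lam (n+1) * pistar γ lam n 0 := by
  intro n
  rw [pistar, pistar, if_pos rfl, if_pos rfl,
    Finset.prod_Icc_succ_top (by omega : 1 ≤ n + 1), mul_comm]

include hlam0 hinter in
lemma pistar_succ : ∀ n j, 1 ≤ j → j ≤ n → n + 1 ≤ r →
    pistar γ lam (n+1) j = pistar γ lam n j *
      (rho γ lam (n+1) * ((γ j - lam (n+1)) / (γ j - γ (n+1)))) := by
  intro n j h1 h2 h3
  rw [pistar_form hlam0 hinter (n+1) j h1 (by omega) h3,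
    pistar_form hlam0 hinter n j h1 h2 (by omega),
    Icc_erase_split n j h1 h2,
    Finset.prod_insert (by simp only [Finset.mem_erase, Finset.mem_Icc]; omega)]
  ring

include hlam0 hinter in
lemma nuvec_form : ∀ i j, 1 ≤ j → j ≤ i → i ≤ r →
    nuvec γ lam i j = (1 - γ i) * pistar γ lam i j / (rho γ lam i * (γ j - lam i)) := by
  intro i j h1 h2 h3
  rw [nuvec, if_pos ⟨h1, h2⟩, hnum hlam0 hinter i j (le_trans h1 h2) h3]

include hlam0 hinter in
lemma hkey : ∀ l, 1 ≤ l → l ≤ r →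
    rho γ lam l * (γ l - lam l) = (1 - rho γ lam l) * (1 - γ l) := by
  intro l h1 h2
  have := (rho_pos hlam0 hinter l h1 h2).2.2
  ring_nf
  ring_nf at this
  linarith [this]

include hlam0 hinter in
lemma nuvec_self : ∀ i, 1 ≤ i → i ≤ r →
    nuvec γ lam i i = pistar γ lam i i / (1 - rho γ lam i) := by
  intro i h1 h2
  have hg := (hlt1 hlam0 hinter i h1 h2).1
  have hρ := (rho_pos hlam0 hinter i h1 h2).2.1
  have hk := hkey hlam0 hinter i h1 h2
  rw [nuvec_form hlam0 hinter i i h1 le_rfl h2, hk]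
  rw [div_eq_div_iff (mul_pos (by linarith : (0:ℝ) < 1 - rho γ lam i) (by linarith : (0:ℝ) < 1 - γ i)).ne' (by linarith : (1:ℝ) - rho γ lam i ≠ 0)]
  ring

include hlam0 hinter in
lemma nuvec_eq : ∀ n j, 1 ≤ j → j ≤ n → n + 1 ≤ r →
    nuvec γ lam (n+1) j = (1 - γ (n+1)) * pistar γ lam n j / (γ j - γ (n+1)) := by
  intro n j h1 h2 h3
  have hρ := (rho_pos hlam0 hinter (n+1) (by omega) h3).1
  have hgl := (gml_pos hinter j (n+1) h1 (by omega) (by omega) h3).1 (by omega)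
  have hgg := (ggl_sign hinter j (n+1) h1 (by omega) (by omega) h3).1 (by omega)
  rw [nuvec_form hlam0 hinter (n+1) j h1 (by omega) h3,
    pistar_succ hlam0 hinter n j h1 h2 h3]
  field_simp

lemma aux_field (A B Cc R L a b g gI sm sI : ℝ)
    (hpr : a * A = b * R) (hpl : sm * B = sI * L) (hk : a * sm = (1-a)*(1-g))
    (hb : b ≠ 0) (hC : Cc ≠ 0) (hsI : sI ≠ 0) (hg : 1 - g ≠ 0) :
    (1-gI) * ((1-a) * (A * (B/Cc))) / (b * sI) = ((1-gI)*R) * (L/((1-g)*Cc)) := by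
  calc (1-gI) * ((1-a) * (A * (B/Cc))) / (b*sI)
      = ((1-a)*(1-g)) * ((1-gI) * (A*B) / (((1-g)*Cc) * (b*sI))) := by
        field_simp
    _ = (a*sm) * ((1-gI) * (A*B) / (((1-g)*Cc) * (b*sI))) := by rw [← hk]
    _ = ((a*A)*(sm*B)) * ((1-gI) / (((1-g)*Cc) * (b*sI))) := by ring
    _ = ((b*R)*(sI*L)) * ((1-gI) / (((1-g)*Cc) * (b*sI))) := by rw [hpr, hpl]
    _ = ((1-gI)*R) * (L/((1-g)*Cc)) := by field_simp


include hlam0 hinter in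
lemma term_eq : ∀ n m, 1 ≤ m → m ≤ n+1 → n+1 ≤ r →
    nuvec γ lam (n+1) m = (1 - γ (n+1)) * (∏ l ∈ Finset.Icc 1 n, rho γ lam l) *
      ((∏ l ∈ Finset.Icc 1 n, (γ m - lam l)) /
        ((1 - γ m) * ∏ l ∈ (Finset.Icc 1 (n+1)).erase m, (γ m - γ l))) := by
  intro n m h1 h2 h3
  have hmr : m ≤ r := by omega
  have hmI : m ∈ Finset.Icc 1 (n+1) := by simp only [Finset.mem_Icc]; omega
  have hpr : rho γ lam m * ∏ l ∈ (Finset.Icc 1 (n+1)).erase m, rho γ lam l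
      = rho γ lam (n+1) * ∏ l ∈ Finset.Icc 1 n, rho γ lam l := by
    rw [Finset.mul_prod_erase _ _ hmI, Finset.prod_Icc_succ_top (by omega : 1 ≤ n+1), mul_comm]
  have hpl : (γ m - lam m) * ∏ l ∈ (Finset.Icc 1 (n+1)).erase m, (γ m - lam l)
      = (γ m - lam (n+1)) * ∏ l ∈ Finset.Icc 1 n, (γ m - lam l) := by
    rw [Finset.mul_prod_erase _ (fun l => γ m - lam l) hmI,
      Finset.prod_Icc_succ_top (by omega : 1 ≤ n+1), mul_comm]
  have hk := hkey hlam0 hinter m h1 hmr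
  have hρI : rho γ lam (n+1) ≠ 0 := ne_of_gt (rho_pos hlam0 hinter (n+1) (by omega) h3).1
  have hρm : rho γ lam m ≠ 0 := ne_of_gt (rho_pos hlam0 hinter m h1 hmr).1
  have hsubI : γ m - lam (n+1) ≠ 0 :=
    ne_of_gt ((gml_pos hinter m (n+1) h1 hmr (by omega) h3).1 h2)
  have hsubm : γ m - lam m ≠ 0 := ne_of_gt ((gml_pos hinter m m h1 hmr h1 hmr).1 le_rfl)
  have h1γm : (1:ℝ) - γ m ≠ 0 := ne_of_gt (by linarith [(hlt1 hlam0 hinter m h1 hmr).1])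
  have hPE : (∏ l ∈ (Finset.Icc 1 (n+1)).erase m, (γ m - γ l)) ≠ 0 := by
    rw [Finset.prod_ne_zero_iff]
    intro l hl
    rw [Finset.mem_erase, Finset.mem_Icc] at hl
    rcases lt_or_gt_of_ne hl.1 with h | h
    · exact ne_of_lt ((ggl_sign hinter m l h1 hmr hl.2.1 (by omega)).2 h)
    · exact ne_of_gt ((ggl_sign hinter m l h1 hmr hl.2.1 (by omega)).1 h)
  rw [nuvec_form hlam0 hinter (n+1) m h1 h2 h3,
    pistar_form hlam0 hinter (n+1) m h1 h2 h3,
    Finset.prod_mul_distrib, Finset.prod_div_distrib]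
  exact aux_field _ _ _ _ _ _ _ _ _ _ _ hpr hpl hk hρI hPE hsubI h1γm


include hlam0 hinter in
lemma gamma_inj : ∀ {k}, k ≤ r → Set.InjOn γ (Finset.Icc 1 k) := by
  intro k hk m hm l hl hml
  simp only [Finset.coe_Icc, Set.mem_Icc] at hm hl
  by_contra hne
  rcases lt_or_gt_of_ne hne with h | h
  · have := (ggl_sign hinter m l hm.1 (by omega) hl.1 (by omega)).1 h; linarith [hml]
  · have := (ggl_sign hinter m l hm.1 (by omega) hl.1 (by omega)).2 h; linarith [hml]

include hlam0 hinter in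
lemma sum1 : ∀ n, n + 1 ≤ r →
    ∑ m ∈ Finset.Icc 1 (n+1), (1 - γ m) * nuvec γ lam (n+1) m
      = (1 - γ (n+1)) * ∏ l ∈ Finset.Icc 1 n, rho γ lam l := by
  intro n h3
  have hterm : ∀ m ∈ Finset.Icc 1 (n+1), (1 - γ m) * nuvec γ lam (n+1) m
      = (1 - γ (n+1)) * (∏ l ∈ Finset.Icc 1 n, rho γ lam l) *
        ((∏ l ∈ Finset.Icc 1 n, (γ m - lam l)) /
          (∏ l ∈ (Finset.Icc 1 (n+1)).erase m, (γ m - γ l))) := by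
    intro m hm
    rw [Finset.mem_Icc] at hm
    have h1γm : (1:ℝ) - γ m ≠ 0 :=
      ne_of_gt (by linarith [(hlt1 hlam0 hinter m hm.1 (by omega)).1])
    have hPE : (∏ l ∈ (Finset.Icc 1 (n+1)).erase m, (γ m - γ l)) ≠ 0 := by
      rw [Finset.prod_ne_zero_iff]
      intro l hl
      rw [Finset.mem_erase, Finset.mem_Icc] at hl
      rcases lt_or_gt_of_ne hl.1 with h | h
      · exact ne_of_lt ((ggl_sign hinter m l hm.1 (by omega) hl.2.1 (by omega)).2 h)
      · exact ne_of_gt ((ggl_sign hinter m l hm.1 (by omega) hl.2.1 (by omega)).1 h)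
    rw [term_eq hlam0 hinter n m hm.1 hm.2 h3]
    field_simp
  rw [Finset.sum_congr rfl hterm, ← Finset.mul_sum]
  have hkey := key_sum (Finset.Icc 1 (n+1)) (Finset.Icc 1 n) γ lam
    (gamma_inj hlam0 hinter h3) ⟨1, by simp⟩
    (by simp [Nat.card_Icc])
  simp only [Nat.card_Icc, Nat.add_sub_cancel] at hkey
  rw [if_pos trivial] at hkey
  rw [hkey, mul_one]

include hlam0 hinter in
lemma sum2 : ∀ n, n + 1 ≤ r →
    ∑ m ∈ Finset.Icc 1 (n+1), nuvec γ lam (n+1) m = 1 := by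
  intro n h3
  set w : ℕ → ℝ := fun l => if l = 0 then 1 else γ l with hw
  have hw0 : w 0 = 1 := by simp only [hw, if_pos rfl]
  have hwval : ∀ x : ℕ, x ≠ 0 → w x = γ x := fun x hx => by simp only [hw, if_neg hx]
  have hwinj : Set.InjOn w (Finset.Icc 0 (n+1)) := by
    intro m hm l hl hml
    simp only [Finset.coe_Icc, Set.mem_Icc] at hm hl
    rcases Nat.eq_zero_or_pos m with h0 | h0 <;> rcases Nat.eq_zero_or_pos l with h1 | h1
    · omega
    · exfalso
      subst h0
      rw [hw0, hwval l (by omega)] at hml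
      have := (hlt1 hlam0 hinter l h1 (by omega)).1
      linarith
    · exfalso
      subst h1
      rw [hw0, hwval m (by omega)] at hml
      have := (hlt1 hlam0 hinter m h0 (by omega)).1
      linarith
    · rw [hwval m (by omega), hwval l (by omega)] at hml
      exact gamma_inj hlam0 hinter (le_refl r)
        (by simp only [Finset.coe_Icc, Set.mem_Icc]; omega)
        (by simp only [Finset.coe_Icc, Set.mem_Icc]; omega) hml
  have hkey := key_sum (Finset.Icc 0 (n+1)) (Finset.Icc 1 n) w lam hwinj
    ⟨0, by simp⟩ (by simp only [Nat.card_Icc]; omega)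
  rw [if_neg (by simp only [Nat.card_Icc]; omega)] at hkey
  -- split off the m = 0 term
  have hsplit : Finset.Icc 0 (n+1) = insert 0 (Finset.Icc 1 (n+1)) := by
    ext x; simp [Finset.mem_Icc]; omega
  have herase0 : (Finset.Icc 0 (n+1)).erase 0 = Finset.Icc 1 (n+1) := by
    ext x; simp [Finset.mem_Icc]; omega
  rw [hsplit, Finset.sum_insert (by simp)] at hkey
  rw [Finset.erase_insert (by simp)] at hkey
  have hterm0 : (∏ l ∈ Finset.Icc 1 n, (w 0 - lam l)) /
      ∏ l ∈ Finset.Icc 1 (n+1), (w 0 - w l)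
      = (∏ l ∈ Finset.Icc 1 n, (1 - lam l)) /
        ∏ l ∈ Finset.Icc 1 (n+1), (1 - γ l) := by
    have e1 : (∏ l ∈ Finset.Icc 1 n, (w 0 - lam l))
        = ∏ l ∈ Finset.Icc 1 n, (1 - lam l) :=
      Finset.prod_congr rfl fun l _ => by rw [hw0]
    have e2 : (∏ l ∈ Finset.Icc 1 (n+1), (w 0 - w l))
        = ∏ l ∈ Finset.Icc 1 (n+1), (1 - γ l) := by
      refine Finset.prod_congr rfl fun l hl => ?_
      rw [Finset.mem_Icc] at hl
      rw [hw0, hwval l (by omega)]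
    rw [e1, e2]
  have htermm : ∀ m ∈ Finset.Icc 1 (n+1),
      (∏ l ∈ Finset.Icc 1 n, (w m - lam l)) /
        ∏ l ∈ (insert 0 (Finset.Icc 1 (n+1))).erase m, (w m - w l)
      = -((∏ l ∈ Finset.Icc 1 n, (γ m - lam l)) /
          ((1 - γ m) * ∏ l ∈ (Finset.Icc 1 (n+1)).erase m, (γ m - γ l))) := by
    intro m hm
    rw [Finset.mem_Icc] at hm
    have hwm : w m = γ m := hwval m (by omega)
    have hE : (insert 0 (Finset.Icc 1 (n+1))).erase m
        = insert 0 ((Finset.Icc 1 (n+1)).erase m) := by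
      ext x
      simp only [Finset.mem_erase, Finset.mem_insert, Finset.mem_Icc]
      omega
    rw [hE, Finset.prod_insert (by simp [Finset.mem_erase, Finset.mem_Icc])]
    have hwm0 : w m - w 0 = γ m - 1 := by rw [hw0, hwm]
    have hrest : ∏ l ∈ (Finset.Icc 1 (n+1)).erase m, (w m - w l)
        = ∏ l ∈ (Finset.Icc 1 (n+1)).erase m, (γ m - γ l) := by
      refine Finset.prod_congr rfl fun l hl => ?_
      rw [Finset.mem_erase, Finset.mem_Icc] at hl
      rw [hwm, hwval l (by omega)]
    have hnum : ∏ l ∈ Finset.Icc 1 n, (w m - lam l)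
        = ∏ l ∈ Finset.Icc 1 n, (γ m - lam l) := by
      refine Finset.prod_congr rfl fun l hl => by rw [hwm]
    rw [hnum, hwm0, hrest]
    rw [show γ m - 1 = -(1 - γ m) by ring, neg_mul, div_neg]
  rw [Finset.sum_congr rfl htermm, hterm0, Finset.sum_neg_distrib] at hkey
  have hsum : ∑ m ∈ Finset.Icc 1 (n+1),
      (∏ l ∈ Finset.Icc 1 n, (γ m - lam l)) /
        ((1 - γ m) * ∏ l ∈ (Finset.Icc 1 (n+1)).erase m, (γ m - γ l))
      = (∏ l ∈ Finset.Icc 1 n, (1 - lam l)) /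
        ∏ l ∈ Finset.Icc 1 (n+1), (1 - γ l) := by linarith
  have hterm : ∀ m ∈ Finset.Icc 1 (n+1), nuvec γ lam (n+1) m
      = ((1 - γ (n+1)) * ∏ l ∈ Finset.Icc 1 n, rho γ lam l) *
        ((∏ l ∈ Finset.Icc 1 n, (γ m - lam l)) /
          ((1 - γ m) * ∏ l ∈ (Finset.Icc 1 (n+1)).erase m, (γ m - γ l))) := by
    intro m hm
    rw [Finset.mem_Icc] at hm
    rw [term_eq hlam0 hinter n m hm.1 hm.2 h3, mul_assoc]
  rw [Finset.sum_congr rfl hterm, ← Finset.mul_sum, hsum]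
  have hra : ∀ l ∈ Finset.Icc 1 n, rho γ lam l * (1 - lam l) = 1 - γ l := by
    intro l hl
    rw [Finset.mem_Icc] at hl
    exact (rho_pos hlam0 hinter l hl.1 (by omega)).2.2
  have hcomb : (∏ l ∈ Finset.Icc 1 n, rho γ lam l) * ∏ l ∈ Finset.Icc 1 n, (1 - lam l)
      = ∏ l ∈ Finset.Icc 1 n, (1 - γ l) := by
    rw [← Finset.prod_mul_distrib]
    exact Finset.prod_congr rfl hra
  have hprodγ : ∏ l ∈ Finset.Icc 1 (n+1), (1 - γ l)
      = (∏ l ∈ Finset.Icc 1 n, (1 - γ l)) * (1 - γ (n+1)) :=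
    Finset.prod_Icc_succ_top (by omega) _
  have hne : ∏ l ∈ Finset.Icc 1 n, (1 - γ l) ≠ 0 := by
    rw [Finset.prod_ne_zero_iff]
    intro l hl
    rw [Finset.mem_Icc] at hl
    have := (hlt1 hlam0 hinter l hl.1 (by omega)).1
    intro h; linarith [h]
  have hneI : (1:ℝ) - γ (n+1) ≠ 0 :=
    ne_of_gt (by linarith [(hlt1 hlam0 hinter (n+1) (by omega) h3).1])
  rw [hprodγ]
  field_simp
  linear_combination hcomb

end Ord

/-- the "spoke-breaking" theorem: for each `i = 1,…,r`, `ν_i` is a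
probability distribution on `{0,…,r}`, `π*_i = ρ_i π*_{i−1} + (1−ρ_i) ν_i`, and
`ν_i P* = γ_i ν_i + (1−γ_i) π*_{i−1}`. -/
theorem stmt9 (r : ℕ) (hr : 1 ≤ r) (γ lam : ℕ → ℝ)
    (hlam0 : lam 0 = 1)
    (hinter : ∀ i : ℕ, 1 ≤ i → i ≤ r → lam (i - 1) > γ i ∧ γ i > lam i)
    (hlamr : 0 ≤ lam r) :
    ∀ i : ℕ, 1 ≤ i → i ≤ r →
      (∀ j : ℕ, 0 ≤ nuvec γ lam i j) ∧
      (∑ j ∈ Finset.range (r + 1), nuvec γ lam i j = 1) ∧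
      (∀ j : ℕ,
        pistar γ lam i j
          = rho γ lam i * pistar γ lam (i - 1) j + (1 - rho γ lam i) * nuvec γ lam i j) ∧
      ((fun j : Fin (r + 1) => nuvec γ lam i j.val) ᵥ* Pstar r γ lam
        = fun j : Fin (r + 1) =>
            γ i * nuvec γ lam i j.val + (1 - γ i) * pistar γ lam (i - 1) j.val) := by
  intro i h1i hir
  obtain ⟨n, rfl⟩ : ∃ n, i = n + 1 := ⟨i - 1, by omega⟩
  have h3 : n + 1 ≤ r := hir
  have hsub1 : (n + 1) - 1 = n := by omega
  have hγI1 : γ (n+1) < 1 := (hlt1 hlam0 hinter (n+1) (by omega) h3).1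
  have hρI := rho_pos hlam0 hinter (n+1) (by omega) h3
  have hv0 : nuvec γ lam (n+1) 0 = 0 := by rw [nuvec, if_neg (by omega)]
  have hvgt : ∀ j, n + 1 < j → nuvec γ lam (n+1) j = 0 := fun j hj => by
    rw [nuvec, if_neg (by omega)]
  -- Part 1
  have part1 : ∀ j : ℕ, 0 ≤ nuvec γ lam (n+1) j := by
    intro j
    by_cases hj : 1 ≤ j ∧ j ≤ n + 1
    · rw [nuvec_form hlam0 hinter (n+1) j hj.1 hj.2 h3]
      have hpi := pistar_pos hlam0 hinter (n+1) j hj.2 h3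
      have hgl := (gml_pos hinter j (n+1) hj.1 (by omega) (by omega) h3).1 hj.2
      have h1g : (0:ℝ) < 1 - γ (n+1) := by linarith
      exact le_of_lt (div_pos (mul_pos h1g hpi) (mul_pos hρI.1 hgl))
    · rw [nuvec, if_neg hj]
  -- Part 2
  have part2 : ∑ j ∈ Finset.range (r + 1), nuvec γ lam (n+1) j = 1 := by
    rw [← sum2 hlam0 hinter n h3]
    refine (Finset.sum_subset ?_ ?_).symm
    · intro x hx
      rw [Finset.mem_Icc] at hx
      rw [Finset.mem_range]; omega
    · intro x _ hx
      rw [Finset.mem_Icc] at hx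
      rw [nuvec, if_neg (by omega)]
  -- Part 3
  have part3 : ∀ j : ℕ, pistar γ lam (n+1) j
      = rho γ lam (n+1) * pistar γ lam n j + (1 - rho γ lam (n+1)) * nuvec γ lam (n+1) j := by
    intro j
    rcases Nat.eq_zero_or_pos j with hj0 | hj1
    · subst hj0
      rw [hv0, pistar_succ0, mul_zero, add_zero]
    rcases lt_trichotomy j (n+1) with hj | hj | hj
    · -- 1 ≤ j ≤ n
      have hjn : j ≤ n := by omega
      have hgg : γ j - γ (n+1) ≠ 0 :=
        ne_of_gt ((ggl_sign hinter j (n+1) hj1 (by omega) (by omega) h3).1 hj)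
      rw [pistar_succ hlam0 hinter n j hj1 hjn h3, nuvec_eq hlam0 hinter n j hj1 hjn h3]
      have hkI := hkey hlam0 hinter (n+1) (by omega) h3
      field_simp
      linear_combination pistar γ lam n j * hkI
    · subst hj
      rw [pistar_zero n (n+1) (by omega), mul_zero, zero_add,
        nuvec_self hlam0 hinter (n+1) (by omega) h3,
        mul_div_cancel₀ _ (ne_of_gt (by linarith [hρI.2.1] : (0:ℝ) < 1 - rho γ lam (n+1)))]
    · rw [pistar_zero (n+1) j hj, pistar_zero n j (by omega), hvgt j hj, mul_zero, mul_zero,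
        add_zero]
  refine ⟨part1, part2, ?_, ?_⟩
  · simpa [hsub1] using part3
  -- Part 4
  · funext j
    show (fun m : Fin (r+1) => nuvec γ lam (n+1) m.val) ⬝ᵥ (fun m => Pstar r γ lam m j) = _
    rw [dotProduct]
    simp only [hsub1]
    by_cases hj0 : j.val = 0
    · -- column 0
      have hterm : ∀ m : Fin (r+1), nuvec γ lam (n+1) m.val * Pstar r γ lam m j
          = if m.val = 0 then 0 else nuvec γ lam (n+1) m.val * (1 - γ m.val) := by
        intro m
        by_cases hm : m.val = 0
        · rw [if_pos hm]
          have : m = (0 : Fin (r+1)) := by ext; simp [hm]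
          rw [this]
          simp only [Fin.val_zero, hv0]
          exact zero_mul _
        · rw [if_neg hm, Pstar, Matrix.of_apply, if_neg hm]
          have hne : j ≠ m := fun h => hm (by rw [← h]; exact hj0)
          rw [if_neg hne, if_pos hj0]
      rw [Finset.sum_congr rfl fun m _ => hterm m]
      rw [Fin.sum_univ_eq_sum_range (fun m => if m = 0 then 0 else nuvec γ lam (n+1) m * (1 - γ m))]
      have hsubI : Finset.Icc 1 (n+1) ⊆ Finset.range (r+1) := fun x hx => by
        rw [Finset.mem_Icc] at hx; rw [Finset.mem_range]; omega
      have hzero : ∀ x ∈ Finset.range (r+1), x ∉ Finset.Icc 1 (n+1) →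
          (if x = 0 then 0 else nuvec γ lam (n+1) x * (1 - γ x)) = 0 := by
        intro x _ hx
        rw [Finset.mem_Icc] at hx
        by_cases h0 : x = 0
        · rw [if_pos h0]
        · rw [if_neg h0, hvgt x (by omega), zero_mul]
      have hstep : ∑ m ∈ Finset.range (r+1),
          (if m = 0 then 0 else nuvec γ lam (n+1) m * (1 - γ m))
          = ∑ m ∈ Finset.Icc 1 (n+1), (1 - γ m) * nuvec γ lam (n+1) m := by
        rw [← Finset.sum_subset hsubI hzero]
        exact Finset.sum_congr rfl fun m hm => by
          rw [Finset.mem_Icc] at hm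
          rw [if_neg (by omega), mul_comm]
      rw [hstep, sum1 hlam0 hinter n h3, hj0, hv0]
      rw [pistar, if_pos rfl]
      ring
    · -- column j ≥ 1
      have hterm : ∀ m : Fin (r+1), m ≠ j → nuvec γ lam (n+1) m.val * Pstar r γ lam m j = 0 := by
        intro m hm
        by_cases h0 : m.val = 0
        · have : m = (0 : Fin (r+1)) := by ext; simp [h0]
          rw [this]
          simp only [Fin.val_zero, hv0]
          exact zero_mul _
        · rw [Pstar, Matrix.of_apply, if_neg h0, if_neg (Ne.symm hm), if_neg hj0, mul_zero]
      rw [Finset.sum_eq_single j (fun m _ hm => hterm m hm) (fun h => absurd (Finset.mem_univ j) h)]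
      rw [Pstar, Matrix.of_apply, if_neg (by omega : ¬ (j.val = 0)), if_pos rfl]
      have hj1 : 1 ≤ j.val := by omega
      rcases lt_trichotomy j.val (n+1) with hj | hj | hj
      · have hjn : j.val ≤ n := by omega
        rw [nuvec_eq hlam0 hinter n j.val hj1 hjn h3]
        have hgg : γ j.val - γ (n+1) ≠ 0 :=
          ne_of_gt ((ggl_sign hinter j.val (n+1) hj1 (by omega) (by omega) h3).1 hj)
        field_simp
        ring
      · rw [hj, pistar_zero n (n+1) (by omega)]
        ring
      · rw [hvgt j.val hj, pistar_zero n j.val (by omega)]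
        ring
end

section
/- For the Markov chain on {0,1,…,r} with initial distribution π̂ and transition matrix P̂, state 0 is absorbing and the hitting time of state 0 has the same distribution as Σ_{i=1}^r Y_i; equivalently, for every integer t ≥ 0, (π̂ P̂^t)(0) = P(Σ_{i=1}^r Y_i ≤ t). -/
open Matrix MeasureTheory ProbabilityTheory

/-- The row vector `π̂_k ∈ ℝ^{r+1}`: `π̂_k(0) = ∏_{i=1}^k ρ_i`,
`π̂_k(j) = ρ_k⋯ρ_{j+1}(1−ρ_j)` for `1 ≤ j < k`, `π̂_k(k) = 1−ρ_k` (for `k ≥ 1`),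
and `π̂_k(j) = 0` for `j > k`; `π̂_0 = δ_0`. -/
noncomputable def pihat (γ lam : ℕ → ℝ) (k j : ℕ) : ℝ :=
  if j = 0 then ∏ i ∈ Finset.Icc 1 k, rho γ lam i
  else if j < k then (∏ i ∈ Finset.Icc (j + 1) k, rho γ lam i) * (1 - rho γ lam j)
  else if j = k then 1 - rho γ lam k
  else 0

/-- The dual transition matrix `P̂`: `P̂(0,0) = 1`, and for `i = 1,…,r`: `P̂(i,i) = γ_i`,
`P̂(i,j) = (1−γ_i) π̂_{i−1}(j)` for `0 ≤ j < i`, and `P̂(i,j) = 0` for `j > i`. -/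
noncomputable def PhatM (r : ℕ) (γ lam : ℕ → ℝ) : Matrix (Fin (r + 1)) (Fin (r + 1)) ℝ :=
  Matrix.of fun i j =>
    if i.val = 0 then (if j.val = 0 then 1 else 0)
    else if j = i then γ i.val
    else if j.val < i.val then (1 - γ i.val) * pihat γ lam (i.val - 1) j.val
    else 0

lemma pihat_of_gt (γ lam : ℕ → ℝ) (k j : ℕ) (h : k < j) (h0 : j ≠ 0) :
    pihat γ lam k j = 0 := by
  unfold pihat; rw [if_neg h0, if_neg (by omega), if_neg (by omega)]

lemma pihat_zero (γ lam : ℕ → ℝ) (j : ℕ) : pihat γ lam 0 j = if j = 0 then 1 else 0 := by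
  unfold pihat
  by_cases h : j = 0
  · subst h; simp
  · simp [h]

lemma pihat_succ (γ lam : ℕ → ℝ) (k j : ℕ) :
    pihat γ lam (k + 1) j
      = rho γ lam (k + 1) * pihat γ lam k j
        + (1 - rho γ lam (k + 1)) * (if j = k + 1 then 1 else 0) := by
  unfold pihat
  rcases Nat.eq_zero_or_pos j with hj0 | hj0
  · subst hj0
    have hne : (0:ℕ) ≠ k + 1 := by omega
    rw [if_pos rfl, if_pos rfl, if_neg hne, Finset.prod_Icc_succ_top (by omega)]
    ring
  · have hj0' : j ≠ 0 := by omega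
    rw [if_neg hj0', if_neg hj0']
    by_cases h1 : j < k + 1
    · rw [if_pos h1, if_neg (show j ≠ k + 1 by omega)]
      by_cases h2 : j < k
      · rw [if_pos h2, Finset.prod_Icc_succ_top (by omega)]
        ring
      · have hjk : j = k := by omega
        subst hjk
        rw [if_neg (lt_irrefl j), if_pos rfl, Finset.Icc_self, Finset.prod_singleton]
        ring
    · rw [if_neg h1]
      by_cases h3 : j = k + 1
      · rw [if_pos h3, if_neg (show ¬ j < k by omega), if_neg (show j ≠ k by omega),
          if_pos h3]
        ring
      · rw [if_neg h3, if_neg (show ¬ j < k by omega), if_neg (show j ≠ k by omega),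
          if_neg h3]
        ring

lemma Phat_row (r : ℕ) (γ lam : ℕ → ℝ) (k : ℕ) (hk1 : 1 ≤ k) (hkr : k ≤ r) (j : Fin (r + 1)) :
    PhatM r γ lam ⟨k, by omega⟩ j
      = γ k * (if (j : ℕ) = k then 1 else 0) + (1 - γ k) * pihat γ lam (k - 1) (j : ℕ) := by
  unfold PhatM
  simp only [Matrix.of_apply]
  rw [if_neg (show ¬ (k = 0) by omega)]
  by_cases hj : (j : ℕ) = k
  · rw [if_pos (Fin.ext hj : j = ⟨k, by omega⟩), if_pos hj, hj,
      pihat_of_gt _ _ _ _ (by omega) (by omega)]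
    ring
  · rw [if_neg (fun h => hj (by rw [h])), if_neg hj]
    by_cases hlt : (j : ℕ) < k
    · rw [if_pos hlt]; ring
    · rw [if_neg hlt, pihat_of_gt _ _ _ _ (by omega) (by omega)]; ring

lemma dvec_vecMul {r : ℕ} (M : Matrix (Fin (r + 1)) (Fin (r + 1)) ℝ) (k : ℕ) (hk : k ≤ r) :
    (fun i : Fin (r + 1) => if (i : ℕ) = k then (1 : ℝ) else 0) ᵥ* M = M ⟨k, by omega⟩ := by
  funext j
  simp only [Matrix.vecMul, dotProduct]
  rw [Finset.sum_eq_single (⟨k, by omega⟩ : Fin (r + 1))]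
  · simp
  · intro i _ hne
    have : (i : ℕ) ≠ k := fun h => hne (Fin.ext h)
    simp [this]
  · intro h; exact absurd (Finset.mem_univ _) h

lemma vecMul_lin {n : ℕ} (M : Matrix (Fin n) (Fin n) ℝ) (u w : Fin n → ℝ) (a b : ℝ) :
    (fun i => a * u i + b * w i) ᵥ* M = fun j => a * (u ᵥ* M) j + b * (w ᵥ* M) j := by
  funext j
  simp only [Matrix.vecMul, dotProduct, add_mul, mul_assoc, Finset.sum_add_distrib,
    Finset.mul_sum]

lemma Phat_row0 (r : ℕ) (γ lam : ℕ → ℝ) (j : Fin (r + 1)) :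
    PhatM r γ lam 0 j = if (j : ℕ) = 0 then 1 else 0 := by
  unfold PhatM
  rw [Matrix.of_apply, if_pos (show ((0 : Fin (r + 1)) : ℕ) = 0 from rfl)]

noncomputable def Fcdf {Ω : Type*} [MeasureSpace Ω] (Y : ℕ → Ω → ℕ) (k t : ℕ) : ℝ :=
  (ℙ {ω | ∑ i ∈ Finset.Icc 1 k, Y i ω ≤ t}).toReal

lemma vecMul_comb {n : ℕ} (M : Matrix (Fin n) (Fin n) ℝ) (u w v : Fin n → ℝ) (a b : ℝ)
    (h : ∀ i, v i = a * u i + b * w i) (j : Fin n) :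
    (v ᵥ* M) j = a * (u ᵥ* M) j + b * (w ᵥ* M) j := by
  simp only [Matrix.vecMul, dotProduct, h, add_mul, mul_assoc, Finset.sum_add_distrib,
    Finset.mul_sum]

lemma conv_count {Ω : Type*} [MeasureSpace Ω] [IsProbabilityMeasure (ℙ : Measure Ω)]
    (X Z : Ω → ℕ) (hX : Measurable X) (hZ : Measurable Z)
    (hind : IndepFun X Z ℙ) (t : ℕ) :
    (ℙ {ω | X ω + Z ω ≤ t}).toReal
      = ∑ u ∈ Finset.range (t + 1),
          (ℙ {ω | Z ω = u}).toReal * (ℙ {ω | X ω ≤ t - u}).toReal := by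
  have hset : {ω | X ω + Z ω ≤ t}
      = ⋃ u ∈ Finset.range (t + 1), (Z ⁻¹' {u} ∩ X ⁻¹' Set.Iic (t - u)) := by
    ext ω
    simp only [Set.mem_setOf_eq, Set.mem_iUnion, Set.mem_inter_iff, Finset.mem_range,
      Set.mem_preimage, Set.mem_singleton_iff, Set.mem_Iic]
    constructor
    · intro h; exact ⟨Z ω, by omega, rfl, by omega⟩
    · rintro ⟨u, hu, rfl, hx⟩; omega
  have hmeas : ∀ u ∈ Finset.range (t + 1),
      MeasurableSet (Z ⁻¹' {u} ∩ X ⁻¹' Set.Iic (t - u)) := fun u _ =>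
    (hZ (measurableSet_singleton u)).inter (hX measurableSet_Iic)
  have hdisj : (Finset.range (t + 1) : Set ℕ).PairwiseDisjoint
      (fun u => Z ⁻¹' {u} ∩ X ⁻¹' Set.Iic (t - u)) := by
    intro u _ v _ huv
    refine Set.disjoint_left.2 ?_
    rintro ω ⟨h1, _⟩ ⟨h2, _⟩
    exact huv (h1.symm.trans h2)
  rw [hset, measure_biUnion_finset hdisj hmeas]
  rw [ENNReal.toReal_sum (fun u _ => measure_ne_top _ _)]
  refine Finset.sum_congr rfl fun u _ => ?_
  have := hind.symm.measure_inter_preimage_eq_mul (μ := ℙ) {u} (Set.Iic (t - u))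
    (measurableSet_singleton u) measurableSet_Iic
  rw [this, ENNReal.toReal_mul]
  rfl


section ThmAux
variable {Ω : Type*} [MeasureSpace Ω] [IsProbabilityMeasure (ℙ : Measure Ω)]

variable {Ω : Type*} [MeasureSpace Ω] [IsProbabilityMeasure (ℙ : Measure Ω)]

lemma Fcdf_zero (Y : ℕ → Ω → ℕ) (t : ℕ) : Fcdf Y 0 t = 1 := by
  unfold Fcdf
  have h : {ω : Ω | ∑ i ∈ Finset.Icc 1 0, Y i ω ≤ t} = Set.univ := by
    ext ω
    simp [Finset.Icc_eq_empty (show ¬ (1:ℕ) ≤ 0 by omega)]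
  rw [h, measure_univ, ENNReal.toReal_one]

lemma Fcdf_conv (r : ℕ) (γ lam : ℕ → ℝ)
    (Y : ℕ → Ω → ℕ) (hY_meas : ∀ i, Measurable (Y i))
    (hY_indep : iIndepFun Y ℙ)
    (hY_zero : ∀ i : ℕ, 1 ≤ i → i ≤ r → (ℙ {ω | Y i ω = 0}).toReal = rho γ lam i)
    (hY_pos : ∀ i : ℕ, 1 ≤ i → i ≤ r → ∀ k : ℕ, 1 ≤ k →
      (ℙ {ω | Y i ω = k}).toReal = (1 - rho γ lam i) * (1 - γ i) * γ i ^ (k - 1))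
    (k : ℕ) (hk : k + 1 ≤ r) (t : ℕ) :
    Fcdf Y (k + 1) t = rho γ lam (k + 1) * Fcdf Y k t
      + ∑ v ∈ Finset.range t,
          (1 - rho γ lam (k + 1)) * (1 - γ (k + 1)) * γ (k + 1) ^ v * Fcdf Y k (t - (v + 1)) := by
  have hXm : Measurable (fun ω => ∑ i ∈ Finset.Icc 1 k, Y i ω) :=
    Finset.measurable_sum _ (fun i _ => hY_meas i)
  have hind : IndepFun (fun ω => ∑ i ∈ Finset.Icc 1 k, Y i ω) (Y (k + 1)) ℙ := by
    have h := hY_indep.indepFun_finsetSum_of_notMem hY_meas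
        (show (k + 1) ∉ Finset.Icc 1 k by simp)
    have heq : (∑ j ∈ Finset.Icc 1 k, Y j) = fun ω => ∑ i ∈ Finset.Icc 1 k, Y i ω := by
      funext ω; simp
    rwa [heq] at h
  have hset : {ω : Ω | ∑ i ∈ Finset.Icc 1 (k + 1), Y i ω ≤ t}
      = {ω | (∑ i ∈ Finset.Icc 1 k, Y i ω) + Y (k + 1) ω ≤ t} := by
    ext ω
    rw [Set.mem_setOf_eq, Set.mem_setOf_eq, Finset.sum_Icc_succ_top (by omega)]
  have h1 : Fcdf Y (k + 1) t
      = ∑ u ∈ Finset.range (t + 1), (ℙ {ω | Y (k + 1) ω = u}).toReal * Fcdf Y k (t - u) := by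
    unfold Fcdf
    rw [hset, conv_count _ _ hXm (hY_meas _) hind]
  rw [h1, Finset.sum_range_succ', hY_zero (k + 1) (by omega) hk]
  have h2 : ∀ v ∈ Finset.range t,
      (ℙ {ω | Y (k + 1) ω = v + 1}).toReal * Fcdf Y k (t - (v + 1))
        = (1 - rho γ lam (k + 1)) * (1 - γ (k + 1)) * γ (k + 1) ^ v * Fcdf Y k (t - (v + 1)) := by
    intro v _
    rw [hY_pos (k + 1) (by omega) hk (v + 1) (by omega)]
    simp
  rw [Finset.sum_congr rfl h2, Nat.sub_zero]
  ring

lemma Fcdf_step (r : ℕ) (γ lam : ℕ → ℝ)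
    (Y : ℕ → Ω → ℕ) (hY_meas : ∀ i, Measurable (Y i))
    (hY_indep : iIndepFun Y ℙ)
    (hY_zero : ∀ i : ℕ, 1 ≤ i → i ≤ r → (ℙ {ω | Y i ω = 0}).toReal = rho γ lam i)
    (hY_pos : ∀ i : ℕ, 1 ≤ i → i ≤ r → ∀ k : ℕ, 1 ≤ k →
      (ℙ {ω | Y i ω = k}).toReal = (1 - rho γ lam i) * (1 - γ i) * γ i ^ (k - 1))
    (k : ℕ) (hk : k + 1 ≤ r) (t : ℕ) :
    Fcdf Y (k + 1) (t + 1) - rho γ lam (k + 1) * Fcdf Y k (t + 1)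
      = γ (k + 1) * (Fcdf Y (k + 1) t - rho γ lam (k + 1) * Fcdf Y k t)
        + (1 - rho γ lam (k + 1)) * (1 - γ (k + 1)) * Fcdf Y k t := by
  rw [Fcdf_conv r γ lam Y hY_meas hY_indep hY_zero hY_pos k hk (t + 1),
    Fcdf_conv r γ lam Y hY_meas hY_indep hY_zero hY_pos k hk t]
  have h3 : ∑ v ∈ Finset.range (t + 1),
        (1 - rho γ lam (k + 1)) * (1 - γ (k + 1)) * γ (k + 1) ^ v * Fcdf Y k (t + 1 - (v + 1))
      = γ (k + 1) * ∑ v ∈ Finset.range t,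
          (1 - rho γ lam (k + 1)) * (1 - γ (k + 1)) * γ (k + 1) ^ v * Fcdf Y k (t - (v + 1))
        + (1 - rho γ lam (k + 1)) * (1 - γ (k + 1)) * Fcdf Y k t := by
    rw [Finset.sum_range_succ', Finset.mul_sum]
    congr 1
    · apply Finset.sum_congr rfl
      intro v _
      have hv : t + 1 - (v + 1 + 1) = t - (v + 1) := by omega
      rw [hv, pow_succ]
      ring
    · have hv : t + 1 - (0 + 1) = t := by omega
      rw [hv, pow_zero]
      ring
  rw [h3]
  ring

end ThmAux

/-- for the Markov chain on `{0,1,…,r}` with initial distribution `π̂` and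
transition matrix `P̂`, state `0` is absorbing and the hitting time of `0` is distributed
as `Σ_{i=1}^r Y_i`, where the `Y_i` are independent with the modified Geometric
distributions `ρ_i δ_0 + (1−ρ_i) Geometric(1−γ_i)`. -/
theorem stmt10 (r : ℕ) (hr : 1 ≤ r) (γ lam : ℕ → ℝ)
    (hlam0 : lam 0 = 1)
    (hinter : ∀ i : ℕ, 1 ≤ i → i ≤ r → lam (i - 1) > γ i ∧ γ i > lam i)
    (hlamr : 0 ≤ lam r)
    {Ω : Type*} [MeasureSpace Ω] [IsProbabilityMeasure (ℙ : Measure Ω)]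
    (Y : ℕ → Ω → ℕ) (hY_meas : ∀ i, Measurable (Y i))
    (hY_indep : iIndepFun Y ℙ)
    (hY_zero : ∀ i : ℕ, 1 ≤ i → i ≤ r → (ℙ {ω | Y i ω = 0}).toReal = rho γ lam i)
    (hY_pos : ∀ i : ℕ, 1 ≤ i → i ≤ r → ∀ k : ℕ, 1 ≤ k →
      (ℙ {ω | Y i ω = k}).toReal = (1 - rho γ lam i) * (1 - γ i) * γ i ^ (k - 1)) :
    (∀ j : Fin (r + 1), PhatM r γ lam 0 j = if j = 0 then 1 else 0) ∧
    ∀ t : ℕ,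
      (((fun i : Fin (r + 1) => pihat γ lam r i.val) ᵥ* PhatM r γ lam ^ t) 0)
        = (ℙ {ω | ∑ i ∈ Finset.Icc 1 r, Y i ω ≤ t}).toReal := by
  constructor
  · intro j
    rw [Phat_row0]
    by_cases h : (j : ℕ) = 0
    · rw [if_pos h, if_pos (Fin.ext h)]
    · rw [if_neg h, if_neg (fun e => h (by rw [e]; rfl))]
  · -- absorbing-row powers
    have habs : ∀ t : ℕ,
        ((fun i : Fin (r + 1) => if (i : ℕ) = 0 then (1:ℝ) else 0) ᵥ* PhatM r γ lam ^ t)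
          = fun i : Fin (r + 1) => if (i : ℕ) = 0 then (1:ℝ) else 0 := by
      intro t
      induction t with
      | zero => rw [pow_zero, Matrix.vecMul_one]
      | succ t ih =>
        rw [pow_succ', ← Matrix.vecMul_vecMul]
        have h0 : ((fun i : Fin (r + 1) => if (i : ℕ) = 0 then (1:ℝ) else 0) ᵥ* PhatM r γ lam)
            = fun i : Fin (r + 1) => if (i : ℕ) = 0 then (1:ℝ) else 0 := by
          rw [dvec_vecMul _ 0 (by omega)]
          funext j
          exact Phat_row0 r γ lam j
        rw [h0, ih]
    -- row lemma packaged
    have hdvP : ∀ k : ℕ, 1 ≤ k → k ≤ r → ∀ j : Fin (r + 1),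
        ((fun i : Fin (r + 1) => if (i : ℕ) = k then (1:ℝ) else 0) ᵥ* PhatM r γ lam) j
          = γ k * (if (j : ℕ) = k then 1 else 0) + (1 - γ k) * pihat γ lam (k - 1) (j : ℕ) := by
      intro k hk1 hkr j
      rw [dvec_vecMul _ k hkr]
      exact Phat_row r γ lam k hk1 hkr j
    have main : ∀ k : ℕ, k ≤ r → ∀ t : ℕ,
        ((fun i : Fin (r + 1) => pihat γ lam k (i : ℕ)) ᵥ* PhatM r γ lam ^ t) 0
          = Fcdf Y k t := by
      intro k
      induction k with
      | zero =>
        intro _ t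
        have hpv0 : (fun i : Fin (r + 1) => pihat γ lam 0 (i : ℕ))
            = fun i : Fin (r + 1) => if (i : ℕ) = 0 then (1:ℝ) else 0 := by
          funext i; exact pihat_zero γ lam _
        rw [hpv0, habs t, Fcdf_zero Y t]
        norm_num
      | succ k ih =>
        intro hk t
        have ihk := ih (by omega)
        have hd : ∀ t : ℕ,
            (1 - rho γ lam (k + 1)) *
              (((fun i : Fin (r + 1) => if (i : ℕ) = k + 1 then (1:ℝ) else 0)
                  ᵥ* PhatM r γ lam ^ t) 0)
              = Fcdf Y (k + 1) t - rho γ lam (k + 1) * Fcdf Y k t := by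
          intro t
          induction t with
          | zero =>
            rw [pow_zero, Matrix.vecMul_one,
              Fcdf_conv r γ lam Y hY_meas hY_indep hY_zero hY_pos k hk 0]
            simp
          | succ t iht =>
            rw [pow_succ', ← Matrix.vecMul_vecMul]
            have hcomb := vecMul_comb (PhatM r γ lam ^ t)
              (fun i : Fin (r + 1) => if (i : ℕ) = k + 1 then (1:ℝ) else 0)
              (fun i : Fin (r + 1) => pihat γ lam k (i : ℕ))
              ((fun i : Fin (r + 1) => if (i : ℕ) = k + 1 then (1:ℝ) else 0) ᵥ* PhatM r γ lam)
              (γ (k + 1)) (1 - γ (k + 1))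
              (fun j => by rw [hdvP (k + 1) (by omega) hk j, Nat.add_sub_cancel]) 0
            rw [hcomb, ihk t,
              Fcdf_step r γ lam Y hY_meas hY_indep hY_zero hY_pos k hk t]
            linear_combination γ (k + 1) * iht
        have hcomb2 := vecMul_comb (PhatM r γ lam ^ t)
          (fun i : Fin (r + 1) => pihat γ lam k (i : ℕ))
          (fun i : Fin (r + 1) => if (i : ℕ) = k + 1 then (1:ℝ) else 0)
          (fun i : Fin (r + 1) => pihat γ lam (k + 1) (i : ℕ))
          (rho γ lam (k + 1)) (1 - rho γ lam (k + 1))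
          (fun i => pihat_succ γ lam k (i : ℕ)) 0
        rw [hcomb2, ihk t]
        linarith [hd t]
    intro t
    exact main r le_rfl t
end
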